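/- arXiv:1102.5136 — 5 statements merged into one kernel-verified Lean document; each statement's English description precedes it below -/
import Mathlib

section
/- Let m ≥ 2 and let A = (A(i,j))_{i,j=0}^{m-1} be a primitive 0-1 matrix, and let q ≥ 2 be an integer. Then there exists a unique vector (t_0, …, t_{m-1}) of real numbers satisfying t_i > 1 and t_i^q = Σ_{j=0}^{m-1} A(i,j) t_j for every i = 0, …, m-1. -/
open scoped Classical ENNReal
open Filter MeasureTheory Topology

noncomputable section

section auxstmt0

variable {m : ℕ} (A : Matrix (Fin m) (Fin m) ℝ)

/-- Entries of powers of a 0-1 matrix are nonnegative, and positive entries are `≥ 1`. -/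
lemma stmt0_pow_entries (hA01 : ∀ i j, A i j = 0 ∨ A i j = 1) :
    ∀ n (i j : Fin m), 0 ≤ (A ^ n) i j ∧ ((A ^ n) i j = 0 ∨ 1 ≤ (A ^ n) i j) := by
  intro n
  induction n with
  | zero =>
    intro i j
    rw [pow_zero]
    by_cases h : i = j <;> simp [Matrix.one_apply, h]
  | succ n ih =>
    intro i j
    rw [pow_succ, Matrix.mul_apply]
    have hterm : ∀ k : Fin m, 0 ≤ (A ^ n) i k * A k j := by
      intro k
      apply mul_nonneg (ih i k).1
      rcases hA01 k j with h | h <;> simp [h]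
    constructor
    · exact Finset.sum_nonneg fun k _ => hterm k
    · by_cases hall : ∀ k : Fin m, (A ^ n) i k * A k j = 0
      · left; exact Finset.sum_eq_zero fun k _ => hall k
      · right
        push_neg at hall
        obtain ⟨k, hk⟩ := hall
        have h1 : 1 ≤ (A ^ n) i k * A k j := by
          rcases (ih i k).2 with h | h
          · simp [h] at hk
          · rcases hA01 k j with h' | h'
            · simp [h'] at hk
            · simpa [h'] using h
        calc (1 : ℝ) ≤ (A ^ n) i k * A k j := h1
          _ ≤ ∑ k, (A ^ n) i k * A k j :=
            Finset.single_le_sum (fun k _ => hterm k) (Finset.mem_univ k)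

/-- Every row of a primitive matrix has a `1` entry. -/
lemma stmt0_row (hm : 2 ≤ m) (hA01 : ∀ i j, A i j = 0 ∨ A i j = 1)
    (hAprim : ∃ n : ℕ, ∀ i j, 0 < (A ^ n) i j) :
    ∀ i : Fin m, ∃ j, A i j = 1 := by
  obtain ⟨n, hn⟩ := hAprim
  intro i
  cases n with
  | zero =>
    exfalso
    have h2 : (⟨0, by omega⟩ : Fin m) ≠ ⟨1, by omega⟩ := by
      intro h; simpa using congrArg Fin.val h
    have := hn ⟨0, by omega⟩ ⟨1, by omega⟩
    rw [pow_zero, Matrix.one_apply_ne h2] at this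
    exact lt_irrefl _ this
  | succ n =>
    have := hn i i
    rw [pow_succ', Matrix.mul_apply] at this
    by_contra hall
    push_neg at hall
    have hzero : ∀ k : Fin m, A i k * (A ^ n) k i = 0 := by
      intro k
      rcases hA01 i k with h | h
      · simp [h]
      · exact absurd h (hall k)
    rw [Finset.sum_eq_zero fun k _ => hzero k] at this
    exact lt_irrefl _ this

/-- Any solution with `t ≥ 1` componentwise actually has `t > 1` componentwise. -/
lemma stmt0_strict (hm : 2 ≤ m) (q : ℕ) (hq : 2 ≤ q)
    (hA01 : ∀ i j, A i j = 0 ∨ A i j = 1)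
    (hAprim : ∃ n : ℕ, ∀ i j, 0 < (A ^ n) i j)
    (t : Fin m → ℝ) (ht1 : ∀ i, 1 ≤ t i)
    (heq : ∀ i, t i ^ q = ∑ j, A i j * t j) :
    ∀ i, 1 < t i := by
  have hrow := stmt0_row A hm hA01 hAprim
  have hent := stmt0_pow_entries A hA01
  -- key: if t i = 1, there is a unique j0 with A i j0 = 1, and t j0 = 1
  have hkey : ∀ i : Fin m, t i = 1 →
      ∃ j0 : Fin m, t j0 = 1 ∧ A i j0 = 1 ∧ ∀ k, k ≠ j0 → A i k = 0 := by
    intro i hi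
    obtain ⟨j0, hj0⟩ := hrow i
    have hsum : ∑ j, A i j * t j = 1 := by
      rw [← heq i, hi, one_pow]
    have hterm : ∀ k : Fin m, 0 ≤ A i k * t k := by
      intro k
      apply mul_nonneg _ (le_trans zero_le_one (ht1 k))
      rcases hA01 i k with h | h <;> simp [h]
    have hsplit : A i j0 * t j0 + ∑ k ∈ Finset.univ.erase j0, A i k * t k = 1 := by
      rw [← hsum]
      exact Finset.add_sum_erase Finset.univ (fun k => A i k * t k) (Finset.mem_univ j0)
    have hrest0 : ∑ k ∈ Finset.univ.erase j0, A i k * t k = 0 := by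
      have h1 : 1 ≤ A i j0 * t j0 := by rw [hj0, one_mul]; exact ht1 j0
      have h2 : 0 ≤ ∑ k ∈ Finset.univ.erase j0, A i k * t k :=
        Finset.sum_nonneg fun k _ => hterm k
      linarith
    have htj0 : t j0 = 1 := by
      have : A i j0 * t j0 = 1 := by linarith [hsplit, hrest0]
      rw [hj0, one_mul] at this; exact this
    refine ⟨j0, htj0, hj0, fun k hk => ?_⟩
    have := (Finset.sum_eq_zero_iff_of_nonneg (fun k _ => hterm k)).mp hrest0 k
      (Finset.mem_erase.mpr ⟨hk, Finset.mem_univ k⟩)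
    rcases hA01 i k with h | h
    · exact h
    · rw [h, one_mul] at this
      exact absurd (this ▸ ht1 k) (by norm_num)
  -- induction: if t i = 1 then ∑ j, (A^n) i j * t j = 1 for all n
  have hind : ∀ n, ∀ i : Fin m, t i = 1 → ∑ j, (A ^ n) i j * t j = 1 := by
    intro n
    induction n with
    | zero =>
      intro i hi
      simp only [pow_zero, Matrix.one_apply]
      rw [Finset.sum_eq_single i (fun j _ hj => by simp [Ne.symm hj])
        (fun h => absurd (Finset.mem_univ i) h)]
      simp [hi]
    | succ n ih =>
      intro i hi
      obtain ⟨j0, htj0, hj0, hother⟩ := hkey i hi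
      rw [pow_succ', ]
      have : ∀ j, (A * A ^ n) i j = A i j0 * (A ^ n) j0 j := by
        intro j
        rw [Matrix.mul_apply]
        apply Finset.sum_eq_single j0
        · intro k _ hk; rw [hother k hk, zero_mul]
        · intro h; exact absurd (Finset.mem_univ j0) h
      simp only [this, hj0, one_mul]
      exact ih j0 htj0
  -- conclude
  intro i
  rcases lt_or_ge 1 (t i) with h | h
  · exact h
  · exfalso
    have hi : t i = 1 := le_antisymm h (ht1 i)
    obtain ⟨n, hn⟩ := hAprim
    have hsum1 := hind n i hi
    -- but the sum is ≥ 2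
    have hge : ∀ j : Fin m, (1 : ℝ) ≤ (A ^ n) i j * t j := by
      intro j
      have h1 : 1 ≤ (A ^ n) i j := by
        rcases (hent n i j).2 with h' | h'
        · exact absurd (h' ▸ hn i j) (by norm_num)
        · exact h'
      calc (1:ℝ) = 1 * 1 := by ring
        _ ≤ (A ^ n) i j * t j := mul_le_mul h1 (ht1 j) zero_le_one (by linarith)
    have hj1 : (⟨0, by omega⟩ : Fin m) ≠ ⟨1, by omega⟩ := by
      intro h; simpa using congrArg Fin.val h
    have hsub : ({⟨0, by omega⟩, ⟨1, by omega⟩} : Finset (Fin m)) ⊆ Finset.univ :=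
      Finset.subset_univ _
    have h2le : (2:ℝ) ≤ ∑ j, (A ^ n) i j * t j := by
      calc (2:ℝ) = 1 + 1 := by ring
        _ ≤ (A ^ n) i ⟨0, by omega⟩ * t ⟨0, by omega⟩
            + (A ^ n) i ⟨1, by omega⟩ * t ⟨1, by omega⟩ := add_le_add (hge _) (hge _)
        _ = ∑ j ∈ ({⟨0, by omega⟩, ⟨1, by omega⟩} : Finset (Fin m)),
            (A ^ n) i j * t j := by rw [Finset.sum_pair hj1]
        _ ≤ ∑ j, (A ^ n) i j * t j := Finset.sum_le_sum_of_subset_of_nonneg hsub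
            (fun j _ _ => le_trans zero_le_one (hge j))
    rw [hsum1] at h2le
    norm_num at h2le

end auxstmt0

/-- **Lemma 1.2.** For a primitive 0-1 matrix `A` and an integer `q ≥ 2` there is a unique
vector `(t_i)` with `t_i > 1` and `t_i^q = Σ_j A(i,j) t_j` for all `i`. -/
theorem stmt0 (m q : ℕ) (hm : 2 ≤ m) (hq : 2 ≤ q)
    (A : Matrix (Fin m) (Fin m) ℝ)
    (hA01 : ∀ i j, A i j = 0 ∨ A i j = 1)
    (hAprim : ∃ n : ℕ, ∀ i j, 0 < (A ^ n) i j) :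
    ∃! t : Fin m → ℝ, (∀ i, 1 < t i) ∧ ∀ i, t i ^ q = ∑ j, A i j * t j := by
  have hm1 : (1:ℝ) ≤ (m:ℝ) := by
    have : (1:ℕ) ≤ m := by omega
    exact_mod_cast this
  haveI : Fact ((1:ℝ) ≤ (m:ℝ)) := ⟨hm1⟩
  have hA0 : ∀ i j, 0 ≤ A i j := by
    intro i j; rcases hA01 i j with h | h <;> simp [h]
  have hA1 : ∀ i j, A i j ≤ 1 := by
    intro i j; rcases hA01 i j with h | h <;> simp [h]
  have hrow := stmt0_row A hm hA01 hAprim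
  have hq0 : (0:ℝ) < (q:ℝ) := by positivity
  have hqne : (q:ℝ) ≠ 0 := ne_of_gt hq0
  -- the monotone map on the complete lattice (Fin m → Icc 1 m)
  set α := Fin m → Set.Icc (1:ℝ) (m:ℝ) with hα
  have hSmem : ∀ (t : α) (i : Fin m),
      ((∑ j, A i j * (t j : ℝ)) ^ ((q:ℝ)⁻¹) : ℝ) ∈ Set.Icc (1:ℝ) (m:ℝ) := by
    intro t i
    have ht1 : ∀ j, (1:ℝ) ≤ (t j : ℝ) := fun j => (t j).2.1
    have htm : ∀ j, ((t j : ℝ)) ≤ m := fun j => (t j).2.2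
    have hterm : ∀ j : Fin m, 0 ≤ A i j * (t j : ℝ) := fun j =>
      mul_nonneg (hA0 i j) (le_trans zero_le_one (ht1 j))
    obtain ⟨j0, hj0⟩ := hrow i
    have hS1 : (1:ℝ) ≤ ∑ j, A i j * (t j : ℝ) := by
      calc (1:ℝ) ≤ A i j0 * (t j0 : ℝ) := by rw [hj0, one_mul]; exact ht1 j0
        _ ≤ _ := Finset.single_le_sum (fun j _ => hterm j) (Finset.mem_univ j0)
    have hS0 : (0:ℝ) ≤ ∑ j, A i j * (t j : ℝ) := le_trans zero_le_one hS1
    have hSm : (∑ j, A i j * (t j : ℝ)) ≤ (m:ℝ) * m := by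
      calc (∑ j, A i j * (t j : ℝ)) ≤ ∑ _j : Fin m, (1:ℝ) * m :=
          Finset.sum_le_sum fun j _ => mul_le_mul (hA1 i j) (htm j)
            (le_trans zero_le_one (ht1 j)) zero_le_one
        _ = (m:ℝ) * m := by simp [Finset.sum_const, Finset.card_univ]
    constructor
    · calc (1:ℝ) = (1:ℝ) ^ ((q:ℝ)⁻¹) := (Real.one_rpow _).symm
        _ ≤ _ := Real.rpow_le_rpow zero_le_one hS1 (by positivity)
    · have h1 : (∑ j, A i j * (t j : ℝ)) ^ ((q:ℝ)⁻¹) ≤ ((m:ℝ) * m) ^ ((q:ℝ)⁻¹) :=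
        Real.rpow_le_rpow hS0 hSm (by positivity)
      have h2 : ((m:ℝ) * m) ^ ((q:ℝ)⁻¹) = (m:ℝ) ^ (2 * (q:ℝ)⁻¹) := by
        have : (m:ℝ) * m = (m:ℝ) ^ (2:ℝ) := by
          rw [show ((2:ℝ)) = ((2:ℕ):ℝ) by norm_num, Real.rpow_natCast]; ring
        rw [this, ← Real.rpow_mul (by positivity)]
      have h3 : (m:ℝ) ^ (2 * (q:ℝ)⁻¹) ≤ (m:ℝ) ^ (1:ℝ) := by
        apply Real.rpow_le_rpow_of_exponent_le hm1
        rw [← div_eq_mul_inv, div_le_one hq0]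
        exact_mod_cast hq
      rw [Real.rpow_one] at h3
      calc _ ≤ ((m:ℝ) * m) ^ ((q:ℝ)⁻¹) := h1
        _ ≤ (m:ℝ) := by rw [h2]; exact h3
  let F : α →o α :=
    ⟨fun t i => ⟨(∑ j, A i j * (t j : ℝ)) ^ ((q:ℝ)⁻¹), hSmem t i⟩, by
      intro t s hts i
      simp only [Subtype.mk_le_mk]
      apply Real.rpow_le_rpow
      · apply Finset.sum_nonneg
        intro j _
        exact mul_nonneg (hA0 i j) (le_trans zero_le_one (t j).2.1)
      · exact Finset.sum_le_sum fun j _ => mul_le_mul_of_nonneg_left (hts j) (hA0 i j)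
      · positivity⟩
  obtain ⟨t0, ht0⟩ : ∃ t0 : α, F t0 = t0 := ⟨OrderHom.lfp F, F.map_lfp⟩
  set t : Fin m → ℝ := fun i => (t0 i : ℝ) with htdef
  have ht1 : ∀ i, 1 ≤ t i := fun i => (t0 i).2.1
  have hfix : ∀ i, (∑ j, A i j * t j) ^ ((q:ℝ)⁻¹) = t i := by
    intro i
    have := congrFun ht0 i
    exact congrArg Subtype.val this
  have hteq : ∀ i, t i ^ q = ∑ j, A i j * t j := by
    intro i
    have hS0 : (0:ℝ) ≤ ∑ j, A i j * t j := by
      apply Finset.sum_nonneg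
      intro j _
      exact mul_nonneg (hA0 i j) (le_trans zero_le_one (ht1 j))
    rw [← hfix i, ← Real.rpow_natCast ((∑ j, A i j * t j) ^ ((q:ℝ)⁻¹)) q,
      ← Real.rpow_mul hS0, inv_mul_cancel₀ hqne, Real.rpow_one]
  have htgt := stmt0_strict A hm q hq hA01 hAprim t ht1 hteq
  refine ⟨t, ⟨htgt, hteq⟩, ?_⟩
  -- uniqueness
  rintro s ⟨hs1, hseq⟩
  -- show: for any two solutions u v (with entries > 1), u ≤ v
  have key : ∀ u v : Fin m → ℝ, (∀ i, 1 < u i) → (∀ i, 1 < v i) →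
      (∀ i, u i ^ q = ∑ j, A i j * u j) → (∀ i, v i ^ q = ∑ j, A i j * v j) →
      ∀ i, u i ≤ v i := by
    intro u v hu hv hue hve
    obtain ⟨i0, _, hi0⟩ := Finset.exists_max_image Finset.univ (fun i => u i / v i)
      ⟨⟨0, by omega⟩, Finset.mem_univ _⟩
    set lam := u i0 / v i0 with hlam
    have hvpos : ∀ i, 0 < v i := fun i => lt_trans zero_lt_one (hv i)
    have hupos : ∀ i, 0 < u i := fun i => lt_trans zero_lt_one (hu i)
    have hub : ∀ j, u j ≤ lam * v j := by
      intro j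
      have h := hi0 j (Finset.mem_univ j)
      rw [div_le_div_iff₀ (hvpos j) (hvpos i0)] at h
      rw [hlam, div_mul_eq_mul_div, le_div_iff₀ (hvpos i0)]
      linarith
    have hlam1 : lam ≤ 1 := by
      by_contra hgt
      push_neg at hgt
      have h1 : u i0 ^ q ≤ lam * v i0 ^ q := by
        rw [hue i0, hve i0, Finset.mul_sum]
        apply Finset.sum_le_sum
        intro j _
        calc A i0 j * u j ≤ A i0 j * (lam * v j) :=
            mul_le_mul_of_nonneg_left (hub j) (hA0 i0 j)
          _ = lam * (A i0 j * v j) := by ring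
      have h2 : u i0 = lam * v i0 := by
        rw [hlam]
        exact (div_mul_cancel₀ _ (ne_of_gt (hvpos i0))).symm
      rw [h2, mul_pow] at h1
      have hvq : 0 < v i0 ^ q := pow_pos (hvpos i0) q
      have h3 : lam ^ q ≤ lam := (mul_le_mul_iff_of_pos_right hvq).mp h1
      have h4 : lam < lam ^ q := by
        calc lam = lam ^ 1 := (pow_one _).symm
          _ < lam ^ q := pow_lt_pow_right₀ hgt (by omega)
      linarith
    intro j
    calc u j ≤ lam * v j := hub j
      _ ≤ 1 * v j := mul_le_mul_of_nonneg_right hlam1 (le_of_lt (hvpos j))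
      _ = v j := one_mul _
  have hle1 := key s t hs1 htgt hseq hteq
  have hle2 := key t s htgt hs1 hteq hseq
  funext i
  exact le_antisymm (hle1 i) (hle2 i)

end
end

section
/- Let Γ = (V, E) be a directed graph (with V finite or countably infinite) in which every vertex has at least one outgoing edge and the outdegree of every vertex is at most M, where M < ∞, and let q > 1 be an integer. Then there exists a unique function t : V → [1, M^{1/(q-1)}] satisfying t(v)^q = Σ_{w : (v,w) ∈ E} t(w) for every vertex v ∈ V. -/
open scoped Classical ENNReal
open Filter MeasureTheory Topology

noncomputable section

/-- Iteration sequence: `t₀ ≡ 1`, `t_{n+1}(v) = (∑_{w ∈ E v} tₙ(w))^(1/q)`. -/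
noncomputable def iterSeq (V : Type) (E : V → Finset V) (q : ℕ) : ℕ → V → ℝ
  | 0 => fun _ => 1
  | (n+1) => fun v => (∑ w ∈ E v, iterSeq V E q n w) ^ ((1 : ℝ) / q)

/-- Uniqueness half: any solution is pointwise ≤ any other solution. -/
theorem aux_le (V : Type) [Nonempty V] (E : V → Finset V) (M q : ℕ)
    (hq : 2 ≤ q) (t s : V → ℝ)
    (ht : ∀ v, t v ∈ Set.Icc 1 ((M : ℝ) ^ ((1 : ℝ) / ((q : ℝ) - 1))))
    (hs : ∀ v, s v ∈ Set.Icc 1 ((M : ℝ) ^ ((1 : ℝ) / ((q : ℝ) - 1))))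
    (het : ∀ v, t v ^ q = ∑ w ∈ E v, t w)
    (hes : ∀ v, s v ^ q = ∑ w ∈ E v, s w) : ∀ v, t v ≤ s v := by
  set B : ℝ := (M : ℝ) ^ ((1 : ℝ) / ((q : ℝ) - 1)) with hB
  have hq0 : (q : ℝ) ≠ 0 := by positivity
  have hqn0 : q ≠ 0 := by omega
  have hbdd : BddAbove (Set.range fun v => t v / s v) := by
    refine ⟨B, ?_⟩
    rintro x ⟨v, rfl⟩
    calc t v / s v ≤ t v / 1 := by
          apply div_le_div_of_nonneg_left (by linarith [(ht v).1]) one_pos (hs v).1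
      _ = t v := div_one _
      _ ≤ B := (ht v).2
  set c : ℝ := ⨆ v, t v / s v with hc
  have hcge : ∀ v, t v / s v ≤ c := fun v => le_ciSup hbdd v
  have hsv_pos : ∀ v, (0 : ℝ) < s v := fun v => lt_of_lt_of_le one_pos (hs v).1
  have htv_pos : ∀ v, (0 : ℝ) < t v := fun v => lt_of_lt_of_le one_pos (ht v).1
  have hcpos : 0 < c := by
    obtain ⟨v⟩ := ‹Nonempty V›
    exact lt_of_lt_of_le (div_pos (htv_pos v) (hsv_pos v)) (hcge v)
  -- key step: c ≤ c^(1/q)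
  have key : c ≤ c ^ ((1 : ℝ) / q) := by
    apply ciSup_le
    intro v
    rw [div_le_iff₀ (hsv_pos v)]
    have hpow : t v ^ q ≤ (c ^ ((1 : ℝ) / q) * s v) ^ q := by
      have h1 : (c ^ ((1 : ℝ) / q)) ^ q = c := by
        rw [← Real.rpow_natCast (c ^ ((1 : ℝ) / q)) q, ← Real.rpow_mul hcpos.le]
        rw [one_div_mul_cancel hq0, Real.rpow_one]
      rw [mul_pow, h1, het v, hes v, Finset.mul_sum]
      apply Finset.sum_le_sum
      intro w _
      rw [← div_le_iff₀ (hsv_pos w)] at *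
      exact hcge w
    exact le_of_pow_le_pow_left₀ hqn0 (mul_nonneg (Real.rpow_nonneg hcpos.le _) (hsv_pos v).le) hpow
  have hc1 : c ≤ 1 := by
    by_contra h
    push_neg at h
    have : c ^ ((1 : ℝ) / q) < c ^ (1 : ℝ) := by
      apply Real.rpow_lt_rpow_of_exponent_lt h
      rw [div_lt_one (by positivity)]
      exact_mod_cast by omega
    rw [Real.rpow_one] at this
    linarith [key]
  intro v
  have := hcge v
  rw [div_le_iff₀ (hsv_pos v)] at this
  nlinarith [hsv_pos v]

/-- **Lemma 2.1.** On a countable directed graph with all outdegrees in `[1, M]` and an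
integer `q > 1`, there is a unique `[1, M^{1/(q-1)}]`-valued solution of
`t(v)^q = Σ_{w : (v,w) ∈ E} t(w)`. -/
theorem stmt6 (V : Type) [Countable V] (E : V → Finset V) (M q : ℕ)
    (hq : 2 ≤ q)
    (hout : ∀ v, (E v).Nonempty)
    (hdeg : ∀ v, (E v).card ≤ M) :
    ∃! t : V → ℝ,
      (∀ v, t v ∈ Set.Icc 1 ((M : ℝ) ^ ((1 : ℝ) / ((q : ℝ) - 1)))) ∧
      ∀ v, t v ^ q = ∑ w ∈ E v, t w := by
  rcases isEmpty_or_nonempty V with hV | hV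
  · exact ⟨fun _ => 1, ⟨fun v => isEmptyElim v, fun v => isEmptyElim v⟩,
      fun y _ => funext fun v => isEmptyElim v⟩
  set B : ℝ := (M : ℝ) ^ ((1 : ℝ) / ((q : ℝ) - 1)) with hBdef
  have hq0 : (q : ℝ) ≠ 0 := by positivity
  have hqn0 : q ≠ 0 := by omega
  have hq1 : (1 : ℝ) ≤ (q : ℝ) - 1 := by
    have : (2 : ℝ) ≤ q := by exact_mod_cast hq
    linarith
  have hqm1 : ((q : ℝ) - 1) ≠ 0 := by linarith
  have hM1 : (1 : ℝ) ≤ (M : ℝ) := by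
    obtain ⟨v⟩ := hV
    have h1 : 1 ≤ (E v).card := Finset.card_pos.mpr (hout v)
    exact_mod_cast le_trans h1 (hdeg v)
  have hMpos : (0 : ℝ) < M := by linarith
  have hB1 : (1 : ℝ) ≤ B := Real.one_le_rpow hM1 (by positivity)
  -- B^q = M * B
  have hBq : B ^ q = (M : ℝ) * B := by
    rw [hBdef, ← Real.rpow_natCast ((M:ℝ) ^ ((1:ℝ)/((q:ℝ)-1))) q,
      ← Real.rpow_mul hMpos.le]
    nth_rewrite 2 [← Real.rpow_one (M : ℝ)]
    rw [← Real.rpow_add hMpos]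
    congr 1
    field_simp
    ring
  set f : ℕ → V → ℝ := iterSeq V E q with hf
  -- bounds
  have hbnd : ∀ n v, 1 ≤ f n v ∧ f n v ≤ B := by
    intro n
    induction n with
    | zero => intro v; exact ⟨le_refl 1, hB1⟩
    | succ n ih =>
      intro v
      have hsum1 : (1 : ℝ) ≤ ∑ w ∈ E v, f n w := by
        calc (1 : ℝ) ≤ (E v).card := by
              exact_mod_cast Finset.card_pos.mpr (hout v)
          _ = ∑ w ∈ E v, (1 : ℝ) := by simp
          _ ≤ ∑ w ∈ E v, f n w := Finset.sum_le_sum fun w _ => (ih w).1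
      have hsumB : ∑ w ∈ E v, f n w ≤ (M : ℝ) * B := by
        calc ∑ w ∈ E v, f n w ≤ ∑ w ∈ E v, B := Finset.sum_le_sum fun w _ => (ih w).2
          _ = (E v).card * B := by rw [Finset.sum_const, nsmul_eq_mul]
          _ ≤ (M : ℝ) * B := by
              apply mul_le_mul_of_nonneg_right _ (by linarith)
              exact_mod_cast hdeg v
      constructor
      · show (1:ℝ) ≤ (∑ w ∈ E v, f n w) ^ ((1 : ℝ) / q)
        exact Real.one_le_rpow hsum1 (by positivity)
      · show (∑ w ∈ E v, f n w) ^ ((1 : ℝ) / q) ≤ B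
        calc (∑ w ∈ E v, f n w) ^ ((1 : ℝ) / q) ≤ ((M : ℝ) * B) ^ ((1 : ℝ) / q) :=
              Real.rpow_le_rpow (by linarith) hsumB (by positivity)
          _ = (B ^ q) ^ ((1 : ℝ) / q) := by rw [hBq]
          _ = B := by
              rw [← Real.rpow_natCast B q, ← Real.rpow_mul (by linarith)]
              rw [mul_one_div, div_self hq0, Real.rpow_one]
  -- monotone
  have hmono : ∀ v, Monotone fun n => f n v := by
    have hstep : ∀ n v, f n v ≤ f (n + 1) v := by
      intro n
      induction n with
      | zero =>
        intro v
        exact (hbnd 1 v).1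
      | succ n ih =>
        intro v
        show (∑ w ∈ E v, f n w) ^ ((1:ℝ)/q) ≤ (∑ w ∈ E v, f (n+1) w) ^ ((1:ℝ)/q)
        apply Real.rpow_le_rpow
        · apply Finset.sum_nonneg; intro w _; linarith [(hbnd n w).1]
        · exact Finset.sum_le_sum fun w _ => ih w
        · positivity
    intro v
    exact monotone_nat_of_le_succ fun n => hstep n v
  have hbddA : ∀ v, BddAbove (Set.range fun n => f n v) := by
    intro v
    exact ⟨B, by rintro x ⟨n, rfl⟩; exact (hbnd n v).2⟩
  set t : V → ℝ := fun v => ⨆ n, f n v with htdef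
  have htend : ∀ v, Tendsto (fun n => f n v) atTop (𝓝 (t v)) :=
    fun v => tendsto_atTop_ciSup (hmono v) (hbddA v)
  have ht1 : ∀ v, 1 ≤ t v := fun v => le_ciSup_of_le (hbddA v) 0 (le_refl 1)
  have htB : ∀ v, t v ≤ B := fun v => ciSup_le fun n => (hbnd n v).2
  -- the equation
  have hpoweq : ∀ n v, f (n + 1) v ^ q = ∑ w ∈ E v, f n w := by
    intro n v
    show ((∑ w ∈ E v, f n w) ^ ((1:ℝ)/q)) ^ q = _
    have hS : (0:ℝ) ≤ ∑ w ∈ E v, f n w := by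
      apply Finset.sum_nonneg; intro w _; linarith [(hbnd n w).1]
    rw [← Real.rpow_natCast ((∑ w ∈ E v, f n w) ^ ((1:ℝ)/q)) q,
      ← Real.rpow_mul hS, one_div_mul_cancel hq0, Real.rpow_one]
  have heq : ∀ v, t v ^ q = ∑ w ∈ E v, t w := by
    intro v
    have h1 : Tendsto (fun n => f (n + 1) v ^ q) atTop (𝓝 (t v ^ q)) := by
      exact ((htend v).comp (tendsto_add_atTop_nat 1)).pow q
    have h2 : Tendsto (fun n => ∑ w ∈ E v, f n w) atTop (𝓝 (∑ w ∈ E v, t w)) :=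
      tendsto_finset_sum _ fun w _ => htend w
    have h3 : (fun n => f (n + 1) v ^ q) = fun n => ∑ w ∈ E v, f n w :=
      funext fun n => hpoweq n v
    rw [h3] at h1
    exact tendsto_nhds_unique h1 h2
  refine ⟨t, ⟨fun v => ⟨ht1 v, htB v⟩, heq⟩, ?_⟩
  rintro s ⟨hsmem, hseq⟩
  funext v
  exact le_antisymm
    (aux_le V E M q hq s t hsmem (fun v => ⟨ht1 v, htB v⟩) hseq heq v)
    (aux_le V E M q hq t s (fun v => ⟨ht1 v, htB v⟩) hsmem heq hseq v)
end
end

section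
/- Let m ≥ 2, let q ≥ 2 be an integer, let Ω be a nonempty closed subset of Σ_m, and let μ be a Borel probability measure on Σ_m supported on Ω. Then there exists a unique Borel probability measure P_μ on Σ_m such that for every finite word u of length n ≥ 1, the measure of the cylinder [u] is P_μ[u] = ∏_{i ≤ n, q ∤ i} μ[u|J_i], where u|J_i = u_i u_{qi} ⋯ u_{q^r i} with q^r i ≤ n < q^{r+1} i; moreover P_μ is supported on X_Ω. -/
open scoped Classical ENNReal
open Filter MeasureTheory Topology

noncomputable section

/-- `Begins x u` : the finite word `u` is a prefix of the sequence `x` (indexed by `ℕ+`). -/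
def Begins {m : ℕ} (x : ℕ+ → Fin m) (u : List (Fin m)) : Prop :=
  ∀ j : Fin u.length, x ⟨(j : ℕ) + 1, Nat.succ_pos _⟩ = u.get j

/-- `Cyl u` : the cylinder set of the word `u`. -/
def Cyl {m : ℕ} (u : List (Fin m)) : Set (ℕ+ → Fin m) := {x | Begins x u}

/-- `Pref Ω` : the set of (finite) prefixes of sequences in `Ω`. -/
def Pref {m : ℕ} (Ω : Set (ℕ+ → Fin m)) : Set (List (Fin m)) := {u | ∃ x ∈ Ω, Begins x u}

/-- number of length-`n` words beginning some sequence of `X`. -/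
def NWords {m : ℕ} (n : ℕ) (X : Set (ℕ+ → Fin m)) : ℕ :=
  Set.ncard {u : List (Fin m) | u.length = n ∧ u ∈ Pref X}

/-- restriction of `x` to the geometric progression `J_i = {i, qi, q²i, …}`:
`(x|J_i)_k = x_{q^{k-1} i}` for `k ≥ 1`. -/
def RestrJ {m : ℕ} (q : ℕ+) (x : ℕ+ → Fin m) (i : ℕ+) : ℕ+ → Fin m :=
  fun k => x (q ^ ((k : ℕ) - 1) * i)

/-- the multiplicative subshift `X_Ω = {x : x|J_i ∈ Ω for all i with q ∤ i}`. -/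
def XOm {m : ℕ} (q : ℕ+) (Ω : Set (ℕ+ → Fin m)) : Set (ℕ+ → Fin m) :=
  {x | ∀ i : ℕ+, ¬ q ∣ i → RestrJ q x i ∈ Ω}

/-- the real number `Σ_{k≥1} x_k m^{-k}` with base-`m` digit sequence `x`. -/
def ValMap (m : ℕ) (x : ℕ+ → Fin m) : ℝ := ∑' k : ℕ+, ((x k : ℕ) : ℝ) * (m : ℝ)⁻¹ ^ (k : ℕ)

/-- the subset of `[0,1]` of reals whose base-`m` digit sequence lies in `X`. -/
def XiSet {m : ℕ} (X : Set (ℕ+ → Fin m)) : Set ℝ := {r | ∃ x ∈ X, r = ValMap m x}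

/-- entropy (base-`m` logarithms) of the partition of `Ω` into `k`-cylinders, for a measure
supported on `Ω` (words that are not prefixes of `Ω` get measure `0` and contribute nothing). -/
def Hent (m : ℕ) (μ : Measure (ℕ+ → Fin m)) (k : ℕ) : ℝ :=
  -∑ u : Fin k → Fin m,
    ((μ (Cyl (List.ofFn u))).toReal * Real.logb m (μ (Cyl (List.ofFn u))).toReal)

/-- `s(Ω,μ) = (q-1)² Σ_{k≥1} H_m^μ(α_k)/q^{k+1}`. -/
def sOm (m : ℕ) (q : ℕ+) (μ : Measure (ℕ+ → Fin m)) : ℝ :=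
  ((q : ℝ) - 1) ^ 2 * ∑' k : ℕ, Hent m μ (k + 1) / (q : ℝ) ^ (k + 2)

/-- cylinder determined by the first `n` entries of `x`, i.e. `[x₁…x_n]`. -/
def CylN {m : ℕ} (n : ℕ) (x : ℕ+ → Fin m) : Set (ℕ+ → Fin m) :=
  {y | ∀ k : ℕ+, (k : ℕ) ≤ n → y k = x k}

/-- the cylinder `[u|J_i]` where `u = x₁…x_n`: sequences `y` with
`y_{ℓ+1} = x_{q^ℓ i}` for all `ℓ ≥ 0` with `q^ℓ i ≤ n`. -/
def CylJ {m : ℕ} (q n i : ℕ+) (x : ℕ+ → Fin m) : Set (ℕ+ → Fin m) :=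
  {y | ∀ ℓ : ℕ, q ^ ℓ * i ≤ n → y ⟨ℓ + 1, Nat.succ_pos _⟩ = x (q ^ ℓ * i)}

/-- `P` has the product structure `P[u] = ∏_{i ≤ |u|, q ∤ i} μ[u|J_i]` on cylinders. -/
def ProdProp {m : ℕ} (q : ℕ+) (μ P : Measure (ℕ+ → Fin m)) : Prop :=
  ∀ (n : ℕ+) (x : ℕ+ → Fin m),
    P (CylN (n : ℕ) x) = ∏ i ∈ (Finset.Icc 1 n).filter (fun i => ¬ q ∣ i), μ (CylJ q n i x)

/-- `t` is a `[1, m^{1/(q-1)}]`-valued solution of `t(u)^q = Σ_{j : uj ∈ Pref(Ω)} t(uj)`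
on the tree of prefixes of `Ω`. -/
def TSol {m : ℕ} (q : ℕ+) (Ω : Set (ℕ+ → Fin m)) (t : List (Fin m) → ℝ) : Prop :=
  ∀ u ∈ Pref Ω,
    t u ∈ Set.Icc 1 ((m : ℝ) ^ ((1 : ℝ) / ((q : ℝ) - 1))) ∧
    t u ^ (q : ℕ) =
      ∑ j ∈ Finset.univ.filter (fun j : Fin m => u ++ [j] ∈ Pref Ω), t (u ++ [j])

/-- `μ` has the cylinder values `μ[u₁…u_k] = ∏_{j=1}^k t(u₁…u_j)/t(u₁…u_{j-1})^q`
for prefixes `u` of `Ω`. -/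
def CylVals {m : ℕ} (q : ℕ+) (Ω : Set (ℕ+ → Fin m)) (t : List (Fin m) → ℝ)
    (μ : Measure (ℕ+ → Fin m)) : Prop :=
  ∀ u ∈ Pref Ω,
    μ (Cyl u) =
      ENNReal.ofReal (∏ j ∈ Finset.range u.length, t (u.take (j + 1)) / t (u.take j) ^ (q : ℕ))

set_option maxHeartbeats 1000000

namespace Stmt10Aux

variable {m : ℕ}


/-- ℕ-level version of `CylJ`. -/
def CylJn (q : ℕ+) (n : ℕ) (i : ℕ+) (x : ℕ+ → Fin m) : Set (ℕ+ → Fin m) :=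
  {y | ∀ ℓ : ℕ, ((q ^ ℓ * i : ℕ+) : ℕ) ≤ n → y ⟨ℓ + 1, Nat.succ_pos _⟩ = x (q ^ ℓ * i)}

lemma CylJn_univ (q : ℕ+) {n : ℕ} {i : ℕ+} (h : n < (i : ℕ)) (x : ℕ+ → Fin m) :
    CylJn q n i x = Set.univ := by
  ext y
  simp only [CylJn, Set.mem_setOf_eq, Set.mem_univ, iff_true]
  intro ℓ hℓ
  exfalso
  have : (i : ℕ) ≤ ((q ^ ℓ * i : ℕ+) : ℕ) := by
    rw [PNat.mul_coe]
    exact Nat.le_mul_of_pos_left _ (by positivity)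
  omega

lemma measurableSet_CylJn (q : ℕ+) (n : ℕ) (i : ℕ+) (x : ℕ+ → Fin m) :
    MeasurableSet (CylJn q n i x) := by
  have : CylJn q n i x =
      ⋂ (ℓ : ℕ) (_ : ((q ^ ℓ * i : ℕ+) : ℕ) ≤ n),
        (fun y : ℕ+ → Fin m => y ⟨ℓ + 1, Nat.succ_pos _⟩) ⁻¹' {x (q ^ ℓ * i)} := by
    ext y; simp [CylJn]
  rw [this]
  exact MeasurableSet.iInter fun ℓ => MeasurableSet.iInter fun _ =>
    (measurable_pi_apply _) (measurableSet_singleton _)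

lemma measurableSet_CylN (n : ℕ) (x : ℕ+ → Fin m) : MeasurableSet (CylN n x) := by
  have : CylN n x =
      ⋂ (k : ℕ+) (_ : (k : ℕ) ≤ n), (fun y : ℕ+ → Fin m => y k) ⁻¹' {x k} := by
    ext y; simp [CylN]
  rw [this]
  exact MeasurableSet.iInter fun k => MeasurableSet.iInter fun _ =>
    (measurable_pi_apply _) (measurableSet_singleton _)

lemma mem_CylN_self (n : ℕ) (x : ℕ+ → Fin m) : x ∈ CylN n x := fun _ _ => rfl

lemma CylN_nonempty (n : ℕ) (x : ℕ+ → Fin m) : (CylN n x).Nonempty :=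
  ⟨x, mem_CylN_self n x⟩

lemma CylN_as_biInter (n : ℕ) (x : ℕ+ → Fin m) :
    CylN n x = ⋂ k ∈ Finset.range n,
      (fun y : ℕ+ → Fin m => y ⟨k + 1, Nat.succ_pos _⟩) ⁻¹' {x ⟨k + 1, Nat.succ_pos _⟩} := by
  ext y
  simp only [CylN, Set.mem_setOf_eq, Set.mem_iInter, Finset.mem_range, Set.mem_preimage,
    Set.mem_singleton_iff]
  constructor
  · intro h k hk
    exact h ⟨k + 1, Nat.succ_pos _⟩ (by simpa using hk)
  · intro h k hk
    obtain ⟨kv, hkv⟩ := k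
    have h1 : kv - 1 < n := by simp at hk ⊢; omega
    have h2 : (⟨kv, hkv⟩ : ℕ+) = ⟨(kv - 1) + 1, Nat.succ_pos _⟩ := by
      apply Subtype.ext; simp; omega
    rw [h2]
    exact h (kv - 1) h1

lemma isOpen_CylN (n : ℕ) (x : ℕ+ → Fin m) : IsOpen (CylN n x) := by
  rw [CylN_as_biInter]
  exact isOpen_biInter_finset fun k _ =>
    (continuous_apply _).isOpen_preimage _ (isOpen_discrete _)

lemma isClosed_CylN (n : ℕ) (x : ℕ+ → Fin m) : IsClosed (CylN n x) := by
  rw [CylN_as_biInter]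
  exact isClosed_biInter fun k _ =>
    (IsClosed.preimage (continuous_apply _) (isClosed_singleton))

lemma isCompact_CylN (n : ℕ) (x : ℕ+ → Fin m) : IsCompact (CylN n x) :=
  (isClosed_CylN n x).isCompact

lemma CylN_anti {n n' : ℕ} (h : n ≤ n') (x : ℕ+ → Fin m) : CylN n' x ⊆ CylN n x :=
  fun y hy k hk => hy k (le_trans hk h)

lemma CylN_congr {n : ℕ} {x z : ℕ+ → Fin m} (h : ∀ k : ℕ+, (k : ℕ) ≤ n → x k = z k) :
    CylN n x = CylN n z := by
  ext y
  constructor <;> intro hy k hk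
  · rw [← h k hk]; exact hy k hk
  · rw [h k hk]; exact hy k hk

lemma CylJn_congr (q : ℕ+) (i : ℕ+) {n : ℕ} {x z : ℕ+ → Fin m}
    (h : ∀ k : ℕ+, (k : ℕ) ≤ n → x k = z k) : CylJn q n i x = CylJn q n i z := by
  ext y
  constructor <;> intro hy ℓ hℓ
  · rw [← h _ hℓ]; exact hy ℓ hℓ
  · rw [h _ hℓ]; exact hy ℓ hℓ

/-- dichotomy for nested cylinders -/
lemma CylN_subset_or_disjoint {n n' : ℕ} (h : n ≤ n') (x z : ℕ+ → Fin m) :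
    CylN n' z ⊆ CylN n x ∨ CylN n' z ∩ CylN n x = ∅ := by
  by_cases hall : ∀ k : ℕ+, (k : ℕ) ≤ n → z k = x k
  · left
    intro y hy k hk
    rw [hy k (le_trans hk h), hall k hk]
  · right
    push_neg at hall
    obtain ⟨k, hk, hne⟩ := hall
    ext y
    simp only [Set.mem_inter_iff, Set.mem_empty_iff_false, iff_false, not_and]
    intro h1 h2
    exact hne ((h1 k (le_trans hk h)).symm.trans (h2 k hk))


-- factorization lemmas in ℕ
lemma nat_fact {q : ℕ} (hq : 2 ≤ q) : ∀ n : ℕ, 0 < n →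
    ∃ e i : ℕ, 0 < i ∧ ¬ q ∣ i ∧ n = q ^ e * i := by
  intro n
  induction n using Nat.strong_induction_on with
  | _ n ih =>
    intro hn
    by_cases hdvd : q ∣ n
    · obtain ⟨k, rfl⟩ := hdvd
      have hk : 0 < k := by
        rcases Nat.eq_zero_or_pos k with h | h
        · subst h; simp at hn
        · exact h
      have hlt : k < q * k := by
        calc k = 1 * k := (one_mul k).symm
        _ < q * k := by exact (Nat.mul_lt_mul_right hk).mpr (by omega)
      obtain ⟨e, i, hi, hqi, hk'⟩ := ih k hlt hk
      exact ⟨e + 1, i, hi, hqi, by rw [hk']; ring⟩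
    · exact ⟨0, n, hn, hdvd, by ring⟩

lemma nat_fact_unique {q : ℕ} (hq : 2 ≤ q) : ∀ (e e' i i' : ℕ), ¬ q ∣ i → ¬ q ∣ i' →
    q ^ e * i = q ^ e' * i' → e = e' ∧ i = i' := by
  intro e
  induction e with
  | zero =>
    intro e' i i' hi hi' heq
    cases e' with
    | zero => simpa using heq
    | succ e' =>
      exfalso; apply hi
      rw [pow_zero, one_mul] at heq
      exact ⟨q ^ e' * i', by rw [heq]; ring⟩
  | succ e ih =>
    intro e' i i' hi hi' heq
    cases e' with
    | zero =>
      exfalso; apply hi'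
      rw [pow_zero, one_mul] at heq
      exact ⟨q ^ e * i, by rw [← heq]; ring⟩
    | succ e' =>
      have hq0 : 0 < q := by omega
      have heq' : q ^ e * i = q ^ e' * i' := by
        have h2 : q * (q ^ e * i) = q * (q ^ e' * i') := by
          calc q * (q ^ e * i) = q ^ (e + 1) * i := by ring
          _ = q ^ (e' + 1) * i' := heq
          _ = q * (q ^ e' * i') := by ring
        exact Nat.eq_of_mul_eq_mul_left hq0 h2
      obtain ⟨h1, h2⟩ := ih e' i i' hi hi' heq'
      exact ⟨by omega, h2⟩


variable (q : ℕ+) (μ : Measure (ℕ+ → Fin m)) [IsProbabilityMeasure μ]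

def lam (q : ℕ+) (μ : Measure (ℕ+ → Fin m)) (n : ℕ) (x : ℕ+ → Fin m) : ℝ≥0∞ :=
  ∏ i ∈ (Finset.Icc 1 ⟨n + 1, Nat.succ_pos _⟩).filter (fun i : ℕ+ => ¬ q ∣ i),
    μ (CylJn q n i x)

lemma prod_eq_prod_of_le {n : ℕ} (x : ℕ+ → Fin m) (K L : ℕ+) (hnK : n ≤ (K : ℕ)) (hKL : K ≤ L) :
    ∏ i ∈ (Finset.Icc 1 L).filter (fun i : ℕ+ => ¬ q ∣ i), μ (CylJn q n i x)
      = ∏ i ∈ (Finset.Icc 1 K).filter (fun i : ℕ+ => ¬ q ∣ i), μ (CylJn q n i x) := by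
  symm
  apply Finset.prod_subset
  · exact Finset.filter_subset_filter _ (Finset.Icc_subset_Icc_right hKL)
  · intro i hi hni
    have h1 : ¬ q ∣ i := (Finset.mem_filter.mp hi).2
    have h2 : ¬ i ≤ K := by
      intro hle
      exact hni (Finset.mem_filter.mpr ⟨Finset.mem_Icc.mpr ⟨i.one_le, hle⟩, h1⟩)
    have h3 : (K : ℕ) < (i : ℕ) := by
      have := not_le.mp h2
      exact_mod_cast this
    rw [CylJn_univ q (by omega) x, measure_univ]

lemma lam_eq_prod {n : ℕ} (x : ℕ+ → Fin m) (N : ℕ+) (hn : n ≤ (N : ℕ)) :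
    lam q μ n x = ∏ i ∈ (Finset.Icc 1 N).filter (fun i : ℕ+ => ¬ q ∣ i), μ (CylJn q n i x) := by
  unfold lam
  rcases le_total ((⟨n + 1, Nat.succ_pos _⟩ : ℕ+)) N with h | h
  · exact (prod_eq_prod_of_le q μ x _ N (by exact Nat.le_succ n) h).symm
  · exact (prod_eq_prod_of_le q μ x N _ hn h)

lemma lam_zero (x : ℕ+ → Fin m) : lam q μ 0 x = 1 := by
  unfold lam
  apply Finset.prod_eq_one
  intro i _
  rw [CylJn_univ q i.pos x, measure_univ]


lemma lam_congr {n : ℕ} {x z : ℕ+ → Fin m} (h : ∀ k : ℕ+, (k : ℕ) ≤ n → x k = z k) :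
    lam q μ n x = lam q μ n z :=
  Finset.prod_congr rfl fun i _ => by rw [CylJn_congr q i h]

lemma lam_succ (hq : 2 ≤ (q : ℕ)) (n : ℕ) (x : ℕ+ → Fin m) :
    lam q μ n x = ∑ a : Fin m, lam q μ (n + 1) (Function.update x ⟨n + 1, Nat.succ_pos _⟩ a) := by
  obtain ⟨e, i0, hi0pos, hqi0, hfact⟩ := nat_fact hq (n + 1) (Nat.succ_pos n)
  set ip : ℕ+ := ⟨i0, hi0pos⟩ with hip
  set t : ℕ+ := ⟨n + 1, Nat.succ_pos n⟩ with ht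
  have hqip : ¬ q ∣ ip := by rw [PNat.dvd_iff]; exact hqi0
  have htfact : ((q ^ e * ip : ℕ+) : ℕ) = n + 1 := by
    rw [PNat.mul_coe, PNat.pow_coe]; exact hfact.symm
  have hiple : (ip : ℕ) ≤ n + 1 := by
    have : (ip : ℕ) ≤ (q:ℕ) ^ e * (ip:ℕ) := Nat.le_mul_of_pos_left _ (by positivity)
    have h2 : (q:ℕ) ^ e * (ip:ℕ) = n + 1 := by
      simpa [PNat.mul_coe, PNat.pow_coe] using htfact
    omega
  set N2 : ℕ+ := ⟨n + 2, Nat.succ_pos _⟩ with hN2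
  set S := (Finset.Icc 1 N2).filter (fun i : ℕ+ => ¬ q ∣ i) with hSdef
  have hmemS : ip ∈ S := by
    refine Finset.mem_filter.mpr ⟨Finset.mem_Icc.mpr ⟨ip.one_le, ?_⟩, hqip⟩
    rw [← PNat.coe_le_coe]
    show (ip : ℕ) ≤ n + 2
    omega
  have hl1 : lam q μ n x = ∏ i ∈ S, μ (CylJn q n i x) :=
    lam_eq_prod q μ x N2 (by show n ≤ n + 2; omega)
  have hl2 : ∀ a : Fin m, lam q μ (n + 1) (Function.update x t a)
      = ∏ i ∈ S, μ (CylJn q (n + 1) i (Function.update x t a)) := fun a =>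
    lam_eq_prod q μ _ N2 (by show n + 1 ≤ n + 2; omega)
  -- factors away from ip are unchanged
  have hne : ∀ i : ℕ+, ¬ q ∣ i → i ≠ ip → ∀ a : Fin m,
      CylJn q (n + 1) i (Function.update x t a) = CylJn q n i x := by
    intro i hdvd hi a
    have hcond : ∀ ℓ : ℕ, (((q ^ ℓ * i : ℕ+)) : ℕ) ≤ n + 1 ↔ ((q ^ ℓ * i : ℕ+) : ℕ) ≤ n := by
      intro ℓ
      constructor
      · intro h
        rcases Nat.lt_or_ge ((q ^ ℓ * i : ℕ+) : ℕ) (n + 1) with h' | h'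
        · omega
        · exfalso
          have heq : ((q ^ ℓ * i : ℕ+) : ℕ) = n + 1 := by omega
          have hcoe : ((q ^ ℓ * i : ℕ+) : ℕ) = (q : ℕ) ^ ℓ * (i : ℕ) := by
            rw [PNat.mul_coe, PNat.pow_coe]
          have : (q : ℕ) ^ ℓ * (i : ℕ) = (q : ℕ) ^ e * i0 := by omega
          have hqi : ¬ (q : ℕ) ∣ (i : ℕ) := fun hd => hdvd (PNat.dvd_iff.mpr hd)
          obtain ⟨h1, h2⟩ := nat_fact_unique hq ℓ e (i : ℕ) i0 hqi hqi0 this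
          exact hi (PNat.coe_inj.mp (by rw [h2]; rfl))
      · intro h; omega
    have hval : ∀ ℓ : ℕ, ((q ^ ℓ * i : ℕ+) : ℕ) ≤ n →
        Function.update x t a (q ^ ℓ * i) = x (q ^ ℓ * i) := by
      intro ℓ h
      apply Function.update_of_ne
      intro habs
      rw [habs] at h
      simp [ht] at h
    ext y
    simp only [CylJn, Set.mem_setOf_eq]
    constructor
    · intro hy ℓ hℓ
      rw [← hval ℓ hℓ]
      exact hy ℓ ((hcond ℓ).mpr hℓ)
    · intro hy ℓ hℓ
      rw [hval ℓ ((hcond ℓ).mp hℓ)]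
      exact hy ℓ ((hcond ℓ).mp hℓ)
  -- the ip factor splits
  have hteq : (q ^ e * ip : ℕ+) = t := by
    apply PNat.coe_inj.mp
    rw [htfact]; rfl
  have hip_split : ∀ a : Fin m, CylJn q (n + 1) ip (Function.update x t a)
      = CylJn q n ip x ∩ {y | y ⟨e + 1, Nat.succ_pos _⟩ = a} := by
    intro a
    ext y
    simp only [CylJn, Set.mem_setOf_eq, Set.mem_inter_iff]
    constructor
    · intro hy
      constructor
      · intro ℓ hℓ
        have h1 : ((q ^ ℓ * ip : ℕ+) : ℕ) ≤ n + 1 := by omega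
        have h2 := hy ℓ h1
        rwa [Function.update_of_ne (by intro habs; rw [habs] at hℓ; simp [ht] at hℓ)] at h2
      · have h1 : ((q ^ e * ip : ℕ+) : ℕ) ≤ n + 1 := by rw [htfact]
        have h2 := hy e h1
        rwa [hteq, Function.update_self] at h2
    · rintro ⟨h1, h2⟩ ℓ hℓ
      rcases Nat.lt_or_ge ((q ^ ℓ * ip : ℕ+) : ℕ) (n + 1) with h' | h'
      · rw [Function.update_of_ne (by intro habs; rw [habs] at h'; simp [ht] at h')]
        exact h1 ℓ (by omega)
      · have heq : ((q ^ ℓ * ip : ℕ+) : ℕ) = n + 1 := by omega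
        have hcoe : ((q ^ ℓ * ip : ℕ+) : ℕ) = (q : ℕ) ^ ℓ * i0 := by
          rw [PNat.mul_coe, PNat.pow_coe]; rfl
        have : (q : ℕ) ^ ℓ * i0 = (q : ℕ) ^ e * i0 := by omega
        have hle : ℓ = e := (nat_fact_unique hq ℓ e i0 i0 hqi0 hqi0 this).1
        subst hle
        rw [hteq, Function.update_self]
        exact h2
  -- sum over a of the ip factor
  have hsum : ∑ a : Fin m, μ (CylJn q n ip x ∩ {y | y ⟨e + 1, Nat.succ_pos _⟩ = a})
      = μ (CylJn q n ip x) := by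
    have hdecomp : CylJn q n ip x
        = ⋃ a : Fin m, (CylJn q n ip x ∩ {y | y ⟨e + 1, Nat.succ_pos _⟩ = a}) := by
      ext y
      simp only [Set.mem_iUnion, Set.mem_inter_iff, Set.mem_setOf_eq]
      constructor
      · intro hy; exact ⟨y ⟨e + 1, Nat.succ_pos _⟩, hy, rfl⟩
      · rintro ⟨a, hy, _⟩; exact hy
    have hdis : Pairwise (Function.onFun Disjoint
        (fun a : Fin m => CylJn q n ip x ∩ {y | y ⟨e + 1, Nat.succ_pos _⟩ = a})) := by
      intro a b hab
      simp only [Function.onFun, Set.disjoint_left]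
      rintro y ⟨_, hy1⟩ ⟨_, hy2⟩
      exact hab (hy1 ▸ hy2 ▸ rfl)
    have hmeas : ∀ a : Fin m, MeasurableSet
        (CylJn q n ip x ∩ {y | y ⟨e + 1, Nat.succ_pos _⟩ = a}) := fun a =>
      (measurableSet_CylJn q n ip x).inter
        ((measurable_pi_apply _) (measurableSet_singleton _))
    calc ∑ a : Fin m, μ (CylJn q n ip x ∩ {y | y ⟨e + 1, Nat.succ_pos _⟩ = a})
        = ∑' a : Fin m, μ (CylJn q n ip x ∩ {y | y ⟨e + 1, Nat.succ_pos _⟩ = a}) :=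
          (tsum_fintype _).symm
      _ = μ (⋃ a : Fin m, (CylJn q n ip x ∩ {y | y ⟨e + 1, Nat.succ_pos _⟩ = a})) :=
          (measure_iUnion hdis hmeas).symm
      _ = μ (CylJn q n ip x) := by rw [← hdecomp]
  -- put it together
  rw [hl1]
  rw [Finset.sum_congr rfl (fun a (_ : a ∈ Finset.univ) => hl2 a)]
  rw [← Finset.mul_prod_erase S _ hmemS]
  have : ∀ a : Fin m, ∏ i ∈ S, μ (CylJn q (n + 1) i (Function.update x t a))
      = μ (CylJn q n ip x ∩ {y | y ⟨e + 1, Nat.succ_pos _⟩ = a})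
        * ∏ i ∈ S.erase ip, μ (CylJn q n i x) := by
    intro a
    rw [← Finset.mul_prod_erase S _ hmemS, hip_split a]
    congr 1
    apply Finset.prod_congr rfl
    intro i hi
    rw [hne i (Finset.mem_filter.mp (Finset.mem_of_mem_erase hi)).2
      (Finset.ne_of_mem_erase hi) a]
  rw [Finset.sum_congr rfl (fun a (_ : a ∈ Finset.univ) => this a)]
  rw [← Finset.sum_mul, hsum]

/-- patch coordinates `n+1 .. n+d` of `x` with `g`. -/
def patch (x : ℕ+ → Fin m) (n : ℕ) {d : ℕ} (g : Fin d → Fin m) : ℕ+ → Fin m :=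
  fun j => if h : n < (j : ℕ) ∧ (j : ℕ) ≤ n + d then g ⟨(j : ℕ) - n - 1, by omega⟩ else x j

lemma patch_le {x : ℕ+ → Fin m} {n d : ℕ} {g : Fin d → Fin m} {j : ℕ+} (h : (j : ℕ) ≤ n) :
    patch x n g j = x j := by
  unfold patch
  rw [dif_neg (by omega)]

lemma patch_gt {x : ℕ+ → Fin m} {n d : ℕ} {g : Fin d → Fin m} {j : ℕ+} (h : n + d < (j : ℕ)) :
    patch x n g j = x j := by
  unfold patch
  rw [dif_neg (by omega)]

lemma patch_mid {x : ℕ+ → Fin m} {n d : ℕ} {g : Fin d → Fin m} (k : ℕ) (hk : k < d) :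
    patch x n g ⟨n + k + 1, Nat.succ_pos _⟩ = g ⟨k, hk⟩ := by
  unfold patch
  rw [dif_pos (by simp; omega)]
  congr 1
  apply Fin.ext
  simp
  omega

lemma patch_zero (x : ℕ+ → Fin m) (n : ℕ) (g : Fin 0 → Fin m) : patch x n g = x := by
  funext j
  unfold patch
  rw [dif_neg (by omega)]

lemma mem_CylN_patch (x : ℕ+ → Fin m) (n d : ℕ) (g : Fin d → Fin m) :
    patch x n g ∈ CylN n x := fun k hk => patch_le hk

lemma patch_cons (x : ℕ+ → Fin m) (n d : ℕ) (a : Fin m) (g : Fin d → Fin m) :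
    patch x n (Fin.cons a g) = patch (Function.update x ⟨n + 1, Nat.succ_pos _⟩ a) (n + 1) g := by
  funext j
  by_cases h1 : (j : ℕ) = n + 1
  · have hj : j = ⟨n + 1, Nat.succ_pos _⟩ := PNat.coe_inj.mp h1
    subst hj
    have hL : patch x n (Fin.cons a g) ⟨n + 1, Nat.succ_pos _⟩ = a := by
      have h0 : (0 : ℕ) < d + 1 := Nat.succ_pos _
      have h3 := patch_mid (x := x) (n := n) (g := Fin.cons a g) 0 h0
      simpa using h3
    have hR : patch (Function.update x ⟨n + 1, Nat.succ_pos _⟩ a) (n + 1) g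
        ⟨n + 1, Nat.succ_pos _⟩ = a := by
      have h2 := patch_le (x := Function.update x ⟨n + 1, Nat.succ_pos _⟩ a) (n := n + 1)
        (g := g) (j := ⟨n + 1, Nat.succ_pos _⟩) (le_of_eq rfl)
      rw [h2]; exact Function.update_self _ _ _
    rw [hL, hR]
  · by_cases h2 : n + 1 < (j : ℕ) ∧ (j : ℕ) ≤ n + 1 + d
    · unfold patch
      rw [dif_pos (by omega), dif_pos (by omega)]
      have hlt : (j : ℕ) - n - 2 < d := by omega
      have h3 : (⟨(j : ℕ) - n - 1, by omega⟩ : Fin (d + 1))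
          = Fin.succ ⟨(j : ℕ) - n - 2, hlt⟩ := by
        apply Fin.ext; simp; omega
      rw [h3, Fin.cons_succ]
      congr 1
    · -- j ≤ n or j > n+1+d
      unfold patch
      rw [dif_neg (by omega), dif_neg (by omega)]
      exact (Function.update_of_ne (by intro habs; rw [habs] at h1; simp at h1) _ _).symm

lemma lam_patch_sum (hq : 2 ≤ (q : ℕ)) :
    ∀ (d n : ℕ) (x : ℕ+ → Fin m),
      lam q μ n x = ∑ g : Fin d → Fin m, lam q μ (n + d) (patch x n g) := by
  intro d
  induction d with
  | zero =>
    intro n x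
    rw [Finset.sum_congr rfl (fun g (_ : g ∈ Finset.univ) => by rw [patch_zero x n g])]
    simp
  | succ d ih =>
    intro n x
    rw [lam_succ q μ hq n x]
    have step : ∀ a : Fin m,
        lam q μ (n + 1) (Function.update x ⟨n + 1, Nat.succ_pos _⟩ a)
          = ∑ g : Fin d → Fin m, lam q μ (n + (d + 1)) (patch x n (Fin.cons a g)) := by
      intro a
      rw [ih (n + 1) (Function.update x ⟨n + 1, Nat.succ_pos _⟩ a)]
      apply Finset.sum_congr rfl
      intro g _
      rw [patch_cons]
      congr 1
      omega
    rw [Finset.sum_congr rfl (fun a (_ : a ∈ Finset.univ) => step a)]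
    have e1 : ∑ p : Fin m × (Fin d → Fin m),
        lam q μ (n + (d + 1)) (patch x n (Fin.cons p.1 p.2))
          = ∑ h : Fin (d + 1) → Fin m, lam q μ (n + (d + 1)) (patch x n h) :=
      Fintype.sum_equiv (Fin.consEquiv (fun _ => Fin m)) _ _ (fun p => rfl)
    exact (Fintype.sum_prod_type (f := fun p : Fin m × (Fin d → Fin m) =>
      lam q μ (n + (d + 1)) (patch x n (Fin.cons p.1 p.2)))).symm.trans e1

lemma lam_mono (hq : 2 ≤ (q : ℕ)) {n n' : ℕ} (h : n ≤ n') (x : ℕ+ → Fin m) :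
    lam q μ n' x ≤ lam q μ n x := by
  induction n' with
  | zero => have : n = 0 := by omega
            subst this; exact le_refl _
  | succ n' ih =>
    rcases Nat.lt_or_ge n (n' + 1) with h' | h'
    · have hle : lam q μ (n' + 1) x ≤ lam q μ n' x := by
        rw [lam_succ q μ hq n' x]
        have hx : x = Function.update x ⟨n' + 1, Nat.succ_pos _⟩ (x ⟨n' + 1, Nat.succ_pos _⟩) :=
          (Function.update_eq_self _ x).symm
        calc lam q μ (n' + 1) x
            = lam q μ (n' + 1) (Function.update x ⟨n' + 1, Nat.succ_pos _⟩
                (x ⟨n' + 1, Nat.succ_pos _⟩)) := by rw [← hx]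
          _ ≤ _ := Finset.single_le_sum (f := fun a : Fin m =>
              lam q μ (n' + 1) (Function.update x ⟨n' + 1, Nat.succ_pos _⟩ a))
              (fun _ _ => zero_le) (Finset.mem_univ _)
      exact le_trans hle (ih (by omega))
    · have : n = n' + 1 := by omega
      subst this; exact le_refl _

/-- a patched point agrees with any `z ∈ CylN n x` pattern -/
lemma patch_restrict (z x : ℕ+ → Fin m) (n d : ℕ)
    (hz : ∀ k : ℕ+, (k : ℕ) ≤ n → z k = x k) :
    ∀ k : ℕ+, (k : ℕ) ≤ n + d →
      patch x n (fun j : Fin d => z ⟨n + (j : ℕ) + 1, Nat.succ_pos _⟩) k = z k := by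
  intro k hk
  by_cases h1 : (k : ℕ) ≤ n
  · rw [patch_le h1]; exact (hz k h1).symm
  · have h2 : (k : ℕ) - n - 1 < d := by omega
    have h3 : k = ⟨n + ((k : ℕ) - n - 1) + 1, Nat.succ_pos _⟩ := by
      apply PNat.coe_inj.mp; simp; omega
    rw [h3, patch_mid ((k : ℕ) - n - 1) h2]

/-- **Finite covering bound.** -/
lemma lam_le_sum_of_cover (hq : 2 ≤ (q : ℕ)) {ι : Type*} (t : Finset ι)
    (nn : ι → ℕ) (xx : ι → ℕ+ → Fin m) (n : ℕ) (x : ℕ+ → Fin m)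
    (hcov : CylN n x ⊆ ⋃ j ∈ t, CylN (nn j) (xx j)) :
    lam q μ n x ≤ ∑ j ∈ t, lam q μ (nn j) (xx j) := by
  classical
  set D := (t.sup nn) with hD
  set N := n + D with hN
  set p : (Fin D → Fin m) → (ℕ+ → Fin m) := fun g => patch x n g with hp
  have hmem : ∀ g, p g ∈ CylN n x := fun g => mem_CylN_patch x n D g
  have hex : ∀ g : Fin D → Fin m, ∃ j ∈ t, p g ∈ CylN (nn j) (xx j) := by
    intro g
    have := hcov (hmem g)
    simpa using this
  choose jf hjf1 hjf2 using hex
  set B : ι → Finset (Fin D → Fin m) := fun j => Finset.univ.filter (fun g => jf g = j) with hB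
  have hpart : (Finset.univ : Finset (Fin D → Fin m)) = t.biUnion B := by
    ext g
    simp only [Finset.mem_univ, true_iff, Finset.mem_biUnion]
    exact ⟨jf g, hjf1 g, by simp [hB]⟩
  have hstep1 : lam q μ n x = ∑ g : Fin D → Fin m, lam q μ N (p g) :=
    lam_patch_sum q μ hq D n x
  have hdisj : (↑t : Set ι).PairwiseDisjoint B := by
    intro j1 _ j2 _ hne
    simp only [Finset.disjoint_left, hB, Finset.mem_filter]
    rintro g ⟨_, h1⟩ ⟨_, h2⟩
    exact hne (h1 ▸ h2 ▸ rfl)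
  have hstep2 : ∑ g : Fin D → Fin m, lam q μ N (p g)
      = ∑ j ∈ t, ∑ g ∈ B j, lam q μ N (p g) := by
    rw [← Finset.sum_biUnion hdisj, ← hpart]
  rw [hstep1, hstep2]
  apply Finset.sum_le_sum
  intro j hj
  -- fiberwise bound
  have hnnj : nn j ≤ N := by
    have : nn j ≤ D := Finset.le_sup hj
    omega
  set d' := N - nn j with hd'
  have hNd : nn j + d' = N := by omega
  have hrep : lam q μ (nn j) (xx j)
      = ∑ h : Fin d' → Fin m, lam q μ N (patch (xx j) (nn j) h) := by
    rw [lam_patch_sum q μ hq d' (nn j) (xx j), hNd]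
  set Φ : (Fin D → Fin m) → (Fin d' → Fin m) :=
    fun g => (fun k : Fin d' => p g ⟨nn j + (k : ℕ) + 1, Nat.succ_pos _⟩) with hΦ
  have hval : ∀ g ∈ B j, lam q μ N (patch (xx j) (nn j) (Φ g)) = lam q μ N (p g) := by
    intro g hg
    have hgj : jf g = j := by simpa [hB] using hg
    have hcyl : p g ∈ CylN (nn j) (xx j) := hgj ▸ hjf2 g
    exact lam_congr q μ (fun k hk => patch_restrict (p g) (xx j) (nn j) d' hcyl k (hNd ▸ hk))
  have hinj : Set.InjOn Φ (B j) := by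
    intro g1 hg1 g2 hg2 heq
    have hgj1 : jf g1 = j := by simpa [hB] using hg1
    have hgj2 : jf g2 = j := by simpa [hB] using hg2
    have hc1 : p g1 ∈ CylN (nn j) (xx j) := hgj1 ▸ hjf2 g1
    have hc2 : p g2 ∈ CylN (nn j) (xx j) := hgj2 ▸ hjf2 g2
    have hagree : ∀ k : ℕ+, (k : ℕ) ≤ N → p g1 k = p g2 k := by
      intro k hk
      by_cases h1 : (k : ℕ) ≤ nn j
      · rw [hc1 k h1, hc2 k h1]
      · have h2 : (k : ℕ) - nn j - 1 < d' := by omega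
        have h3 : k = ⟨nn j + ((k : ℕ) - nn j - 1) + 1, Nat.succ_pos _⟩ := by
          apply PNat.coe_inj.mp; simp; omega
        have := congrFun heq ⟨(k : ℕ) - nn j - 1, h2⟩
        simpa [hΦ, ← h3] using this
    funext k
    have hk1 : (n + (k : ℕ)) + 1 ≤ N := by
      have := k.isLt; omega
    have hthis := hagree ⟨n + (k : ℕ) + 1, Nat.succ_pos _⟩ (by simpa using hk1)
    have h5 : g1 ⟨(k : ℕ), k.isLt⟩ = g2 ⟨(k : ℕ), k.isLt⟩ := by
      rw [← patch_mid (x := x) (n := n) (g := g1) (k : ℕ) k.isLt,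
        ← patch_mid (x := x) (n := n) (g := g2) (k : ℕ) k.isLt]
      exact hthis
    simpa using h5
  calc ∑ g ∈ B j, lam q μ N (p g)
      = ∑ g ∈ B j, lam q μ N (patch (xx j) (nn j) (Φ g)) :=
        (Finset.sum_congr rfl (fun g hg => (hval g hg).symm))
    _ = ∑ h ∈ (B j).image Φ, lam q μ N (patch (xx j) (nn j) h) := by
        rw [Finset.sum_image (fun g1 h1 g2 h2 e => hinj h1 h2 e)]
    _ ≤ ∑ h : Fin d' → Fin m, lam q μ N (patch (xx j) (nn j) h) :=
        Finset.sum_le_sum_of_subset (Finset.subset_univ _)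
    _ = lam q μ (nn j) (xx j) := hrep.symm

/-- cylinders have a unique level when `2 ≤ m` -/
lemma le_of_CylN_subset (hm : 2 ≤ m) {n n' : ℕ} {x x' : ℕ+ → Fin m}
    (h : CylN n x ⊆ CylN n' x') : n' ≤ n := by
  by_contra hlt
  push_neg at hlt
  have : Nontrivial (Fin m) := Fin.nontrivial_iff_two_le.mpr hm
  obtain ⟨a, ha⟩ := exists_ne (x' ⟨n + 1, Nat.succ_pos _⟩)
  set t : ℕ+ := ⟨n + 1, Nat.succ_pos _⟩ with htdef
  have hy : Function.update x t a ∈ CylN n x := by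
    intro k hk
    apply Function.update_of_ne
    intro habs
    rw [habs] at hk
    simp [htdef] at hk
  have h2 := h hy t (by simp [htdef]; omega)
  rw [Function.update_self] at h2
  exact ha h2

lemma rep_unique (hm : 2 ≤ m) {n n' : ℕ} {x x' : ℕ+ → Fin m}
    (h : CylN n x = CylN n' x') : lam q μ n x = lam q μ n' x' := by
  have h1 : n' ≤ n := le_of_CylN_subset hm h.le
  have h2 : n ≤ n' := le_of_CylN_subset hm h.ge
  have hnn : n = n' := le_antisymm h2 h1
  subst hnn
  have h3 : x ∈ CylN n x' := h ▸ mem_CylN_self n x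
  exact lam_congr q μ (fun k hk => h3 k hk)

def cylFn (s : Set (ℕ+ → Fin m)) : ℝ≥0∞ :=
  ⨅ (n : ℕ) (x : ℕ+ → Fin m) (_ : s = CylN n x), lam q μ n x

def preFn (s : Set (ℕ+ → Fin m)) : ℝ≥0∞ := if s = ∅ then 0 else cylFn q μ s

lemma preFn_empty : preFn q μ (∅ : Set (ℕ+ → Fin m)) = 0 := if_pos rfl

lemma preFn_CylN (hm : 2 ≤ m) (n : ℕ) (x : ℕ+ → Fin m) :
    preFn q μ (CylN n x) = lam q μ n x := by
  unfold preFn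
  rw [if_neg (CylN_nonempty n x).ne_empty]
  apply le_antisymm
  · exact iInf_le_of_le n (iInf_le_of_le x (iInf_le _ rfl))
  · exact le_iInf fun n' => le_iInf fun x' => le_iInf fun h =>
      le_of_eq (rep_unique q μ hm h)

lemma preFn_top {s : Set (ℕ+ → Fin m)} (hne : s ≠ ∅)
    (hnc : ¬ ∃ (n : ℕ) (x : ℕ+ → Fin m), s = CylN n x) : preFn q μ s = ⊤ := by
  unfold preFn cylFn
  rw [if_neg hne]
  have h : ∀ (n' : ℕ) (x' : ℕ+ → Fin m),
      ⨅ (_ : s = CylN n' x'), lam q μ n' x' = ⊤ :=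
    fun n' x' => iInf_neg (fun h => hnc ⟨n', x', h⟩)
  simp [h]

def OM : OuterMeasure (ℕ+ → Fin m) := OuterMeasure.ofFunction (preFn q μ) (preFn_empty q μ)

lemma OM_le_preFn (s : Set (ℕ+ → Fin m)) : OM q μ s ≤ preFn q μ s :=
  OuterMeasure.ofFunction_le s

lemma OM_CylN (hm : 2 ≤ m) (hq : 2 ≤ (q : ℕ)) (n : ℕ) (x : ℕ+ → Fin m) :
    OM q μ (CylN n x) = lam q μ n x := by
  apply le_antisymm
  · exact le_trans (OM_le_preFn q μ _) (le_of_eq (preFn_CylN q μ hm n x))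
  · rw [OM, OuterMeasure.ofFunction_apply]
    refine le_iInf fun A => le_iInf fun hcov => ?_
    by_cases hbad : ∀ k : ℕ, A k = ∅ ∨ ∃ (n' : ℕ) (x' : ℕ+ → Fin m), A k = CylN n' x'
    · have x₀ : ℕ+ → Fin m := fun _ => ⟨0, by omega⟩
      have hch : ∀ k : ℕ, ∃ (n' : ℕ) (x' : ℕ+ → Fin m), A k ≠ ∅ → A k = CylN n' x' := by
        intro k
        rcases hbad k with h | ⟨n', x', h⟩
        · exact ⟨0, x₀, fun hne => absurd h hne⟩
        · exact ⟨n', x', fun _ => h⟩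
      choose nn xx hA using hch
      have hopen : ∀ k, IsOpen (A k) := by
        intro k
        rcases eq_or_ne (A k) ∅ with h | h
        · rw [h]; exact isOpen_empty
        · rw [hA k h]; exact isOpen_CylN _ _
      obtain ⟨t, ht⟩ := (isCompact_CylN n x).elim_finite_subcover A hopen hcov
      have hcov2 : CylN n x ⊆
          ⋃ k ∈ t.filter (fun k => A k ≠ ∅), CylN (nn k) (xx k) := by
        intro y hy
        have := ht hy
        simp only [Set.mem_iUnion] at this
        obtain ⟨k, hk, hyk⟩ := this
        have hne : A k ≠ ∅ := fun h0 => by rw [h0] at hyk; exact hyk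
        refine Set.mem_biUnion (Finset.mem_filter.mpr ⟨hk, hne⟩) ?_
        rw [← hA k hne]; exact hyk
      refine le_trans (lam_le_sum_of_cover q μ hq _ nn xx n x hcov2) ?_
      calc ∑ k ∈ t.filter (fun k => A k ≠ ∅), lam q μ (nn k) (xx k)
          = ∑ k ∈ t.filter (fun k => A k ≠ ∅), preFn q μ (A k) := by
            refine Finset.sum_congr rfl fun k hk => ?_
            rw [hA k (Finset.mem_filter.mp hk).2, preFn_CylN q μ hm]
        _ ≤ ∑' k, preFn q μ (A k) := ENNReal.sum_le_tsum _
    · push_neg at hbad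
      obtain ⟨k, hne, hnc⟩ := hbad
      refine le_trans ?_ (ENNReal.le_tsum k)
      rw [preFn_top q μ hne.ne_empty (by push_neg; exact hnc)]
      exact le_top

/-- key per-set inequality for Carathéodory measurability of cylinders -/
lemma piece (hm : 2 ≤ m) (hq : 2 ≤ (q : ℕ)) (n : ℕ) (x : ℕ+ → Fin m)
    (s : Set (ℕ+ → Fin m)) :
    OM q μ (s ∩ CylN n x) + OM q μ (s \ CylN n x) ≤ preFn q μ s := by
  rcases eq_or_ne s ∅ with rfl | hne
  · simp [preFn_empty]
  by_cases hcyl : ∃ (n' : ℕ) (x' : ℕ+ → Fin m), s = CylN n' x'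
  · obtain ⟨n', x', rfl⟩ := hcyl
    rw [preFn_CylN q μ hm]
    rcases le_or_gt n n' with h | h
    · rcases CylN_subset_or_disjoint h x x' with hsub | hdis
      · rw [Set.inter_eq_left.mpr hsub, Set.diff_eq_empty.mpr hsub]
        simpa using le_of_eq (OM_CylN q μ hm hq n' x')
      · have hd : CylN n' x' \ CylN n x = CylN n' x' := by
          ext y
          constructor
          · exact fun hy => hy.1
          · intro hy
            refine ⟨hy, fun hc => ?_⟩
            have h3 : y ∈ CylN n' x' ∩ CylN n x := ⟨hy, hc⟩
            rw [hdis] at h3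
            exact h3
        rw [hdis, hd]
        simpa using le_of_eq (OM_CylN q μ hm hq n' x')
    · -- split s into level-n children
      set d := n - n' with hd
      have hnd : n' + d = n := by omega
      set ch : (Fin d → Fin m) → Set (ℕ+ → Fin m) :=
        fun g => CylN (n' + d) (patch x' n' g) with hch
      have hmemch : ∀ z ∈ CylN n' x', z ∈ ch (fun j : Fin d => z ⟨n' + (j : ℕ) + 1, Nat.succ_pos _⟩) := by
        intro z hz k hk
        exact (patch_restrict z x' n' d hz k hk).symm
      have hdich : ∀ g : Fin d → Fin m, ch g ⊆ CylN n x ∨ ch g ∩ CylN n x = ∅ := by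
        intro g
        exact CylN_subset_or_disjoint (le_of_eq hnd.symm) x (patch x' n' g)
      set G₁ := Finset.univ.filter (fun g : Fin d → Fin m => ch g ⊆ CylN n x) with hG₁
      have hcov1 : CylN n' x' ∩ CylN n x ⊆ ⋃ g ∈ G₁, ch g := by
        rintro z ⟨hz1, hz2⟩
        set gz := fun j : Fin d => z ⟨n' + (j : ℕ) + 1, Nat.succ_pos _⟩ with hgz
        have hmem := hmemch z hz1
        have hin : ch gz ⊆ CylN n x := by
          rcases hdich gz with h' | h'
          · exact h'
          · exfalso
            have : z ∈ ch gz ∩ CylN n x := ⟨hmem, hz2⟩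
            rw [h'] at this
            exact this.elim
        exact Set.mem_biUnion (Finset.mem_filter.mpr ⟨Finset.mem_univ _, hin⟩) hmem
      have hcov2 : CylN n' x' \ CylN n x ⊆
          ⋃ g ∈ Finset.univ.filter (fun g : Fin d → Fin m => ¬ (ch g ⊆ CylN n x)), ch g := by
        rintro z ⟨hz1, hz2⟩
        set gz := fun j : Fin d => z ⟨n' + (j : ℕ) + 1, Nat.succ_pos _⟩ with hgz
        have hmem := hmemch z hz1
        have hnin : ¬ (ch gz ⊆ CylN n x) := fun habs => hz2 (habs hmem)
        exact Set.mem_biUnion (Finset.mem_filter.mpr ⟨Finset.mem_univ _, hnin⟩) hmem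
      have hb1 : OM q μ (CylN n' x' ∩ CylN n x) ≤ ∑ g ∈ G₁, lam q μ (n' + d) (patch x' n' g) := by
        refine le_trans (measure_mono hcov1) (le_trans (measure_biUnion_finset_le _ _) ?_)
        exact Finset.sum_le_sum fun g _ => le_of_eq (OM_CylN q μ hm hq _ _)
      have hb2 : OM q μ (CylN n' x' \ CylN n x) ≤
          ∑ g ∈ Finset.univ.filter (fun g : Fin d → Fin m => ¬ (ch g ⊆ CylN n x)),
            lam q μ (n' + d) (patch x' n' g) := by
        refine le_trans (measure_mono hcov2) (le_trans (measure_biUnion_finset_le _ _) ?_)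
        exact Finset.sum_le_sum fun g _ => le_of_eq (OM_CylN q μ hm hq _ _)
      refine le_trans (add_le_add hb1 hb2) ?_
      rw [Finset.sum_filter_add_sum_filter_not]
      exact le_of_eq (lam_patch_sum q μ hq d n' x').symm
  · rw [preFn_top q μ hne hcyl]
    exact le_top

lemma OM_caratheodory (hm : 2 ≤ m) (hq : 2 ≤ (q : ℕ)) (n : ℕ) (x : ℕ+ → Fin m) :
    MeasurableSet[(OM q μ).caratheodory] (CylN n x) := by
  rw [OuterMeasure.isCaratheodory_iff_le]
  intro t
  have key : ∀ (A : ℕ → Set (ℕ+ → Fin m)), t ⊆ Set.iUnion A →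
      OM q μ (t ∩ CylN n x) + OM q μ (t \ CylN n x) ≤ ∑' k, preFn q μ (A k) := by
    intro A hA
    have h1 : OM q μ (t ∩ CylN n x) ≤ ∑' k, OM q μ (A k ∩ CylN n x) := by
      refine le_trans (measure_mono ?_) (measure_iUnion_le _)
      intro y ⟨hy1, hy2⟩
      obtain ⟨k, hk⟩ := Set.mem_iUnion.mp (hA hy1)
      exact Set.mem_iUnion.mpr ⟨k, hk, hy2⟩
    have h2 : OM q μ (t \ CylN n x) ≤ ∑' k, OM q μ (A k \ CylN n x) := by
      refine le_trans (measure_mono ?_) (measure_iUnion_le _)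
      intro y ⟨hy1, hy2⟩
      obtain ⟨k, hk⟩ := Set.mem_iUnion.mp (hA hy1)
      exact Set.mem_iUnion.mpr ⟨k, hk, hy2⟩
    calc OM q μ (t ∩ CylN n x) + OM q μ (t \ CylN n x)
        ≤ ∑' k, OM q μ (A k ∩ CylN n x) + ∑' k, OM q μ (A k \ CylN n x) := add_le_add h1 h2
      _ = ∑' k, (OM q μ (A k ∩ CylN n x) + OM q μ (A k \ CylN n x)) := ENNReal.tsum_add.symm
      _ ≤ ∑' k, preFn q μ (A k) := ENNReal.tsum_le_tsum fun k => piece q μ hm hq n x (A k)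
  conv_rhs => rw [OM, OuterMeasure.ofFunction_apply]
  exact le_iInf fun A => le_iInf fun hA => key A hA


lemma CylJn_eq_CylJ (n i : ℕ+) (x : ℕ+ → Fin m) :
    CylJn q ((n : ℕ)) i x = CylJ q n i x := by
  ext y
  simp only [CylJn, CylJ, Set.mem_setOf_eq]
  constructor <;> intro h ℓ hℓ
  · exact h ℓ ((PNat.coe_le_coe _ _).mpr hℓ)
  · exact h ℓ ((PNat.coe_le_coe _ _).mp hℓ)

lemma pi_le_of_cyl (hm0 : 0 < m) (M : MeasurableSpace (ℕ+ → Fin m))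
    (h : ∀ (n : ℕ) (x : ℕ+ → Fin m), MeasurableSet[M] (CylN n x)) :
    MeasurableSpace.pi ≤ M := by
  set x₀ : ℕ+ → Fin m := fun _ => ⟨0, hm0⟩ with hx₀
  have hsing : ∀ (k : ℕ+) (a : Fin m),
      MeasurableSet[M] ((fun y : ℕ+ → Fin m => y k) ⁻¹' {a}) := by
    intro k a
    have hrep : (fun y : ℕ+ → Fin m => y k) ⁻¹' {a}
        = ⋃ (g : Fin (k : ℕ) → Fin m) (_ : patch x₀ 0 g k = a),
            CylN (k : ℕ) (patch x₀ 0 g) := by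
      ext y
      simp only [Set.mem_preimage, Set.mem_singleton_iff, Set.mem_iUnion]
      constructor
      · intro hy
        set g : Fin (k : ℕ) → Fin m := fun j => y ⟨0 + (j : ℕ) + 1, Nat.succ_pos _⟩ with hg
        have hag : ∀ k' : ℕ+, (k' : ℕ) ≤ 0 + (k : ℕ) → patch x₀ 0 g k' = y k' :=
          patch_restrict y x₀ 0 (k : ℕ) (fun k' hk' => absurd hk' (by have := k'.pos; omega))
        refine ⟨g, ?_, ?_⟩
        · rw [hag k (by omega)]; exact hy
        · intro k' hk'
          exact (hag k' (by omega)).symm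
      · rintro ⟨g, hga, hy⟩
        rw [hy k (le_refl _), hga]
    rw [hrep]
    exact MeasurableSet.iUnion fun g => MeasurableSet.iUnion fun _ => h _ _
  have hmeas : @Measurable _ _ M MeasurableSpace.pi (fun y : ℕ+ → Fin m => y) := by
    apply measurable_pi_lambda
    intro k
    apply measurable_to_countable'
    intro a
    exact hsing k a
  intro s hs
  exact hmeas hs

lemma closed_prefix {Ω : Set (ℕ+ → Fin m)} (hcl : IsClosed Ω) (w : ℕ+ → Fin m)
    (h : ∀ n : ℕ, ∃ z ∈ Ω, ∀ k : ℕ+, (k : ℕ) ≤ n → z k = w k) : w ∈ Ω := by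
  choose z hzΩ hz using h
  have ht : Filter.Tendsto z Filter.atTop (nhds w) := by
    rw [tendsto_pi_nhds]
    intro k
    apply tendsto_nhds_of_eventually_eq
    filter_upwards [Filter.eventually_ge_atTop (k : ℕ)] with n hn
    exact hz n k hn
  exact hcl.mem_of_tendsto ht (Filter.Eventually.of_forall hzΩ)

end Stmt10Aux

/-- **Construction (2.4).** There is a unique Borel probability measure `P_μ` with
`P_μ[u] = ∏_{i ≤ |u|, q ∤ i} μ[u|J_i]` on cylinders, and it is supported on `X_Ω`. -/
theorem stmt10 (m : ℕ) (hm : 2 ≤ m) (q : ℕ+) (hq : 2 ≤ (q : ℕ))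
    (Ω : Set (ℕ+ → Fin m)) (hne : Ω.Nonempty) (hcl : IsClosed Ω)
    (μ : Measure (ℕ+ → Fin m)) [IsProbabilityMeasure μ] (hμΩ : μ Ω = 1) :
    ∃ P : Measure (ℕ+ → Fin m),
      IsProbabilityMeasure P ∧ ProdProp q μ P ∧ P (XOm q Ω) = 1 ∧
      ∀ P' : Measure (ℕ+ → Fin m), IsProbabilityMeasure P' → ProdProp q μ P' → P' = P := by
  classical
  have hm0 : 0 < m := by omega
  have hΩm : MeasurableSet Ω := hcl.measurableSet
  have hΩc : μ Ωᶜ = 0 := by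
    have h1 := measure_compl hΩm (measure_ne_top μ Ω)
    rw [hμΩ, measure_univ] at h1
    simpa using h1
  set x₀ : ℕ+ → Fin m := fun _ => ⟨0, hm0⟩ with hx₀
  have hle : (inferInstance : MeasurableSpace (ℕ+ → Fin m)) ≤ (Stmt10Aux.OM q μ).caratheodory :=
    Stmt10Aux.pi_le_of_cyl hm0 _ (fun n x => Stmt10Aux.OM_caratheodory q μ hm hq n x)
  set P : Measure (ℕ+ → Fin m) := (Stmt10Aux.OM q μ).toMeasure hle with hPdef
  have hPc : ∀ (n : ℕ) (x : ℕ+ → Fin m), P (CylN n x) = Stmt10Aux.lam q μ n x := by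
    intro n x
    rw [hPdef, toMeasure_apply _ _ (Stmt10Aux.measurableSet_CylN n x)]
    exact Stmt10Aux.OM_CylN q μ hm hq n x
  have huniv0 : ∀ x : ℕ+ → Fin m, CylN (m := m) 0 x = Set.univ := by
    intro x
    ext y
    simp only [CylN, Set.mem_setOf_eq, Set.mem_univ, iff_true]
    intro k hk
    exact absurd hk (by have := k.pos; omega)
  have hprob : IsProbabilityMeasure P := by
    constructor
    rw [← huniv0 x₀, hPc 0 x₀, Stmt10Aux.lam_zero q μ x₀]
  haveI := hprob
  have hprod : ProdProp q μ P := by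
    intro n x
    rw [hPc (n : ℕ) x, Stmt10Aux.lam_eq_prod q μ x n (le_refl _)]
    exact Finset.prod_congr rfl fun i _ => by rw [Stmt10Aux.CylJn_eq_CylJ]
  have huniq : ∀ P' : Measure (ℕ+ → Fin m),
      IsProbabilityMeasure P' → ProdProp q μ P' → P' = P := by
    intro P' hP'prob hP'prod
    haveI := hP'prob
    set S : Set (Set (ℕ+ → Fin m)) := {s | ∃ (n : ℕ) (x : ℕ+ → Fin m), s = CylN n x} with hS
    have hgen : (inferInstance : MeasurableSpace (ℕ+ → Fin m))
        = MeasurableSpace.generateFrom S := by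
      apply le_antisymm
      · exact Stmt10Aux.pi_le_of_cyl hm0 _
          (fun n x => MeasurableSpace.measurableSet_generateFrom
            (show CylN n x ∈ S from ⟨n, x, rfl⟩))
      · apply MeasurableSpace.generateFrom_le
        rintro s ⟨n, x, rfl⟩
        exact Stmt10Aux.measurableSet_CylN n x
    have hpi : IsPiSystem S := by
      rintro s ⟨n, x, rfl⟩ t ⟨n', x', rfl⟩ hne2
      rcases le_total n n' with h | h
      · rcases Stmt10Aux.CylN_subset_or_disjoint h x x' with hsub | hdis
        · exact ⟨n', x', Set.inter_eq_right.mpr hsub⟩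
        · exfalso
          rw [Set.inter_comm] at hne2
          rw [hdis] at hne2
          exact Set.not_nonempty_empty hne2
      · rcases Stmt10Aux.CylN_subset_or_disjoint h x' x with hsub | hdis
        · exact ⟨n, x, Set.inter_eq_left.mpr hsub⟩
        · exfalso
          rw [hdis] at hne2
          exact Set.not_nonempty_empty hne2
    have hagree : ∀ s ∈ S, P' s = P s := by
      rintro s ⟨n, x, rfl⟩
      cases n with
      | zero =>
        rw [huniv0 x, measure_univ, measure_univ]
      | succ n =>
        have h1 := hP'prod ⟨n + 1, Nat.succ_pos _⟩ x
        have h2 := hprod ⟨n + 1, Nat.succ_pos _⟩ x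
        exact h1.trans h2.symm
    exact MeasureTheory.ext_of_generate_finite S hgen hpi hagree
      (by rw [measure_univ, measure_univ])
  have hXom : P (XOm q Ω) = 1 := by
    set T : ℕ+ → ℕ → Set (ℕ+ → Fin m) := fun i n =>
      {y | ¬ ∃ z ∈ Ω, ∀ k : ℕ+, (k : ℕ) ≤ n → z k = RestrJ q y i k} with hT
    have hT0 : ∀ i, T i 0 = ∅ := by
      intro i
      ext y
      simp only [hT, Set.mem_setOf_eq, Set.mem_empty_iff_false, iff_false, not_not]
      obtain ⟨z, hz⟩ := hne
      exact ⟨z, hz, fun k hk => absurd hk (by have := k.pos; omega)⟩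
    have hTnull : ∀ (i : ℕ+), ¬ q ∣ i → ∀ n : ℕ, P (T i n) = 0 := by
      intro i hqi n
      cases n with
      | zero => rw [hT0]; exact measure_empty
      | succ n =>
        set M : ℕ := (q : ℕ) ^ n * (i : ℕ) with hM
        have hiM : (i : ℕ) ≤ M := Nat.le_mul_of_pos_left _ (by positivity)
        have hcoord : ∀ (k : ℕ+), (k : ℕ) ≤ n + 1 →
            ((q ^ ((k : ℕ) - 1) * i : ℕ+) : ℕ) ≤ M := by
          intro k hk
          rw [PNat.mul_coe, PNat.pow_coe, hM]
          have h1 : (q : ℕ) ^ ((k : ℕ) - 1) ≤ (q : ℕ) ^ n :=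
            Nat.pow_le_pow_right (by omega) (by have := k.pos; omega)
          exact Nat.mul_le_mul_right _ h1
        have hTloc : ∀ y y' : ℕ+ → Fin m, (∀ k : ℕ+, (k : ℕ) ≤ M → y k = y' k) →
            y ∈ T i (n + 1) → y' ∈ T i (n + 1) := by
          intro y y' hyy hy
          simp only [hT, Set.mem_setOf_eq] at hy ⊢
          rintro ⟨z, hz1, hz2⟩
          apply hy
          refine ⟨z, hz1, fun k hk => ?_⟩
          rw [hz2 k hk]
          show RestrJ q y' i k = RestrJ q y i k
          exact (hyy _ (hcoord k hk)).symm
        have hTsub : T i (n + 1) ⊆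
            ⋃ g ∈ Finset.univ.filter
              (fun g : Fin M → Fin m => Stmt10Aux.patch x₀ 0 g ∈ T i (n + 1)),
              CylN M (Stmt10Aux.patch x₀ 0 g) := by
          intro y hy
          set g : Fin M → Fin m := fun j => y ⟨0 + (j : ℕ) + 1, Nat.succ_pos _⟩ with hgdef
          have hag : ∀ k' : ℕ+, (k' : ℕ) ≤ 0 + M → Stmt10Aux.patch x₀ 0 g k' = y k' :=
            Stmt10Aux.patch_restrict y x₀ 0 M
              (fun k' hk' => absurd hk' (by have := k'.pos; omega))
          have hmemT : Stmt10Aux.patch x₀ 0 g ∈ T i (n + 1) :=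
            hTloc y _ (fun k hk => (hag k (by omega)).symm) hy
          refine Set.mem_biUnion (Finset.mem_filter.mpr ⟨Finset.mem_univ _, hmemT⟩) ?_
          intro k hk
          exact (hag k (by omega)).symm
        have hzero : ∀ g : Fin M → Fin m, Stmt10Aux.patch x₀ 0 g ∈ T i (n + 1) →
            Stmt10Aux.lam q μ M (Stmt10Aux.patch x₀ 0 g) = 0 := by
          intro g hg
          have himem : i ∈ (Finset.Icc 1 ⟨M + 1, Nat.succ_pos _⟩).filter
              (fun j : ℕ+ => ¬ q ∣ j) := by
            refine Finset.mem_filter.mpr ⟨Finset.mem_Icc.mpr ⟨i.one_le, ?_⟩, hqi⟩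
            apply (PNat.coe_le_coe _ _).mp
            show (i : ℕ) ≤ M + 1
            omega
          unfold Stmt10Aux.lam
          apply Finset.prod_eq_zero himem
          have hdisj : Stmt10Aux.CylJn q M i (Stmt10Aux.patch x₀ 0 g) ⊆ Ωᶜ := by
            intro w hw
            simp only [Set.mem_compl_iff]
            intro hwΩ
            apply hg
            refine ⟨w, hwΩ, fun k hk => ?_⟩
            have h2 := hw ((k : ℕ) - 1) (hcoord k hk)
            have hkeq : (⟨(k : ℕ) - 1 + 1, Nat.succ_pos _⟩ : ℕ+) = k := by
              apply PNat.coe_inj.mp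
              have := k.pos
              simp
              omega
            rw [hkeq] at h2
            exact h2
          exact measure_mono_null hdisj hΩc
        apply le_antisymm _ zero_le
        refine le_trans (measure_mono hTsub) (le_trans (measure_biUnion_finset_le _ _) ?_)
        have hz : ∀ g ∈ Finset.univ.filter
            (fun g : Fin M → Fin m => Stmt10Aux.patch x₀ 0 g ∈ T i (n + 1)),
            P (CylN M (Stmt10Aux.patch x₀ 0 g)) = 0 := by
          intro g hg
          rw [hPc]
          exact hzero g (Finset.mem_filter.mp hg).2
        rw [Finset.sum_congr rfl hz]
        simp
    have hsub1 : (XOm q Ω)ᶜ ⊆ ⋃ (p : ℕ+ × ℕ), (if ¬ q ∣ p.1 then T p.1 p.2 else ∅) := by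
      intro y hy
      simp only [XOm, Set.mem_compl_iff, Set.mem_setOf_eq] at hy
      push_neg at hy
      obtain ⟨i, hqi, hyi⟩ := hy
      have hn : ∃ n : ℕ, y ∈ T i n := by
        by_contra hc
        push_neg at hc
        apply hyi
        apply Stmt10Aux.closed_prefix hcl
        intro n
        have h3 := hc n
        simp only [hT, Set.mem_setOf_eq, not_not] at h3
        exact h3
      obtain ⟨n, hn⟩ := hn
      refine Set.mem_iUnion.mpr ⟨(i, n), ?_⟩
      rw [if_pos hqi]
      exact hn
    have hnull : P ((XOm q Ω)ᶜ) = 0 := by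
      apply le_antisymm _ zero_le
      refine le_trans (measure_mono hsub1) (le_trans (measure_iUnion_le _) ?_)
      have hz : ∀ p : ℕ+ × ℕ, P (if ¬ q ∣ p.1 then T p.1 p.2 else ∅) = 0 := by
        rintro ⟨i, n⟩
        by_cases hqi : ¬ q ∣ i
        · rw [if_pos hqi]; exact hTnull i hqi n
        · rw [if_neg hqi]; exact measure_empty
      refine le_of_eq ?_
      rw [tsum_congr hz]
      simp
    have hXmeas : MeasurableSet (XOm q Ω) := by
      have hrep : XOm q Ω = ⋂ (i : ℕ+) (_ : ¬ q ∣ i), (fun y => RestrJ q y i) ⁻¹' Ω := by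
        ext y
        simp only [XOm, Set.mem_setOf_eq, Set.mem_iInter, Set.mem_preimage]
      rw [hrep]
      refine MeasurableSet.iInter fun i => MeasurableSet.iInter fun _ => ?_
      exact (measurable_pi_lambda _ (fun k => measurable_pi_apply _)) hΩm
    exact (prob_compl_eq_zero_iff hXmeas).mp hnull
  exact ⟨P, hprob, hprod, hXom, huniq⟩
end
end

section
/- Let m ≥ 2, let q ≥ 2 be an integer, and let Ω be a nonempty closed subset of Σ_m. Let t be the unique [1, m^{1/(q-1)}]-valued solution of t(u)^q = Σ_{j : uj ∈ Pref(Ω)} t(uj) on the tree of prefixes of Ω. Then there is a unique Borel probability measure μ on Ω whose cylinder values are μ[u₁…u_k] = ∏_{j=1}^k t(u₁…u_j) / t(u₁…u_{j-1})^q for every u ∈ Pref_k(Ω) and every k ≥ 1, and this μ is the unique measure attaining max{s(Ω,ν) : ν a Borel probability measure on Ω}. -/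
open scoped Classical ENNReal
open Filter MeasureTheory Topology

noncomputable section

namespace KPS

variable {m : ℕ}

lemma begins_nil (x : ℕ+ → Fin m) : Begins x ([] : List (Fin m)) := fun j => j.elim0

lemma cyl_nil : Cyl ([] : List (Fin m)) = Set.univ := by
  ext x; simp [Cyl, begins_nil]

lemma begins_ofFn {k : ℕ} (x : ℕ+ → Fin m) (u : Fin k → Fin m) :
    Begins x (List.ofFn u) ↔ ∀ i : Fin k, x ⟨(i : ℕ) + 1, Nat.succ_pos _⟩ = u i := by
  constructor
  · intro h i
    have := h (Fin.cast (List.length_ofFn (f := u)).symm i)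
    simpa [List.get_ofFn] using this
  · intro h j
    have := h (Fin.cast (List.length_ofFn (f := u)) j)
    simpa [List.get_ofFn, Fin.cast] using this

lemma ofFn_snoc {k : ℕ} (u : Fin k → Fin m) (j : Fin m) :
    List.ofFn (Fin.snoc u j) = List.ofFn u ++ [j] := by
  rw [List.ofFn_succ']
  simp [Fin.snoc_castSucc, List.concat_eq_append]

lemma begins_append_left {x : ℕ+ → Fin m} {u v : List (Fin m)}
    (h : Begins x (u ++ v)) : Begins x u := by
  intro j
  have hj : (j : ℕ) < (u ++ v).length := by
    simp only [List.length_append]; omega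
  have := h ⟨j, hj⟩
  simpa [List.getElem_append, j.isLt] using this

lemma measurableSet_cyl (u : List (Fin m)) : MeasurableSet (Cyl u) := by
  have : Cyl u = ⋂ j : Fin u.length,
      {x : ℕ+ → Fin m | x ⟨(j : ℕ) + 1, Nat.succ_pos _⟩ = u.get j} := by
    ext x; simp [Cyl, Begins, Set.mem_iInter]
  rw [this]
  refine MeasurableSet.iInter fun j => ?_
  have : {x : ℕ+ → Fin m | x ⟨(j : ℕ) + 1, Nat.succ_pos _⟩ = u.get j}
      = (fun x : ℕ+ → Fin m => x ⟨(j : ℕ) + 1, Nat.succ_pos _⟩) ⁻¹' {u.get j} := rfl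
  rw [this]
  exact (measurable_pi_apply _) (measurableSet_singleton (u.get j))

lemma begins_self {k : ℕ} (x : ℕ+ → Fin m) :
    Begins x (List.ofFn (fun i : Fin k => x ⟨(i : ℕ) + 1, Nat.succ_pos _⟩)) :=
  (begins_ofFn x _).2 fun _ => rfl

lemma begins_ofFn_unique {k : ℕ} {x : ℕ+ → Fin m} {u : Fin k → Fin m}
    (h : Begins x (List.ofFn u)) : u = fun i : Fin k => x ⟨(i : ℕ) + 1, Nat.succ_pos _⟩ := by
  funext i; exact ((begins_ofFn x u).1 h i).symm

lemma cyl_disjoint {k : ℕ} {u v : Fin k → Fin m} (h : u ≠ v) :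
    Disjoint (Cyl (List.ofFn u)) (Cyl (List.ofFn v)) := by
  rw [Set.disjoint_left]
  intro x hu hv
  exact h ((begins_ofFn_unique hu).trans (begins_ofFn_unique hv).symm)

lemma cyl_succ {k : ℕ} (u : Fin k → Fin m) :
    Cyl (List.ofFn u) = ⋃ j : Fin m, Cyl (List.ofFn (Fin.snoc u j)) := by
  ext x
  simp only [Set.mem_iUnion, Cyl, Set.mem_setOf_eq]
  constructor
  · intro h
    refine ⟨x ⟨(k : ℕ) + 1, Nat.succ_pos _⟩, ?_⟩
    rw [begins_ofFn] at h ⊢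
    intro i
    refine Fin.lastCases ?_ ?_ i
    · simp [Fin.snoc_last]
    · intro i'; simpa [Fin.snoc_castSucc] using h i'
  · rintro ⟨j, h⟩
    rw [ofFn_snoc] at h
    exact begins_append_left h

lemma mem_pref_of_append {Ω : Set (ℕ+ → Fin m)} {u v : List (Fin m)}
    (h : u ++ v ∈ Pref Ω) : u ∈ Pref Ω := by
  obtain ⟨x, hx, hb⟩ := h
  exact ⟨x, hx, begins_append_left hb⟩

end KPS
namespace KPS

variable {m : ℕ} (q : ℕ+) (Ω : Set (ℕ+ → Fin m)) (t : List (Fin m) → ℝ)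

/-- weight of a word: the prescribed cylinder measure. -/
def w (u : List (Fin m)) : ℝ :=
  if u ∈ Pref Ω then
    ∏ j ∈ Finset.range u.length, t (u.take (j + 1)) / t (u.take j) ^ (q : ℕ)
  else 0

variable {q Ω t}

section basic
variable (hq : 2 ≤ (q : ℕ)) (hne : Ω.Nonempty) (ht : TSol q Ω t)
include ht

lemma t_one_le {u : List (Fin m)} (hu : u ∈ Pref Ω) : 1 ≤ t u := (ht u hu).1.1

lemma t_pos {u : List (Fin m)} (hu : u ∈ Pref Ω) : 0 < t u :=
  lt_of_lt_of_le one_pos (t_one_le ht hu)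

omit ht in
lemma mem_pref_take {u : List (Fin m)} (hu : u ∈ Pref Ω) (i : ℕ) : u.take i ∈ Pref Ω := by
  have : u.take i ++ u.drop i ∈ Pref Ω := by rwa [List.take_append_drop]
  exact mem_pref_of_append this

include hne
omit ht in
lemma nil_mem_pref : ([] : List (Fin m)) ∈ Pref Ω := by
  obtain ⟨x, hx⟩ := hne
  exact ⟨x, hx, begins_nil x⟩

lemma w_nil : w q Ω t ([] : List (Fin m)) = 1 := by
  rw [w, if_pos (nil_mem_pref hne)]
  simp

omit hne

lemma w_nonneg (u : List (Fin m)) : 0 ≤ w q Ω t u := by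
  rw [w]
  split_ifs with h
  · refine Finset.prod_nonneg fun j _ => div_nonneg ?_ ?_
    · exact le_of_lt (t_pos ht (mem_pref_take h _))
    · exact pow_nonneg (le_of_lt (t_pos ht (mem_pref_take h _))) _
  · exact le_rfl

lemma w_pos {u : List (Fin m)} (hu : u ∈ Pref Ω) : 0 < w q Ω t u := by
  rw [w, if_pos hu]
  refine Finset.prod_pos fun j _ => div_pos (t_pos ht (mem_pref_take hu _))
    (pow_pos (t_pos ht (mem_pref_take hu _)) _)

omit ht in
lemma w_child_of_mem {u : List (Fin m)} {j : Fin m} (hj : u ++ [j] ∈ Pref Ω) :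
    w q Ω t (u ++ [j]) = w q Ω t u * (t (u ++ [j]) / t u ^ (q : ℕ)) := by
  have hu : u ∈ Pref Ω := mem_pref_of_append hj
  rw [w, if_pos hj, w, if_pos hu]
  have hlen : (u ++ [j]).length = u.length + 1 := by simp
  rw [hlen, Finset.prod_range_succ]
  congr 1
  · refine Finset.prod_congr rfl fun i hi => ?_
    have hi' : i < u.length := Finset.mem_range.1 hi
    rw [List.take_append_of_le_length (by omega), List.take_append_of_le_length (by omega)]
  · rw [List.take_append_of_le_length le_rfl, List.take_length,
      show u.length + 1 = (u ++ [j]).length from hlen.symm, List.take_length]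

lemma w_child (u : List (Fin m)) (j : Fin m) :
    w q Ω t (u ++ [j]) =
      w q Ω t u * (if u ++ [j] ∈ Pref Ω then t (u ++ [j]) / t u ^ (q : ℕ) else 0) := by
  by_cases hj : u ++ [j] ∈ Pref Ω
  · rw [if_pos hj, w_child_of_mem hj]
  · rw [if_neg hj, mul_zero, w, if_neg hj]

lemma w_sum_child (u : List (Fin m)) :
    ∑ j : Fin m, w q Ω t (u ++ [j]) = w q Ω t u := by
  by_cases hu : u ∈ Pref Ω
  · have htq := (ht u hu).2
    have ht0 : (t u : ℝ) ^ (q : ℕ) ≠ 0 := pow_ne_zero _ (ne_of_gt (t_pos ht hu))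
    calc ∑ j : Fin m, w q Ω t (u ++ [j])
        = ∑ j : Fin m, w q Ω t u * (if u ++ [j] ∈ Pref Ω then t (u ++ [j]) / t u ^ (q : ℕ) else 0) := by
          refine Finset.sum_congr rfl fun j _ => w_child ht u j
      _ = w q Ω t u * ((∑ j ∈ Finset.univ.filter (fun j : Fin m => u ++ [j] ∈ Pref Ω),
            t (u ++ [j])) / t u ^ (q : ℕ)) := by
          rw [← Finset.mul_sum]
          congr 1
          rw [Finset.sum_div, Finset.sum_filter]
      _ = w q Ω t u := by rw [← htq, div_self ht0, mul_one]
  · have : ∀ j : Fin m, w q Ω t (u ++ [j]) = 0 := by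
      intro j
      rw [w, if_neg]
      intro hj; exact hu (mem_pref_of_append hj)
    rw [Finset.sum_congr rfl fun j _ => this j, w, if_neg hu]
    simp

end basic

end KPS
namespace KPS

set_option linter.unusedSectionVars false

variable {m : ℕ}

section defs
variable (q : ℕ+) (Ω : Set (ℕ+ → Fin m)) (t : List (Fin m) → ℝ)

/-- partial sums of children weights. -/
def S (u : List (Fin m)) (n : ℕ) : ℝ :=
  ∑ j ∈ Finset.univ.filter (fun j : Fin m => (j : ℕ) < n), w q Ω t (u ++ [j])

/-- left endpoint of the interval of a word. -/
def A : (k : ℕ) → (Fin k → Fin m) → ℝ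
  | 0, _ => 0
  | (k+1), u => A k (Fin.init u) + S q Ω t (List.ofFn (Fin.init u)) (u (Fin.last k) : ℕ)

/-- digit selection for the coding map. -/
def dig [NeZero m] (k : ℕ) (u : Fin k → Fin m) (r : ℝ) : Fin m :=
  ⟨Nat.findGreatest (fun n => A q Ω t k u + S q Ω t (List.ofFn u) n ≤ r) (m - 1),
   lt_of_le_of_lt (Nat.findGreatest_le _) (by have := NeZero.pos m; omega)⟩

/-- finite-level coding maps. -/
def U [NeZero m] : (k : ℕ) → ℝ → (Fin k → Fin m)
  | 0, _ => fun i => i.elim0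
  | (k+1), r => Fin.snoc (U k r) (dig q Ω t k (U k r) r)

/-- the coding map `[0,1) → Σ_m`. -/
def Phi [NeZero m] : ℝ → (ℕ+ → Fin m) := fun r k =>
  U q Ω t (k : ℕ) r ⟨(k : ℕ) - 1, by have := k.pos; omega⟩

/-- the tree (Markov) measure. -/
def mu0 [NeZero m] : Measure (ℕ+ → Fin m) :=
  Measure.map (Phi q Ω t) (volume.restrict (Set.Ico (0:ℝ) 1))

/-- the equivalence splitting off the last digit. -/
def snocEquiv (k : ℕ) : ((Fin k → Fin m) × Fin m) ≃ (Fin (k+1) → Fin m) where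
  toFun p := Fin.snoc p.1 p.2
  invFun v := (Fin.init v, v (Fin.last k))
  left_inv p := by simp [Fin.init_snoc, Fin.snoc_last]
  right_inv v := by simp [Fin.snoc_init_self]

end defs

lemma sum_snoc {M : Type*} [AddCommMonoid M] {k : ℕ} (f : (Fin (k+1) → Fin m) → M) :
    ∑ v : Fin (k+1) → Fin m, f v = ∑ u : Fin k → Fin m, ∑ j : Fin m, f (Fin.snoc u j) := by
  rw [← Fintype.sum_prod_type (fun p : (Fin k → Fin m) × Fin m => f (Fin.snoc p.1 p.2))]
  exact (Fintype.sum_equiv (snocEquiv k) _ _ fun p => rfl).symm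

lemma ofFn_init_last {k : ℕ} (u : Fin (k+1) → Fin m) :
    List.ofFn u = List.ofFn (Fin.init u) ++ [u (Fin.last k)] := by
  conv_lhs => rw [← Fin.snoc_init_self u]
  rw [ofFn_snoc]

variable {q : ℕ+} {Ω : Set (ℕ+ → Fin m)} {t : List (Fin m) → ℝ}
variable (hne : Ω.Nonempty) (ht : TSol q Ω t)
include ht

lemma w_total (hne : Ω.Nonempty) : ∀ k : ℕ,
    ∑ u : Fin k → Fin m, w q Ω t (List.ofFn u) = 1 := by
  intro k
  induction k with
  | zero =>
    rw [Fintype.sum_subsingleton _ (fun i : Fin 0 => i.elim0)]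
    simp [List.ofFn_zero, w_nil hne ht]
  | succ k IH =>
    rw [sum_snoc]
    calc ∑ u : Fin k → Fin m, ∑ j : Fin m, w q Ω t (List.ofFn (Fin.snoc u j))
        = ∑ u : Fin k → Fin m, w q Ω t (List.ofFn u) := by
          refine Finset.sum_congr rfl fun u _ => ?_
          rw [show (∑ j : Fin m, w q Ω t (List.ofFn (Fin.snoc u j)))
              = ∑ j : Fin m, w q Ω t (List.ofFn u ++ [j]) from
            Finset.sum_congr rfl fun j _ => by rw [ofFn_snoc]]
          exact w_sum_child ht _
      _ = 1 := IH

lemma S_zero (u : List (Fin m)) : S q Ω t u 0 = 0 := by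
  simp [S]

lemma S_nonneg (u : List (Fin m)) (n : ℕ) : 0 ≤ S q Ω t u n :=
  Finset.sum_nonneg fun j _ => w_nonneg ht _

lemma S_mono (u : List (Fin m)) {a b : ℕ} (hab : a ≤ b) : S q Ω t u a ≤ S q Ω t u b := by
  refine Finset.sum_le_sum_of_subset_of_nonneg ?_ fun j _ _ => w_nonneg ht _
  intro j hj
  simp only [Finset.mem_filter, Finset.mem_univ, true_and] at hj ⊢
  omega

lemma S_total (u : List (Fin m)) : S q Ω t u m = w q Ω t u := by
  rw [S, Finset.filter_true_of_mem (fun j _ => j.isLt), ← w_sum_child ht u]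

lemma S_succ (u : List (Fin m)) {n : ℕ} (hn : n < m) :
    S q Ω t u (n + 1) = S q Ω t u n + w q Ω t (u ++ [⟨n, hn⟩]) := by
  rw [S, S, show (Finset.univ.filter (fun j : Fin m => (j : ℕ) < n + 1))
      = insert (⟨n, hn⟩ : Fin m) (Finset.univ.filter (fun j : Fin m => (j : ℕ) < n)) from ?_]
  · rw [Finset.sum_insert (by simp)]
    ring
  · ext j
    simp only [Finset.mem_filter, Finset.mem_univ, true_and, Finset.mem_insert, Fin.ext_iff]
    omega

omit ht in
lemma A_succ (k : ℕ) (v : Fin (k+1) → Fin m) :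
    A q Ω t (k+1) v
      = A q Ω t k (Fin.init v) + S q Ω t (List.ofFn (Fin.init v)) (v (Fin.last k) : ℕ) := rfl

lemma A_snoc (k : ℕ) (u : Fin k → Fin m) (j : Fin m) :
    A q Ω t (k+1) (Fin.snoc u j) = A q Ω t k u + S q Ω t (List.ofFn u) (j : ℕ) := by
  rw [A_succ, Fin.init_snoc, Fin.snoc_last]

lemma A_inv (hne : Ω.Nonempty) : ∀ (k : ℕ) (u : Fin k → Fin m),
    0 ≤ A q Ω t k u ∧ A q Ω t k u + w q Ω t (List.ofFn u) ≤ 1 := by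
  intro k
  induction k with
  | zero =>
    intro u
    refine ⟨le_rfl, ?_⟩
    rw [show A q Ω t 0 u = 0 from rfl, List.ofFn_zero, w_nil hne ht]
    norm_num
  | succ k IH =>
    intro u
    obtain ⟨h0, h1⟩ := IH (Fin.init u)
    have hA : A q Ω t (k+1) u
        = A q Ω t k (Fin.init u) + S q Ω t (List.ofFn (Fin.init u)) (u (Fin.last k) : ℕ) := rfl
    constructor
    · rw [hA]
      have := S_nonneg ht (List.ofFn (Fin.init u)) (u (Fin.last k) : ℕ)
      linarith
    · rw [hA, ofFn_init_last u]
      have hstep : S q Ω t (List.ofFn (Fin.init u)) ((u (Fin.last k) : ℕ) + 1)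
          = S q Ω t (List.ofFn (Fin.init u)) (u (Fin.last k) : ℕ)
            + w q Ω t (List.ofFn (Fin.init u) ++ [u (Fin.last k)]) := by
        rw [S_succ ht _ (u (Fin.last k)).isLt]
      have hmono : S q Ω t (List.ofFn (Fin.init u)) ((u (Fin.last k) : ℕ) + 1)
          ≤ S q Ω t (List.ofFn (Fin.init u)) m := S_mono ht _ (u (Fin.last k)).isLt
      rw [S_total ht] at hmono
      linarith

end KPS
namespace KPS

set_option linter.unusedSectionVars false

variable {m : ℕ} {q : ℕ+} {Ω : Set (ℕ+ → Fin m)} {t : List (Fin m) → ℝ}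
variable (hne : Ω.Nonempty) (ht : TSol q Ω t)
include ht

lemma dig_spec [NeZero m] {k : ℕ} {u : Fin k → Fin m} {r : ℝ}
    (h1 : A q Ω t k u ≤ r) (h2 : r < A q Ω t k u + w q Ω t (List.ofFn u)) :
    A q Ω t (k+1) (Fin.snoc u (dig q Ω t k u r)) ≤ r ∧
      r < A q Ω t (k+1) (Fin.snoc u (dig q Ω t k u r))
          + w q Ω t (List.ofFn (Fin.snoc u (dig q Ω t k u r))) := by
  have hm : 0 < m := NeZero.pos m
  set P : ℕ → Prop := fun n => A q Ω t k u + S q Ω t (List.ofFn u) n ≤ r with hP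
  have hP0 : P 0 := by
    show A q Ω t k u + S q Ω t (List.ofFn u) 0 ≤ r
    rw [S_zero ht, add_zero]; exact h1
  set d : ℕ := Nat.findGreatest P (m - 1) with hd
  have hdm : d < m := by
    have h := Nat.findGreatest_le (P := P) (m - 1)
    omega
  have hdig : dig q Ω t k u r = ⟨d, hdm⟩ := rfl
  have hPd : P d := Nat.findGreatest_spec (Nat.zero_le _) hP0
  have hup : r < A q Ω t k u + S q Ω t (List.ofFn u) d + w q Ω t (List.ofFn u ++ [⟨d, hdm⟩]) := by
    rcases Nat.lt_or_ge d (m - 1) with hlt | hge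
    · have hnP : ¬ P (d + 1) := Nat.findGreatest_is_greatest (n := m - 1) (by omega) (by omega)
      rw [hP] at hnP
      push_neg at hnP
      rw [S_succ ht _ hdm] at hnP
      linarith
    · have hdm1 : d = m - 1 := le_antisymm (Nat.findGreatest_le _) hge
      have : S q Ω t (List.ofFn u) (d + 1) = w q Ω t (List.ofFn u) := by
        rw [show d + 1 = m by omega, S_total ht]
      rw [S_succ ht _ hdm] at this
      linarith
  have hsnoc : List.ofFn (Fin.snoc u (dig q Ω t k u r)) = List.ofFn u ++ [dig q Ω t k u r] :=
    ofFn_snoc _ _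
  rw [A_snoc ht, hsnoc, hdig]
  exact ⟨hPd, hup⟩

lemma U_mem [NeZero m] (hne : Ω.Nonempty) {r : ℝ} (hr : r ∈ Set.Ico (0:ℝ) 1) (k : ℕ) :
    A q Ω t k (U q Ω t k r) ≤ r ∧
      r < A q Ω t k (U q Ω t k r) + w q Ω t (List.ofFn (U q Ω t k r)) := by
  induction k with
  | zero =>
    refine ⟨hr.1, ?_⟩
    rw [show A q Ω t 0 (U q Ω t 0 r) = 0 from rfl, List.ofFn_zero, w_nil hne ht]
    simpa using hr.2
  | succ k IH =>
    have hU : U q Ω t (k+1) r = Fin.snoc (U q Ω t k r) (dig q Ω t k (U q Ω t k r) r) := rfl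
    rw [hU]
    exact dig_spec ht IH.1 IH.2

lemma interval_unique (hne : Ω.Nonempty) : ∀ (k : ℕ) (u v : Fin k → Fin m) (r : ℝ),
    A q Ω t k u ≤ r → r < A q Ω t k u + w q Ω t (List.ofFn u) →
    A q Ω t k v ≤ r → r < A q Ω t k v + w q Ω t (List.ofFn v) → u = v := by
  intro k
  induction k with
  | zero => intro u v r _ _ _ _; funext i; exact i.elim0
  | succ k IH =>
    intro u v r hu1 hu2 hv1 hv2
    -- parent interval containment
    have key : ∀ (z : Fin (k+1) → Fin m), A q Ω t (k+1) z ≤ r →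
        r < A q Ω t (k+1) z + w q Ω t (List.ofFn z) →
        A q Ω t k (Fin.init z) ≤ r ∧
          r < A q Ω t k (Fin.init z) + w q Ω t (List.ofFn (Fin.init z)) := by
      intro z hz1 hz2
      have hA := A_succ (q := q) (Ω := Ω) (t := t) k z
      have hS0 := S_nonneg ht (List.ofFn (Fin.init z)) (z (Fin.last k) : ℕ)
      constructor
      · linarith [hz1, hA.ge]
      · have hstep : S q Ω t (List.ofFn (Fin.init z)) ((z (Fin.last k) : ℕ) + 1)
            = S q Ω t (List.ofFn (Fin.init z)) (z (Fin.last k) : ℕ)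
              + w q Ω t (List.ofFn (Fin.init z) ++ [z (Fin.last k)]) := by
          rw [S_succ ht _ (z (Fin.last k)).isLt]
        have hmono := S_mono ht (List.ofFn (Fin.init z)) (z (Fin.last k)).isLt
        rw [S_total ht] at hmono
        rw [ofFn_init_last z] at hz2
        rw [hA] at hz1 hz2
        linarith
    obtain ⟨hu1', hu2'⟩ := key u hu1 hu2
    obtain ⟨hv1', hv2'⟩ := key v hv1 hv2
    have hinit : Fin.init u = Fin.init v := IH _ _ r hu1' hu2' hv1' hv2'
    -- digits agree
    have hdig : (u (Fin.last k) : ℕ) = (v (Fin.last k) : ℕ) := by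
      by_contra hne'
      -- helper : smaller digit gives contradiction
      have hgen : ∀ (z z' : Fin (k+1) → Fin m), Fin.init z = Fin.init z' →
          (z (Fin.last k) : ℕ) < (z' (Fin.last k) : ℕ) →
          A q Ω t (k+1) z ≤ r → r < A q Ω t (k+1) z + w q Ω t (List.ofFn z) →
          A q Ω t (k+1) z' ≤ r → False := by
        intro z z' hzz hlt hz1 hz2 hz1'
        have hAz := A_succ (q := q) (Ω := Ω) (t := t) k z
        have hAz' := A_succ (q := q) (Ω := Ω) (t := t) k z'
        rw [hzz] at hAz
        have hstep : S q Ω t (List.ofFn (Fin.init z')) ((z (Fin.last k) : ℕ) + 1)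
            = S q Ω t (List.ofFn (Fin.init z')) (z (Fin.last k) : ℕ)
              + w q Ω t (List.ofFn (Fin.init z') ++ [z (Fin.last k)]) := by
          rw [S_succ ht _ (z (Fin.last k)).isLt]
        have hmono : S q Ω t (List.ofFn (Fin.init z')) ((z (Fin.last k) : ℕ) + 1)
            ≤ S q Ω t (List.ofFn (Fin.init z')) (z' (Fin.last k) : ℕ) :=
          S_mono ht _ (by omega)
        rw [ofFn_init_last z, hzz] at hz2
        linarith
      rcases Nat.lt_or_ge (u (Fin.last k) : ℕ) (v (Fin.last k) : ℕ) with hlt | hge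
      · exact hgen u v hinit hlt hu1 hu2 hv1
      · exact hgen v u hinit.symm (by omega) hv1 hv2 hu1
    have hlast : u (Fin.last k) = v (Fin.last k) := Fin.ext hdig
    rw [← Fin.snoc_init_self u, ← Fin.snoc_init_self v, hinit, hlast]

lemma U_eq_iff [NeZero m] (hne : Ω.Nonempty) {r : ℝ} (hr : r ∈ Set.Ico (0:ℝ) 1)
    {k : ℕ} {u : Fin k → Fin m} :
    U q Ω t k r = u ↔
      (A q Ω t k u ≤ r ∧ r < A q Ω t k u + w q Ω t (List.ofFn u)) := by
  constructor
  · rintro rfl; exact U_mem ht hne hr k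
  · rintro ⟨h1, h2⟩
    obtain ⟨h1', h2'⟩ := U_mem ht hne hr k
    exact interval_unique ht hne k _ _ r h1' h2' h1 h2

lemma Ico_subset_unit (hne : Ω.Nonempty) {k : ℕ} (u : Fin k → Fin m) :
    Set.Ico (A q Ω t k u) (A q Ω t k u + w q Ω t (List.ofFn u)) ⊆ Set.Ico (0:ℝ) 1 := by
  obtain ⟨h0, h1⟩ := A_inv ht hne k u
  intro r hr
  exact ⟨le_trans h0 hr.1, lt_of_lt_of_le hr.2 h1⟩

omit ht

lemma measurableSet_findGreatest (cc : ℕ → ℝ) (b d0 : ℕ) :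
    MeasurableSet {r : ℝ | Nat.findGreatest (fun n => cc n ≤ r) b = d0} := by
  have hset : {r : ℝ | Nat.findGreatest (fun n => cc n ≤ r) b = d0} =
      ({r : ℝ | d0 ≤ b} ∩ ({r | d0 = 0} ∪ {r | cc d0 ≤ r})) ∩
        ⋂ n : ℕ, {r | ¬(d0 < n ∧ n ≤ b ∧ cc n ≤ r)} := by
    ext r
    simp only [Set.mem_setOf_eq, Set.mem_inter_iff, Set.mem_iInter, Set.mem_union]
    rw [Nat.findGreatest_eq_iff]
    constructor
    · rintro ⟨hb, hP, hgr⟩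
      refine ⟨⟨hb, ?_⟩, ?_⟩
      · by_cases h0 : d0 = 0
        · exact Or.inl h0
        · exact Or.inr (hP h0)
      · rintro n ⟨hn1, hn2, hn3⟩
        exact hgr hn1 hn2 hn3
    · rintro ⟨⟨hb, hP⟩, hgr⟩
      refine ⟨hb, ?_, ?_⟩
      · intro h0
        rcases hP with h | h
        · exact absurd h h0
        · exact h
      · intro n hn1 hn2 hn3
        exact hgr n ⟨hn1, hn2, hn3⟩
  rw [hset]
  refine MeasurableSet.inter (MeasurableSet.inter ?_ (MeasurableSet.union ?_ measurableSet_Ici)) ?_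
  · by_cases h : d0 ≤ b <;> simp [h]
  · by_cases h : d0 = 0 <;> simp [h]
  · refine MeasurableSet.iInter fun n => ?_
    by_cases h1 : d0 < n
    · by_cases h2 : n ≤ b
      · have : {r : ℝ | ¬(d0 < n ∧ n ≤ b ∧ cc n ≤ r)} = {r | ¬ cc n ≤ r} := by
          ext r; simp [h1, h2]
        rw [this, show {r : ℝ | ¬ cc n ≤ r} = (Set.Ici (cc n))ᶜ from by ext r; simp]
        exact (measurableSet_Ici).compl
      · have : {r : ℝ | ¬(d0 < n ∧ n ≤ b ∧ cc n ≤ r)} = Set.univ := by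
          ext r; simp [h2]
        rw [this]; exact MeasurableSet.univ
    · have : {r : ℝ | ¬(d0 < n ∧ n ≤ b ∧ cc n ≤ r)} = Set.univ := by
        ext r; simp [h1]
      rw [this]; exact MeasurableSet.univ

lemma measurable_U [NeZero m] : ∀ k : ℕ, Measurable (U q Ω t k) := by
  intro k
  induction k with
  | zero => exact measurable_const
  | succ k IH =>
    refine measurable_to_countable' fun u => ?_
    have hpre : U q Ω t (k+1) ⁻¹' {u}
        = (U q Ω t k ⁻¹' {Fin.init u}) ∩
          {r | dig q Ω t k (Fin.init u) r = u (Fin.last k)} := by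
      ext r
      simp only [Set.mem_preimage, Set.mem_singleton_iff, Set.mem_inter_iff, Set.mem_setOf_eq]
      have hU : U q Ω t (k+1) r = Fin.snoc (U q Ω t k r) (dig q Ω t k (U q Ω t k r) r) := rfl
      constructor
      · intro h
        have h1 : U q Ω t k r = Fin.init u := by
          rw [← h, hU, Fin.init_snoc]
        have h2 : dig q Ω t k (U q Ω t k r) r = u (Fin.last k) := by
          rw [← h, hU, Fin.snoc_last]
        rw [h1] at h2
        exact ⟨h1, h2⟩
      · rintro ⟨h1, h2⟩
        rw [hU, h1, h2, Fin.snoc_init_self]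
    rw [hpre]
    refine MeasurableSet.inter (IH (measurableSet_singleton _)) ?_
    have : {r | dig q Ω t k (Fin.init u) r = u (Fin.last k)}
        = {r : ℝ | Nat.findGreatest
            (fun n => A q Ω t k (Fin.init u) + S q Ω t (List.ofFn (Fin.init u)) n ≤ r) (m-1)
            = (u (Fin.last k) : ℕ)} := by
      ext r
      simp only [Set.mem_setOf_eq, dig, Fin.ext_iff]
    rw [this]
    exact measurableSet_findGreatest
      (fun n => A q Ω t k (Fin.init u) + S q Ω t (List.ofFn (Fin.init u)) n) _ _

lemma measurable_Phi [NeZero m] : Measurable (Phi q Ω t) :=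
  measurable_pi_lambda _ fun k => (measurable_pi_apply _).comp (measurable_U _)

lemma U_apply_eq [NeZero m] (r : ℝ) :
    ∀ (k i : ℕ) (h : i < k), U q Ω t k r ⟨i, h⟩ = U q Ω t (i+1) r ⟨i, Nat.lt_succ_self i⟩ := by
  intro k
  induction k with
  | zero => intro i h; omega
  | succ k IH =>
    intro i h
    rcases Nat.lt_or_ge i k with hik | hik
    · have hU : U q Ω t (k+1) r = Fin.snoc (U q Ω t k r) (dig q Ω t k (U q Ω t k r) r) := rfl
      have hcast : (⟨i, h⟩ : Fin (k+1)) = Fin.castSucc ⟨i, hik⟩ := rfl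
      rw [hU, hcast, Fin.snoc_castSucc]
      exact IH i hik
    · have : i = k := by omega
      subst this
      rfl

lemma begins_Phi [NeZero m] {r : ℝ} {k : ℕ} {u : Fin k → Fin m} :
    Begins (Phi q Ω t r) (List.ofFn u) ↔ U q Ω t k r = u := by
  rw [begins_ofFn]
  have hcoord : ∀ i : Fin k,
      Phi q Ω t r ⟨(i : ℕ) + 1, Nat.succ_pos _⟩ = U q Ω t k r i := by
    intro i
    have h1 : Phi q Ω t r ⟨(i : ℕ) + 1, Nat.succ_pos _⟩
        = U q Ω t ((i : ℕ) + 1) r ⟨(i : ℕ), Nat.lt_succ_self _⟩ := rfl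
    rw [h1, ← U_apply_eq r k i i.isLt]
  constructor
  · intro h
    funext i
    rw [← hcoord i, h i]
  · intro h i
    rw [hcoord i, h]

end KPS
namespace KPS

set_option linter.unusedSectionVars false

variable {m : ℕ} {q : ℕ+} {Ω : Set (ℕ+ → Fin m)} {t : List (Fin m) → ℝ}
variable (hne : Ω.Nonempty) (ht : TSol q Ω t)
include ht hne

lemma preimage_cyl [NeZero m] {k : ℕ} (u : Fin k → Fin m) :
    Phi q Ω t ⁻¹' Cyl (List.ofFn u) ∩ Set.Ico (0:ℝ) 1
      = Set.Ico (A q Ω t k u) (A q Ω t k u + w q Ω t (List.ofFn u)) := by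
  ext r
  constructor
  · rintro ⟨hP, hr⟩
    have h := (begins_Phi.1 hP)
    exact (U_eq_iff ht hne hr).1 h
  · intro hI
    have hr := Ico_subset_unit ht hne u hI
    exact ⟨begins_Phi.2 ((U_eq_iff ht hne hr).2 ⟨hI.1, hI.2⟩), hr⟩

lemma mu0_cyl_ofFn [NeZero m] {k : ℕ} (u : Fin k → Fin m) :
    mu0 q Ω t (Cyl (List.ofFn u)) = ENNReal.ofReal (w q Ω t (List.ofFn u)) := by
  rw [mu0, Measure.map_apply measurable_Phi (measurableSet_cyl _),
    Measure.restrict_apply (measurable_Phi (measurableSet_cyl _)),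
    preimage_cyl hne ht u, Real.volume_Ico]
  congr 1
  ring

lemma mu0_cyl [NeZero m] (u : List (Fin m)) :
    mu0 q Ω t (Cyl u) = ENNReal.ofReal (w q Ω t u) := by
  conv_lhs => rw [← List.ofFn_get u]
  conv_rhs => rw [← List.ofFn_get u]
  exact mu0_cyl_ofFn hne ht _

lemma isProb_mu0 [NeZero m] : IsProbabilityMeasure (mu0 q Ω t) := by
  constructor
  rw [mu0, Measure.map_apply measurable_Phi MeasurableSet.univ, Set.preimage_univ,
    Measure.restrict_apply MeasurableSet.univ, Set.univ_inter, Real.volume_Ico]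
  norm_num

lemma cylVals_mu0 [NeZero m] : CylVals q Ω t (mu0 q Ω t) := by
  intro u hu
  rw [mu0_cyl hne ht u, w, if_pos hu]

omit ht hne

/-- measures with `ν Ω = 1` vanish on non-prefix cylinders. -/
lemma support_cyl_zero (hΩm : MeasurableSet Ω) {ν : Measure (ℕ+ → Fin m)}
    [IsProbabilityMeasure ν] (hΩ : ν Ω = 1) {u : List (Fin m)} (hu : u ∉ Pref Ω) :
    ν (Cyl u) = 0 := by
  have hc : ν Ωᶜ = 0 := by
    rw [measure_compl hΩm (measure_ne_top ν Ω), hΩ, measure_univ, tsub_self]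
  refine measure_mono_null ?_ hc
  intro x hx
  intro hxΩ
  exact hu ⟨x, hxΩ, hx⟩

/-- a point all of whose prefixes are prefixes of the closed set `Ω` lies in `Ω`. -/
lemma mem_of_prefixes (hcl : IsClosed Ω) (x : ℕ+ → Fin m)
    (h : ∀ k : ℕ, List.ofFn (fun i : Fin k => x ⟨(i : ℕ) + 1, Nat.succ_pos _⟩) ∈ Pref Ω) :
    x ∈ Ω := by
  choose y hyΩ hyB using h
  have htend : Filter.Tendsto y Filter.atTop (nhds x) := by
    rw [tendsto_pi_nhds]
    intro j
    refine Filter.Tendsto.congr' ?_ tendsto_const_nhds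
    filter_upwards [Filter.eventually_ge_atTop (j : ℕ)] with k hk
    have hb := (begins_ofFn (y k) _).1 (hyB k)
    have hj : ((j : ℕ) - 1) < k := by have := j.pos; omega
    have := hb ⟨(j : ℕ) - 1, hj⟩
    have hj' : (⟨((j : ℕ) - 1) + 1, Nat.succ_pos _⟩ : ℕ+) = j := by
      have hp := j.pos
      apply PNat.coe_injective
      show ((j : ℕ) - 1) + 1 = (j : ℕ)
      omega
    rw [hj'] at this
    exact this.symm
  exact hcl.mem_of_tendsto htend (Filter.Eventually.of_forall hyΩ)

include ht hne

lemma mu0_omega [NeZero m] (hcl : IsClosed Ω) : mu0 q Ω t Ω = 1 := by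
  haveI := isProb_mu0 hne ht (m := m) (q := q) (Ω := Ω) (t := t)
  set E : ℕ → Set (ℕ+ → Fin m) := fun k =>
    ⋃ u ∈ (Finset.univ.filter fun u : Fin k → Fin m => List.ofFn u ∈ Pref Ω),
      Cyl (List.ofFn u) with hE
  have hEmeas : ∀ k, MeasurableSet (E k) :=
    fun k => (Finset.univ.filter _).measurableSet_biUnion fun u _ => measurableSet_cyl _
  have hEfull : ∀ k, mu0 q Ω t (E k) = 1 := by
    intro k
    rw [hE]
    rw [measure_biUnion_finset (fun u _ v _ huv => cyl_disjoint huv)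
      (fun u _ => measurableSet_cyl _)]
    have h1 : ∀ u ∈ Finset.univ.filter
        (fun u : Fin k → Fin m => List.ofFn u ∈ Pref Ω),
        mu0 q Ω t (Cyl (List.ofFn u)) = ENNReal.ofReal (w q Ω t (List.ofFn u)) :=
      fun u _ => mu0_cyl_ofFn hne ht u
    rw [Finset.sum_congr rfl h1, Finset.sum_filter]
    have h2 : ∀ u : Fin k → Fin m,
        (if List.ofFn u ∈ Pref Ω then ENNReal.ofReal (w q Ω t (List.ofFn u)) else 0)
          = ENNReal.ofReal (w q Ω t (List.ofFn u)) := by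
      intro u
      split_ifs with h
      · rfl
      · rw [w, if_neg h, ENNReal.ofReal_zero]
    rw [Finset.sum_congr rfl fun u _ => h2 u,
      ← ENNReal.ofReal_sum_of_nonneg fun u _ => w_nonneg ht _, w_total ht hne,
      ENNReal.ofReal_one]
  have hsub : Ωᶜ ⊆ ⋃ k : ℕ, (E k)ᶜ := by
    intro x hx
    by_contra hmem
    simp only [Set.mem_iUnion, Set.mem_compl_iff, not_exists, not_not] at hmem
    refine hx (mem_of_prefixes hcl x fun k => ?_)
    have := hmem k
    rw [hE] at this
    simp only [Set.mem_iUnion, Finset.mem_coe, Finset.mem_filter, Finset.mem_univ,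
      true_and] at this
    obtain ⟨u, hu, hxu⟩ := this
    rwa [begins_ofFn_unique hxu] at hu
  have hnull : mu0 q Ω t Ωᶜ = 0 := by
    refine measure_mono_null hsub (measure_iUnion_null fun k => ?_)
    rw [measure_compl (hEmeas k) (measure_ne_top _ _), hEfull k, measure_univ, tsub_self]
  have h := measure_compl hcl.measurableSet (measure_ne_top (mu0 q Ω t) Ω)
  rw [hnull, measure_univ] at h
  have hle : mu0 q Ω t Ω ≤ 1 := prob_le_one
  have : (1 : ℝ≥0∞) ≤ mu0 q Ω t Ω := by
    rwa [eq_comm, tsub_eq_zero_iff_le] at h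
  exact le_antisymm hle this

end KPS
namespace KPS

set_option linter.unusedSectionVars false

variable {m : ℕ} {q : ℕ+} {Ω : Set (ℕ+ → Fin m)} {t : List (Fin m) → ℝ}

/-- the collection of cylinders. -/
def CylSys (m : ℕ) : Set (Set (ℕ+ → Fin m)) := {S | ∃ u : List (Fin m), S = Cyl u}

lemma cyl_subset_of_le {u v : List (Fin m)} (hlen : u.length ≤ v.length)
    (x : ℕ+ → Fin m) (hu : Begins x u) (hv : Begins x v) : Cyl v ⊆ Cyl u := by
  intro y hy
  intro j
  have hj : (j : ℕ) < v.length := lt_of_lt_of_le j.isLt hlen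
  have h1 := hy ⟨j, hj⟩
  have h2 := hv ⟨j, hj⟩
  have h3 := hu j
  simp only at h1 h2 h3
  rw [h1, ← h2, h3]

lemma isPiSystem_cylSys : IsPiSystem (CylSys m) := by
  rintro S ⟨u, rfl⟩ T ⟨v, rfl⟩ hST
  obtain ⟨x, hxu, hxv⟩ := hST
  rcases le_total u.length v.length with h | h
  · have := cyl_subset_of_le h x hxu hxv
    rw [Set.inter_eq_right.2 this]
    exact ⟨v, rfl⟩
  · have := cyl_subset_of_le h x hxv hxu
    rw [Set.inter_eq_left.2 this]
    exact ⟨u, rfl⟩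

lemma genFrom_meas_eval (k : ℕ+) (c : Fin m) :
    MeasurableSet[MeasurableSpace.generateFrom (CylSys m)]
      ((fun x : ℕ+ → Fin m => x k) ⁻¹' {c}) := by
  have hk : (⟨((k : ℕ) - 1) + 1, Nat.succ_pos _⟩ : ℕ+) = k := by
    have := k.pos
    apply PNat.coe_injective
    show ((k : ℕ) - 1) + 1 = (k : ℕ)
    omega
  have hpre : (fun x : ℕ+ → Fin m => x k) ⁻¹' {c} =
      ⋃ u ∈ {u : Fin (k : ℕ) → Fin m | u ⟨(k : ℕ) - 1, by have := k.pos; omega⟩ = c},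
        Cyl (List.ofFn u) := by
    ext x
    simp only [Set.mem_preimage, Set.mem_singleton_iff, Set.mem_iUnion, Set.mem_setOf_eq]
    constructor
    · intro hx
      refine ⟨fun i => x ⟨(i : ℕ) + 1, Nat.succ_pos _⟩, ?_, begins_self x⟩
      show x ⟨((k : ℕ) - 1) + 1, Nat.succ_pos _⟩ = c
      rw [hk]
      exact hx
    · rintro ⟨u, huc, hxu⟩
      have := (begins_ofFn x u).1 hxu ⟨(k : ℕ) - 1, by have := k.pos; omega⟩
      rw [huc] at this
      rw [hk] at this
      exact this
  rw [hpre]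
  exact MeasurableSet.biUnion (Set.to_countable _) fun u _ =>
    MeasurableSpace.measurableSet_generateFrom ⟨List.ofFn u, rfl⟩

lemma pi_eq_generateFrom_cylSys :
    (inferInstance : MeasurableSpace (ℕ+ → Fin m)) = .generateFrom (CylSys m) := by
  refine le_antisymm ?_ (MeasurableSpace.generateFrom_le ?_)
  · rw [show (inferInstance : MeasurableSpace (ℕ+ → Fin m)) = MeasurableSpace.pi from rfl,
      MeasurableSpace.pi]
    refine iSup_le fun k => ?_
    rw [MeasurableSpace.le_def]
    rintro s ⟨s', -, rfl⟩
    have hs : (fun x : ℕ+ → Fin m => x k) ⁻¹' s'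
        = ⋃ c ∈ s', (fun x : ℕ+ → Fin m => x k) ⁻¹' {c} := by
      ext x; simp
    rw [hs]
    exact MeasurableSet.biUnion (Set.to_countable _) fun c _ => genFrom_meas_eval k c
  · rintro S ⟨u, rfl⟩
    exact measurableSet_cyl u

/-- uniqueness of probability measures with the prescribed cylinder values. -/
lemma unique_cylVals (hΩm : MeasurableSet Ω)
    {μ ν : Measure (ℕ+ → Fin m)} [IsProbabilityMeasure μ] [IsProbabilityMeasure ν]
    (hμΩ : μ Ω = 1) (hνΩ : ν Ω = 1)
    (hμ : CylVals q Ω t μ) (hν : CylVals q Ω t ν) : μ = ν := by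
  refine MeasureTheory.ext_of_generate_finite (CylSys m) pi_eq_generateFrom_cylSys
    isPiSystem_cylSys ?_ (by rw [measure_univ, measure_univ])
  rintro S ⟨u, rfl⟩
  by_cases hu : u ∈ Pref Ω
  · rw [hμ u hu, hν u hu]
  · rw [support_cyl_zero hΩm hμΩ hu, support_cyl_zero hΩm hνΩ hu]

end KPS
namespace KPS

set_option linter.unusedSectionVars false

variable {m : ℕ} {q : ℕ+} {Ω : Set (ℕ+ → Fin m)} {t : List (Fin m) → ℝ}

section entdefs
variable (q Ω t)

/-- cylinder masses of a measure. -/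
def pf (ν : Measure (ℕ+ → Fin m)) (k : ℕ) (u : Fin k → Fin m) : ℝ :=
  (ν (Cyl (List.ofFn u))).toReal

/-- natural-log entropy of the level-`k` partition. -/
def Hn (ν : Measure (ℕ+ → Fin m)) (k : ℕ) : ℝ :=
  -∑ u : Fin k → Fin m, pf ν k u * Real.log (pf ν k u)

/-- the weighted `log t` sum at level `k`. -/
def Ln (ν : Measure (ℕ+ → Fin m)) (k : ℕ) : ℝ :=
  ∑ u : Fin k → Fin m, pf ν k u * Real.log (t (List.ofFn u))

/-- conditional transition ratio. -/
def rat (u : List (Fin m)) (j : Fin m) : ℝ :=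
  if u ++ [j] ∈ Pref Ω then t (u ++ [j]) / t u ^ (q : ℕ) else 0

/-- per-level Gibbs slack. -/
def Gn (ν : Measure (ℕ+ → Fin m)) (k : ℕ) : ℝ :=
  ((q : ℝ) * Ln t ν k - Ln t ν (k+1)) - (Hn ν (k+1) - Hn ν k)

end entdefs

lemma w_child' (ht : TSol q Ω t) (u : List (Fin m)) (j : Fin m) :
    w q Ω t (u ++ [j]) = w q Ω t u * rat q Ω t u j := w_child ht u j

lemma rat_nonneg (ht : TSol q Ω t) (u : List (Fin m)) (j : Fin m) : 0 ≤ rat q Ω t u j := by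
  rw [rat]
  split_ifs with h
  · exact div_nonneg (le_of_lt (t_pos ht h)) (pow_nonneg (le_of_lt (t_pos ht (mem_pref_of_append h))) _)
  · exact le_rfl

lemma rat_sum (ht : TSol q Ω t) {u : List (Fin m)} (hu : u ∈ Pref Ω) :
    ∑ j : Fin m, rat q Ω t u j = 1 := by
  have htq := (ht u hu).2
  have ht0 : (t u : ℝ) ^ (q : ℕ) ≠ 0 := pow_ne_zero _ (ne_of_gt (t_pos ht hu))
  calc ∑ j : Fin m, rat q Ω t u j
      = (∑ j ∈ Finset.univ.filter (fun j : Fin m => u ++ [j] ∈ Pref Ω),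
          t (u ++ [j])) / t u ^ (q : ℕ) := by
        rw [Finset.sum_div, Finset.sum_filter]
        exact Finset.sum_congr rfl fun j _ => by rw [rat]
    _ = 1 := by rw [← htq, div_self ht0]

section pflems
variable {ν : Measure (ℕ+ → Fin m)} [IsProbabilityMeasure ν]

lemma pf_nonneg (k : ℕ) (u : Fin k → Fin m) : 0 ≤ pf ν k u := ENNReal.toReal_nonneg

lemma pf_le_one (k : ℕ) (u : Fin k → Fin m) : pf ν k u ≤ 1 := by
  rw [pf, ← ENNReal.toReal_one]
  exact ENNReal.toReal_mono ENNReal.one_ne_top prob_le_one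

lemma pf_zero' (u : Fin 0 → Fin m) : pf ν 0 u = 1 := by
  rw [pf, List.ofFn_zero, cyl_nil, measure_univ, ENNReal.toReal_one]

lemma pf_add (k : ℕ) (u : Fin k → Fin m) :
    pf ν k u = ∑ j : Fin m, pf ν (k+1) (Fin.snoc u j) := by
  have hdis : Pairwise (Function.onFun Disjoint fun j : Fin m =>
      Cyl (List.ofFn (Fin.snoc (α := fun _ => Fin m) u j))) := by
    intro i j hij
    refine cyl_disjoint fun h => hij ?_
    have h1 : (Fin.snoc (α := fun _ => Fin m) u i) (Fin.last k) = (Fin.snoc (α := fun _ => Fin m) u j) (Fin.last k) := by rw [h]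
    rwa [Fin.snoc_last, Fin.snoc_last] at h1
  have := measure_iUnion (μ := ν) hdis fun j => measurableSet_cyl _
  rw [← cyl_succ] at this
  rw [pf, this, tsum_fintype, ENNReal.toReal_sum fun j _ => measure_ne_top ν _]
  rfl

lemma pf_le_parent (k : ℕ) (u : Fin k → Fin m) (j : Fin m) :
    pf ν (k+1) (Fin.snoc u j) ≤ pf ν k u := by
  rw [pf_add k u]
  exact Finset.single_le_sum (fun i _ => pf_nonneg _ _) (Finset.mem_univ j)

lemma pf_total (k : ℕ) : ∑ u : Fin k → Fin m, pf ν k u = 1 := by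
  induction k with
  | zero => rw [Fintype.sum_subsingleton _ (fun i : Fin 0 => i.elim0), pf_zero']
  | succ k IH =>
    rw [sum_snoc (fun v => pf ν (k+1) v), Finset.sum_congr rfl fun u _ => (pf_add k u).symm, IH]

lemma pf_support (hΩm : MeasurableSet Ω) (hνΩ : ν Ω = 1) {k : ℕ} {u : Fin k → Fin m}
    (hu : List.ofFn u ∉ Pref Ω) : pf ν k u = 0 := by
  rw [pf, support_cyl_zero hΩm hνΩ hu, ENNReal.toReal_zero]

lemma pf_eq_w (hne : Ω.Nonempty) (ht : TSol q Ω t) (hΩm : MeasurableSet Ω) (hνΩ : ν Ω = 1)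
    (hcv : CylVals q Ω t ν) (k : ℕ) (u : Fin k → Fin m) :
    pf ν k u = w q Ω t (List.ofFn u) := by
  by_cases hu : List.ofFn u ∈ Pref Ω
  · rw [pf, hcv _ hu, w, if_pos hu, ENNReal.toReal_ofReal]
    have := w_nonneg (u := List.ofFn u) ht
    rwa [w, if_pos hu] at this
  · rw [pf_support hΩm hνΩ hu, w, if_neg hu]

lemma cylVals_of_pf (hne : Ω.Nonempty) (ht : TSol q Ω t)
    (h : ∀ (k : ℕ) (u : Fin k → Fin m), pf ν k u = w q Ω t (List.ofFn u)) :
    CylVals q Ω t ν := by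
  intro u hu
  have h1 : ν (Cyl u) = ENNReal.ofReal (w q Ω t u) := by
    have h2 := h u.length (fun i => u.get i)
    rw [List.ofFn_get] at h2
    rw [← ENNReal.ofReal_toReal (measure_ne_top ν (Cyl u))]
    rw [show (ν (Cyl u)).toReal = pf ν u.length (fun i => u.get i) from by
      rw [pf, List.ofFn_get], h2]
  rw [h1, w, if_pos hu]

end pflems

/-- pointwise Gibbs inequality with equality case. -/
lemma gibbs_pt {p r : ℝ} (hp : 0 ≤ p) (hr : 0 ≤ r) (h0 : r = 0 → p = 0) :
    p - r ≤ p * Real.log (p / r) ∧ (p * Real.log (p / r) = p - r → p = r) := by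
  rcases eq_or_lt_of_le hp with hp0 | hp0
  · constructor
    · rw [← hp0, zero_mul, zero_sub]
      linarith
    · intro h
      rw [← hp0, zero_mul, zero_sub, eq_comm, neg_eq_zero] at h
      rw [← hp0, h]
  · have hr0 : 0 < r := by
      rcases eq_or_lt_of_le hr with h | h
      · exact absurd (h0 h.symm) (ne_of_gt hp0)
      · exact h
    have hlog : Real.log (r / p) ≤ r / p - 1 := Real.log_le_sub_one_of_pos (div_pos hr0 hp0)
    have hlogeq : Real.log (p / r) = - Real.log (r / p) := by
      rw [← Real.log_inv]
      congr 1
      field_simp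
    constructor
    · have := mul_le_mul_of_nonneg_left hlog (le_of_lt hp0)
      rw [mul_sub, mul_one, mul_div_cancel₀ _ (ne_of_gt hp0)] at this
      rw [hlogeq]
      linarith
    · intro heq
      by_contra hpr
      have hne1 : r / p ≠ 1 := by
        intro h1
        exact hpr ((div_eq_one_iff_eq (ne_of_gt hp0)).1 h1).symm
      have hstrict : Real.log (r / p) < r / p - 1 :=
        Real.log_lt_sub_one_of_pos (div_pos hr0 hp0) hne1
      have := mul_lt_mul_of_pos_left hstrict hp0
      rw [mul_sub, mul_one, mul_div_cancel₀ _ (ne_of_gt hp0)] at this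
      rw [hlogeq] at heq
      nlinarith

section gibbslevel
variable {ν : Measure (ℕ+ → Fin m)} [IsProbabilityMeasure ν]
variable (hne : Ω.Nonempty) (ht : TSol q Ω t) (hΩm : MeasurableSet Ω) (hνΩ : ν Ω = 1)
include hne ht hΩm hνΩ

/-- the KL term. -/
private def tau (ν : Measure (ℕ+ → Fin m)) (k : ℕ) (u : Fin k → Fin m) (j : Fin m) : ℝ :=
  pf ν (k+1) (Fin.snoc u j) *
    Real.log (pf ν (k+1) (Fin.snoc u j) / (pf ν k u * rat q Ω t (List.ofFn u) j))

lemma rat_zero_imp (k : ℕ) (u : Fin k → Fin m) (j : Fin m)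
    (h : pf ν k u * rat q Ω t (List.ofFn u) j = 0) : pf ν (k+1) (Fin.snoc u j) = 0 := by
  rcases mul_eq_zero.1 h with h | h
  · have := pf_le_parent (ν := ν) k u j
    have h2 := pf_nonneg (ν := ν) (k+1) (Fin.snoc u j)
    linarith
  · rw [rat] at h
    split_ifs at h with hmem
    · exact absurd h (ne_of_gt (div_pos (t_pos ht hmem)
        (pow_pos (t_pos ht (mem_pref_of_append hmem)) _)))
    · refine pf_support hΩm hνΩ ?_
      rw [ofFn_snoc]
      exact hmem

lemma tau_nonneg_sum (k : ℕ) (u : Fin k → Fin m) :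
    ∑ j : Fin m, (pf ν (k+1) (Fin.snoc u j) - pf ν k u * rat q Ω t (List.ofFn u) j)
      ≤ ∑ j : Fin m, tau (q := q) (Ω := Ω) (t := t) ν k u j := by
  refine Finset.sum_le_sum fun j _ => ?_
  exact (gibbs_pt (pf_nonneg _ _)
    (mul_nonneg (pf_nonneg _ _) (rat_nonneg ht _ _)) (rat_zero_imp hne ht hΩm hνΩ k u j)).1

lemma sum_sub_zero (k : ℕ) (u : Fin k → Fin m) :
    ∑ j : Fin m, (pf ν (k+1) (Fin.snoc u j) - pf ν k u * rat q Ω t (List.ofFn u) j) = 0 := by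
  by_cases hu : List.ofFn u ∈ Pref Ω
  · rw [Finset.sum_sub_distrib, ← pf_add, ← Finset.mul_sum, rat_sum ht hu, mul_one, sub_self]
  · have hpu : pf ν k u = 0 := pf_support hΩm hνΩ hu
    rw [Finset.sum_sub_distrib, ← pf_add, hpu]
    simp

lemma tau_sum_nonneg (k : ℕ) (u : Fin k → Fin m) :
    0 ≤ ∑ j : Fin m, tau (q := q) (Ω := Ω) (t := t) ν k u j := by
  rw [← sum_sub_zero hne ht hΩm hνΩ k u]
  exact tau_nonneg_sum hne ht hΩm hνΩ k u

/-- expansion of the KL term. -/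
lemma tau_expand (k : ℕ) (u : Fin k → Fin m) (j : Fin m) :
    tau (q := q) (Ω := Ω) (t := t) ν k u j
      = pf ν (k+1) (Fin.snoc u j) * Real.log (pf ν (k+1) (Fin.snoc u j))
        - pf ν (k+1) (Fin.snoc u j) * Real.log (pf ν k u)
        - pf ν (k+1) (Fin.snoc u j) * Real.log (t (List.ofFn (Fin.snoc u j)))
        + (q : ℝ) * (pf ν (k+1) (Fin.snoc u j) * Real.log (t (List.ofFn u))) := by
  rcases eq_or_lt_of_le (pf_nonneg (ν := ν) (k+1) (Fin.snoc u j)) with h0 | h0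
  · rw [tau, ← h0]
    ring
  · -- positive case
    have hr : pf ν k u * rat q Ω t (List.ofFn u) j ≠ 0 := by
      intro h
      exact absurd (rat_zero_imp hne ht hΩm hνΩ k u j h) (ne_of_gt h0)
    have hpu : pf ν k u ≠ 0 := fun h => hr (by rw [h, zero_mul])
    have hratne : rat q Ω t (List.ofFn u) j ≠ 0 := fun h => hr (by rw [h, mul_zero])
    have hchild : List.ofFn u ++ [j] ∈ Pref Ω := by
      by_contra hmem
      exact hratne (by rw [rat, if_neg hmem])
    have hparent : List.ofFn u ∈ Pref Ω := mem_pref_of_append hchild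
    have hrat : rat q Ω t (List.ofFn u) j
        = t (List.ofFn u ++ [j]) / t (List.ofFn u) ^ (q : ℕ) := by rw [rat, if_pos hchild]
    have htp := t_pos ht hparent
    have htc := t_pos ht hchild
    rw [tau, Real.log_div (ne_of_gt h0) hr, Real.log_mul hpu hratne, hrat,
      Real.log_div (ne_of_gt htc) (ne_of_gt (pow_pos htp _)), Real.log_pow, ofFn_snoc]
    push_cast
    ring

lemma gibbs_identity (k : ℕ) :
    Gn q t ν k = ∑ u : Fin k → Fin m, ∑ j : Fin m, tau (q := q) (Ω := Ω) (t := t) ν k u j := by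
  have hexp := Finset.sum_congr rfl fun (u : Fin k → Fin m) (_ : u ∈ Finset.univ) =>
    Finset.sum_congr rfl fun (j : Fin m) (_ : j ∈ Finset.univ) =>
      tau_expand hne ht hΩm hνΩ k u j
  rw [hexp]
  have h1 : ∀ u : Fin k → Fin m, ∑ j : Fin m,
      (pf ν (k+1) (Fin.snoc u j) * Real.log (pf ν (k+1) (Fin.snoc u j))
        - pf ν (k+1) (Fin.snoc u j) * Real.log (pf ν k u)
        - pf ν (k+1) (Fin.snoc u j) * Real.log (t (List.ofFn (Fin.snoc u j)))
        + (q : ℝ) * (pf ν (k+1) (Fin.snoc u j) * Real.log (t (List.ofFn u))))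
      = (∑ j : Fin m, pf ν (k+1) (Fin.snoc u j) * Real.log (pf ν (k+1) (Fin.snoc u j)))
        - pf ν k u * Real.log (pf ν k u)
        - (∑ j : Fin m, pf ν (k+1) (Fin.snoc u j) * Real.log (t (List.ofFn (Fin.snoc u j))))
        + (q : ℝ) * (pf ν k u * Real.log (t (List.ofFn u))) := by
    intro u
    rw [Finset.sum_add_distrib, Finset.sum_sub_distrib, Finset.sum_sub_distrib,
      ← Finset.sum_mul, ← pf_add, ← Finset.mul_sum, ← Finset.sum_mul, ← pf_add]
    all_goals ring
  rw [Finset.sum_congr rfl fun u _ => h1 u]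
  rw [Finset.sum_add_distrib, Finset.sum_sub_distrib, Finset.sum_sub_distrib,
    ← Finset.mul_sum]
  rw [Gn, Hn, Hn, Ln, Ln, sum_snoc (fun v => pf ν (k+1) v * Real.log (pf ν (k+1) v)),
    sum_snoc (fun v => pf ν (k+1) v * Real.log (t (List.ofFn v)))]
  ring

lemma Gn_nonneg (k : ℕ) : 0 ≤ Gn q t ν k := by
  rw [gibbs_identity hne ht hΩm hνΩ k]
  exact Finset.sum_nonneg fun u _ => tau_sum_nonneg hne ht hΩm hνΩ k u

lemma Gn_eq_zero_iff (k : ℕ) (h : Gn q t ν k = 0) (u : Fin k → Fin m) (j : Fin m) :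
    pf ν (k+1) (Fin.snoc u j) = pf ν k u * rat q Ω t (List.ofFn u) j := by
  rw [gibbs_identity hne ht hΩm hνΩ k] at h
  have husum : ∀ u : Fin k → Fin m, ∑ j : Fin m, tau (q := q) (Ω := Ω) (t := t) ν k u j = 0 :=
    fun u' => (Finset.sum_eq_zero_iff_of_nonneg
      (fun u'' _ => tau_sum_nonneg hne ht hΩm hνΩ k u'')).1 h u' (Finset.mem_univ u')
  -- now each tau equals the difference
  have hterm : ∀ j' : Fin m, tau (q := q) (Ω := Ω) (t := t) ν k u j'
      = pf ν (k+1) (Fin.snoc u j') - pf ν k u * rat q Ω t (List.ofFn u) j' := by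
    have hsum0 : ∑ j' : Fin m, (tau (q := q) (Ω := Ω) (t := t) ν k u j'
        - (pf ν (k+1) (Fin.snoc u j') - pf ν k u * rat q Ω t (List.ofFn u) j')) = 0 := by
      rw [Finset.sum_sub_distrib, husum u, sum_sub_zero hne ht hΩm hνΩ k u, sub_zero]
    have hnn : ∀ j' ∈ (Finset.univ : Finset (Fin m)),
        0 ≤ tau (q := q) (Ω := Ω) (t := t) ν k u j'
          - (pf ν (k+1) (Fin.snoc u j') - pf ν k u * rat q Ω t (List.ofFn u) j') := by
      intro j' _
      have hg := (gibbs_pt (pf_nonneg (ν := ν) (k+1) (Fin.snoc u j'))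
        (mul_nonneg (pf_nonneg _ _) (rat_nonneg ht _ _)) (rat_zero_imp hne ht hΩm hνΩ k u j')).1
      have htau : tau (q := q) (Ω := Ω) (t := t) ν k u j'
          = pf ν (k+1) (Fin.snoc u j') *
            Real.log (pf ν (k+1) (Fin.snoc u j') /
              (pf ν k u * rat q Ω t (List.ofFn u) j')) := rfl
      rw [htau]
      linarith
    intro j'
    have := (Finset.sum_eq_zero_iff_of_nonneg hnn).1 hsum0 j' (Finset.mem_univ j')
    linarith [this]
  exact (gibbs_pt (pf_nonneg (ν := ν) (k+1) (Fin.snoc u j))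
    (mul_nonneg (pf_nonneg _ _) (rat_nonneg ht _ _)) (rat_zero_imp hne ht hΩm hνΩ k u j)).2
    (hterm j)

lemma Gn_zero_of_w (hpf : ∀ (k : ℕ) (u : Fin k → Fin m), pf ν k u = w q Ω t (List.ofFn u))
    (k : ℕ) : Gn q t ν k = 0 := by
  rw [gibbs_identity hne ht hΩm hνΩ k]
  refine Finset.sum_eq_zero fun u _ => Finset.sum_eq_zero fun j _ => ?_
  have hr : pf ν (k+1) (Fin.snoc u j) = pf ν k u * rat q Ω t (List.ofFn u) j := by
    rw [hpf, hpf, ofFn_snoc, w_child' ht]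
  rw [tau, hr]
  rcases eq_or_lt_of_le (mul_nonneg (pf_nonneg (ν := ν) k u) (rat_nonneg ht (List.ofFn u) j))
    with h0 | h0
  · rw [← h0, zero_mul]
  · rw [div_self (ne_of_gt h0), Real.log_one, mul_zero]

end gibbslevel

end KPS
namespace KPS

set_option linter.unusedSectionVars false

variable {m : ℕ} {q : ℕ+} {Ω : Set (ℕ+ → Fin m)} {t : List (Fin m) → ℝ}
variable {ν : Measure (ℕ+ → Fin m)} [IsProbabilityMeasure ν]

lemma Hn_zero : Hn ν 0 = 0 := by
  rw [Hn, Fintype.sum_subsingleton _ (fun i : Fin 0 => i.elim0), pf_zero', Real.log_one,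
    mul_zero, neg_zero]

lemma Hn_nonneg (k : ℕ) : 0 ≤ Hn ν k := by
  rw [Hn, neg_nonneg]
  refine Finset.sum_nonpos fun u _ => ?_
  exact mul_nonpos_iff.2 (Or.inl ⟨pf_nonneg _ _,
    Real.log_nonpos (pf_nonneg _ _) (pf_le_one _ _)⟩)

lemma Hn_le (hm : 2 ≤ m) (k : ℕ) : Hn ν k ≤ (k : ℝ) * Real.log m := by
  have hm0 : (0:ℝ) < (m:ℝ) := by positivity
  have hmk : (0:ℝ) < (m:ℝ) ^ k := pow_pos hm0 k
  set c : ℝ := ((m:ℝ) ^ k)⁻¹ with hc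
  have hc0 : 0 < c := inv_pos.2 hmk
  have hcard : (Fintype.card (Fin k → Fin m) : ℝ) = (m:ℝ) ^ k := by
    rw [Fintype.card_fun]
    push_cast
    simp
  have hsum1 : ∑ u : Fin k → Fin m, (pf ν k u - c) = 0 := by
    rw [Finset.sum_sub_distrib, pf_total, Finset.sum_const, Finset.card_univ, nsmul_eq_mul,
      hcard, hc, mul_inv_cancel₀ (ne_of_gt hmk), sub_self]
  have hterm : ∀ u : Fin k → Fin m,
      pf ν k u * Real.log (pf ν k u / c)
        = pf ν k u * Real.log (pf ν k u) - pf ν k u * Real.log c := by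
    intro u
    rcases eq_or_lt_of_le (pf_nonneg (ν := ν) k u) with h0 | h0
    · rw [← h0]; ring
    · rw [Real.log_div (ne_of_gt h0) (ne_of_gt hc0)]; ring
  have hgibbs : ∀ u : Fin k → Fin m,
      pf ν k u - c ≤ pf ν k u * Real.log (pf ν k u / c) := fun u =>
    (gibbs_pt (pf_nonneg _ _) (le_of_lt hc0) (fun h => absurd h (ne_of_gt hc0))).1
  have h1 : (0:ℝ) ≤ ∑ u : Fin k → Fin m, pf ν k u * Real.log (pf ν k u / c) := by
    rw [← hsum1]
    exact Finset.sum_le_sum fun u _ => hgibbs u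
  rw [Finset.sum_congr rfl fun u _ => hterm u, Finset.sum_sub_distrib, ← Finset.sum_mul,
    pf_total, one_mul, hc, Real.log_inv, Real.log_pow, sub_neg_eq_add] at h1
  have : -Hn ν k = ∑ u : Fin k → Fin m, pf ν k u * Real.log (pf ν k u) := by
    rw [Hn, neg_neg]
  linarith [h1, this.symm.le, this.symm.ge]

lemma Ln_zero : Ln t ν 0 = Real.log (t []) := by
  rw [Ln, Fintype.sum_subsingleton _ (fun i : Fin 0 => i.elim0), pf_zero', List.ofFn_zero,
    one_mul]

lemma Ln_nonneg (ht : TSol q Ω t) (hΩm : MeasurableSet Ω) (hνΩ : ν Ω = 1) (k : ℕ) :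
    0 ≤ Ln t ν k := by
  refine Finset.sum_nonneg fun u _ => ?_
  by_cases hu : List.ofFn u ∈ Pref Ω
  · exact mul_nonneg (pf_nonneg _ _) (Real.log_nonneg (t_one_le ht hu))
  · rw [pf_support hΩm hνΩ hu, zero_mul]

lemma Ln_le (hm : 2 ≤ m) (hq : 2 ≤ (q : ℕ)) (ht : TSol q Ω t) (hΩm : MeasurableSet Ω)
    (hνΩ : ν Ω = 1) (k : ℕ) : Ln t ν k ≤ Real.log m / ((q : ℝ) - 1) := by
  have hm0 : (0:ℝ) < (m:ℝ) := by positivity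
  have hq1 : (1:ℝ) < (q:ℝ) := by exact_mod_cast hq.trans_lt' one_lt_two
  have hC : (0:ℝ) ≤ Real.log m / ((q : ℝ) - 1) :=
    div_nonneg (Real.log_nonneg (by exact_mod_cast hm.trans' (by norm_num))) (by linarith)
  have hbound : ∀ u : Fin k → Fin m,
      pf ν k u * Real.log (t (List.ofFn u)) ≤ pf ν k u * (Real.log m / ((q : ℝ) - 1)) := by
    intro u
    by_cases hu : List.ofFn u ∈ Pref Ω
    · refine mul_le_mul_of_nonneg_left ?_ (pf_nonneg _ _)
      have h2 := (ht _ hu).1.2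
      have := Real.log_le_log (t_pos ht hu) h2
      rwa [Real.log_rpow hm0, one_div, inv_mul_eq_div] at this
    · rw [pf_support hΩm hνΩ hu, zero_mul, zero_mul]
  calc Ln t ν k ≤ ∑ u : Fin k → Fin m, pf ν k u * (Real.log m / ((q : ℝ) - 1)) :=
        Finset.sum_le_sum fun u _ => hbound u
    _ = Real.log m / ((q : ℝ) - 1) := by rw [← Finset.sum_mul, pf_total, one_mul]

lemma hent_eq (k : ℕ) : Hent m ν k = Hn ν k / Real.log m := by
  rw [Hent, Hn, neg_div]
  congr 1
  rw [Finset.sum_div]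
  refine Finset.sum_congr rfl fun u _ => ?_
  rw [Real.logb, pf]
  ring

end KPS
namespace KPS

set_option linter.unusedSectionVars false

variable {m : ℕ} {q : ℕ+} {Ω : Set (ℕ+ → Fin m)} {t : List (Fin m) → ℝ}
variable {ν : Measure (ℕ+ → Fin m)} [IsProbabilityMeasure ν]

lemma sOm_repr (hm : 2 ≤ m) (hq : 2 ≤ (q : ℕ)) (hne : Ω.Nonempty) (ht : TSol q Ω t)
    (hΩm : MeasurableSet Ω) (hνΩ : ν Ω = 1) :
    Summable (fun k : ℕ => Gn q t ν k * ((q:ℝ)⁻¹) ^ (k+2)) ∧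
    sOm m q ν = ((q:ℝ) - 1) * Real.log (t []) / Real.log m
      - ((q:ℝ) - 1) * (q:ℝ) / Real.log m * ∑' k : ℕ, Gn q t ν k * ((q:ℝ)⁻¹) ^ (k+2) := by
  have hq1 : (1:ℝ) < (q:ℝ) := by exact_mod_cast hq.trans_lt' one_lt_two
  have hq0 : (0:ℝ) < (q:ℝ) := by linarith
  set x : ℝ := ((q:ℝ))⁻¹ with hxdef
  have hx0 : 0 < x := inv_pos.2 hq0
  have hx1 : x < 1 := by
    rw [hxdef, inv_lt_one_iff₀]
    right; exact hq1
  have hqx : (q:ℝ) * x = 1 := mul_inv_cancel₀ (ne_of_gt hq0)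
  have hm1 : (1:ℝ) < (m:ℝ) := by exact_mod_cast hm.trans_lt' one_lt_two
  have hlm : 0 < Real.log m := Real.log_pos hm1
  -- summabilities
  have hxnorm : ‖x‖ < 1 := by rwa [Real.norm_eq_abs, abs_of_pos hx0]
  have hS1 : Summable (fun k : ℕ => (k:ℝ) * x ^ k) := by
    simpa using summable_pow_mul_geometric_of_norm_lt_one 1 hxnorm
  have hSgeo : Summable (fun k : ℕ => x ^ k) := summable_geometric_of_lt_one (le_of_lt hx0) hx1
  have hSF : Summable (fun k : ℕ => Hn ν k * x ^ (k+1)) := by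
    refine Summable.of_nonneg_of_le (fun k => mul_nonneg (Hn_nonneg k) (by positivity))
      (fun k => ?_) (((hS1.add hSgeo).mul_left (Real.log m * x)))
    calc Hn ν k * x ^ (k+1) ≤ ((k:ℝ) * Real.log m) * x ^ (k+1) :=
          mul_le_mul_of_nonneg_right (Hn_le hm k) (by positivity)
      _ = Real.log m * x * (((k:ℝ)) * x ^ k) := by rw [pow_succ]; ring
      _ ≤ Real.log m * x * ((k:ℝ) * x ^ k + x ^ k) := by
          have : (0:ℝ) ≤ x ^ k := by positivity
          have h2 : (0:ℝ) ≤ Real.log m * x := by positivity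
          nlinarith
  have hSA : Summable (fun k : ℕ => Hn ν (k+1) * x ^ (k+2)) := by
    have := (summable_nat_add_iff 1).2 hSF
    exact this.congr fun k => rfl
  have hSF' : Summable (fun k : ℕ => Hn ν k * x ^ (k+2)) := by
    refine (hSF.mul_left x).congr fun k => ?_
    rw [pow_succ, pow_succ]; ring
  have hLbd : ∀ k : ℕ, 0 ≤ Ln t ν k ∧ Ln t ν k ≤ Real.log m / ((q:ℝ) - 1) := fun k =>
    ⟨Ln_nonneg ht hΩm hνΩ k, Ln_le hm hq ht hΩm hνΩ k⟩
  have hSL : Summable (fun k : ℕ => Ln t ν k * x ^ (k+1)) := by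
    refine Summable.of_nonneg_of_le (fun k => mul_nonneg (hLbd k).1 (by positivity))
      (fun k => ?_) ((hSgeo.mul_left (Real.log m / ((q:ℝ) - 1) * x)))
    calc Ln t ν k * x ^ (k+1) ≤ (Real.log m / ((q:ℝ) - 1)) * x ^ (k+1) :=
          mul_le_mul_of_nonneg_right (hLbd k).2 (by positivity)
      _ = Real.log m / ((q:ℝ) - 1) * x * x ^ k := by rw [pow_succ]; ring
  have hSL2 : Summable (fun k : ℕ => Ln t ν k * x ^ (k+2)) := by
    refine (hSL.mul_left x).congr fun k => ?_
    rw [pow_succ, pow_succ]; ring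
  have hSL' : Summable (fun k : ℕ => Ln t ν (k+1) * x ^ (k+2)) := by
    have := (summable_nat_add_iff 1).2 hSL
    exact this.congr fun k => rfl
  have hSG : Summable (fun k : ℕ => Gn q t ν k * x ^ (k+2)) := by
    refine ((((hSL2.mul_left (q:ℝ)).sub hSL').sub hSA).add hSF').congr fun k => ?_
    rw [Gn]; ring
  refine ⟨hSG, ?_⟩
  -- the tsum identity
  set T : ℝ := ∑' k : ℕ, Hn ν (k+1) * x ^ (k+2) with hT
  set M : ℝ := ∑' k : ℕ, Ln t ν k * x ^ (k+1) with hM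
  set G : ℝ := ∑' k : ℕ, Gn q t ν k * x ^ (k+2) with hG
  have e1 : ∑' k : ℕ, Hn ν k * x ^ (k+2) = x * T := by
    have h1 : ∀ k : ℕ, Hn ν k * x ^ (k+2) = x * (Hn ν k * x ^ (k+1)) := fun k => by
      rw [pow_succ, pow_succ]; ring
    rw [tsum_congr h1, tsum_mul_left, Summable.tsum_eq_zero_add hSF, Hn_zero, zero_mul, zero_add, hT]
  have e2 : ∑' k : ℕ, Ln t ν (k+1) * x ^ (k+2) = M - Ln t ν 0 * x := by
    have h2 := Summable.tsum_eq_zero_add hSL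
    rw [← hM] at h2
    rw [show Ln t ν 0 * x ^ (0+1) = Ln t ν 0 * x from by rw [pow_one]] at h2
    have : ∑' k : ℕ, Ln t ν (k+1) * x ^ (k+1+1) = M - Ln t ν 0 * x := by linarith
    exact this
  have e3 : ∑' k : ℕ, (q:ℝ) * (Ln t ν k * x ^ (k+2)) = M := by
    have h3 : ∀ k : ℕ, (q:ℝ) * (Ln t ν k * x ^ (k+2)) = Ln t ν k * x ^ (k+1) := by
      intro k
      have : (q:ℝ) * (Ln t ν k * (x ^ (k+1) * x)) = ((q:ℝ) * x) * (Ln t ν k * x ^ (k+1)) := by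
        ring
      rw [pow_succ, this, hqx, one_mul]
    rw [tsum_congr h3, hM]
  have hpoint : ∀ k : ℕ, Hn ν (k+1) * x ^ (k+2)
      = (Hn ν k * x ^ (k+2) + (q:ℝ) * (Ln t ν k * x ^ (k+2)))
        - (Ln t ν (k+1) * x ^ (k+2) + Gn q t ν k * x ^ (k+2)) := by
    intro k
    rw [Gn]; ring
  have hTid : T = (x * T + M) - ((M - Ln t ν 0 * x) + G) := by
    conv_lhs => rw [hT]
    rw [tsum_congr hpoint,
      Summable.tsum_sub (hSF'.add (hSL2.mul_left (q:ℝ))) (hSL'.add hSG),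
      Summable.tsum_add hSF' (hSL2.mul_left (q:ℝ)), Summable.tsum_add hSL' hSG, e1, e2, e3, ← hG]
  have hTlin : T - x * T = Ln t ν 0 * x - G := by linarith
  -- sOm in terms of T
  have hsOm : sOm m q ν = ((q:ℝ) - 1) ^ 2 * ((1 / Real.log m) * T) := by
    rw [sOm]
    congr 1
    have h4 : ∀ k : ℕ, Hent m ν (k+1) / (q:ℝ) ^ (k+2)
        = (1 / Real.log m) * (Hn ν (k+1) * x ^ (k+2)) := by
      intro k
      have h1 : Real.log (m:ℝ) ≠ 0 := ne_of_gt hlm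
      have h2 : ((q:ℝ)) ^ (k+2) ≠ 0 := by positivity
      rw [hent_eq, hxdef, inv_pow, div_div]
      field_simp
    rw [tsum_congr h4, tsum_mul_left, hT]
  have hkey : ((q:ℝ) - 1) ^ 2 * T = ((q:ℝ) - 1) * Real.log (t []) - ((q:ℝ) - 1) * (q:ℝ) * G := by
    have hstep : ((q:ℝ) - 1) ^ 2 * T = ((q:ℝ) - 1) * (q:ℝ) * (T - x * T) := by
      linear_combination (((q:ℝ) - 1) * T) * hqx
    rw [hstep, hTlin, Ln_zero]
    linear_combination (((q:ℝ) - 1) * Real.log (t [])) * hqx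
  rw [hsOm]
  rw [show ((q:ℝ) - 1) ^ 2 * (1 / Real.log m * T) = (1 / Real.log m) * (((q:ℝ) - 1) ^ 2 * T)
    from by ring, hkey]
  field_simp
  all_goals ring

end KPS
open KPS in
/-- **Proposition 2.5 (i).** The formula `μ[u₁…u_k] = ∏_j t(u₁…u_j)/t(u₁…u_{j-1})^q`
determines a unique Borel probability measure on `Ω`, and this `μ` is the unique maximizer of
`ν ↦ s(Ω,ν)` over Borel probability measures on `Ω`. -/
theorem stmt13 (m : ℕ) (hm : 2 ≤ m) (q : ℕ+) (hq : 2 ≤ (q : ℕ))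
    (Ω : Set (ℕ+ → Fin m)) (hne : Ω.Nonempty) (hcl : IsClosed Ω)
    (t : List (Fin m) → ℝ) (ht : TSol q Ω t) :
    (∃! μ : Measure (ℕ+ → Fin m),
        IsProbabilityMeasure μ ∧ μ Ω = 1 ∧ CylVals q Ω t μ) ∧
    ∀ μ : Measure (ℕ+ → Fin m), IsProbabilityMeasure μ → μ Ω = 1 → CylVals q Ω t μ →
      (∀ ν : Measure (ℕ+ → Fin m), IsProbabilityMeasure ν → ν Ω = 1 →
        sOm m q ν ≤ sOm m q μ) ∧
      (∀ ν : Measure (ℕ+ → Fin m), IsProbabilityMeasure ν → ν Ω = 1 →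
        sOm m q ν = sOm m q μ → ν = μ) := by
  haveI : NeZero m := ⟨by omega⟩
  have hΩm : MeasurableSet Ω := hcl.measurableSet
  have hq0 : (0:ℝ) < (q:ℝ) := by exact_mod_cast q.pos
  have hq1 : (1:ℝ) < (q:ℝ) := by exact_mod_cast hq.trans_lt' one_lt_two
  have hm1 : (1:ℝ) < (m:ℝ) := by exact_mod_cast hm.trans_lt' one_lt_two
  have hlm : 0 < Real.log m := Real.log_pos hm1
  haveI hprob0 : IsProbabilityMeasure (mu0 q Ω t) := isProb_mu0 hne ht
  have hmu0Ω : mu0 q Ω t Ω = 1 := mu0_omega hne ht hcl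
  have hmu0cv : CylVals q Ω t (mu0 q Ω t) := cylVals_mu0 hne ht
  have h0 : IsProbabilityMeasure (mu0 q Ω t) ∧ mu0 q Ω t Ω = 1 ∧ CylVals q Ω t (mu0 q Ω t) :=
    ⟨hprob0, hmu0Ω, hmu0cv⟩
  have huniq : ∀ μ' : Measure (ℕ+ → Fin m),
      (IsProbabilityMeasure μ' ∧ μ' Ω = 1 ∧ CylVals q Ω t μ') → μ' = mu0 q Ω t := by
    rintro μ' ⟨h1, h2, h3⟩
    haveI := h1
    exact unique_cylVals hΩm h2 hmu0Ω h3 hmu0cv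
  refine ⟨⟨mu0 q Ω t, h0, huniq⟩, ?_⟩
  intro μ hμp hμΩ hμcv
  haveI := hμp
  have hpfμ := pf_eq_w hne ht hΩm hμΩ hμcv
  have hGμ : ∀ k : ℕ, Gn q t μ k = 0 := Gn_zero_of_w hne ht hΩm hμΩ hpfμ
  have hrepμ := sOm_repr (ν := μ) hm hq hne ht hΩm hμΩ
  have hμval : sOm m q μ = ((q:ℝ) - 1) * Real.log (t []) / Real.log m := by
    rw [hrepμ.2]
    rw [show (fun k : ℕ => Gn q t μ k * ((q:ℝ)⁻¹) ^ (k+2)) = fun _ : ℕ => (0:ℝ) from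
      funext fun k => by rw [hGμ k, zero_mul], tsum_zero, mul_zero, sub_zero]
  have key : ∀ ν : Measure (ℕ+ → Fin m), IsProbabilityMeasure ν → ν Ω = 1 →
      sOm m q ν ≤ sOm m q μ ∧ (sOm m q ν = sOm m q μ → ν = μ) := by
    intro ν hν hνΩ
    haveI := hν
    obtain ⟨hSG, hrep⟩ := sOm_repr (ν := ν) hm hq hne ht hΩm hνΩ
    have hGnn : ∀ k : ℕ, 0 ≤ Gn q t ν k := Gn_nonneg hne ht hΩm hνΩ
    have hxnn : ∀ k : ℕ, (0:ℝ) ≤ ((q:ℝ)⁻¹) ^ (k+2) := fun k => by positivity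
    have htermnn : ∀ k : ℕ, 0 ≤ Gn q t ν k * ((q:ℝ)⁻¹) ^ (k+2) := fun k =>
      mul_nonneg (hGnn k) (hxnn k)
    have hGs_nn : 0 ≤ ∑' k : ℕ, Gn q t ν k * ((q:ℝ)⁻¹) ^ (k+2) := tsum_nonneg htermnn
    have hD : 0 < ((q:ℝ) - 1) * (q:ℝ) / Real.log m :=
      div_pos (mul_pos (by linarith) hq0) hlm
    constructor
    · rw [hrep, hμval]
      nlinarith [mul_nonneg (le_of_lt hD) hGs_nn]
    · intro heq
      rw [hrep, hμval] at heq
      have hGs0 : ∑' k : ℕ, Gn q t ν k * ((q:ℝ)⁻¹) ^ (k+2) = 0 := by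
        have hprod : ((q:ℝ) - 1) * (q:ℝ) / Real.log m
            * ∑' k : ℕ, Gn q t ν k * ((q:ℝ)⁻¹) ^ (k+2) = 0 := by linarith
        rcases mul_eq_zero.1 hprod with h | h
        · exact absurd h (ne_of_gt hD)
        · exact h
      have hGk0 : ∀ k : ℕ, Gn q t ν k = 0 := by
        intro k
        have h1 : Gn q t ν k * ((q:ℝ)⁻¹) ^ (k+2)
            ≤ ∑' k : ℕ, Gn q t ν k * ((q:ℝ)⁻¹) ^ (k+2) :=
          Summable.le_tsum hSG k fun j _ => htermnn j
        have h2 : Gn q t ν k * ((q:ℝ)⁻¹) ^ (k+2) = 0 := le_antisymm (by linarith) (htermnn k)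
        rcases mul_eq_zero.1 h2 with h | h
        · exact h
        · exact absurd h (by positivity)
      have hpfν : ∀ (k : ℕ) (u : Fin k → Fin m), pf ν k u = w q Ω t (List.ofFn u) := by
        intro k
        induction k with
        | zero =>
          intro u
          rw [pf_zero', List.ofFn_zero, w_nil hne ht]
        | succ k IH =>
          intro u
          rw [← Fin.snoc_init_self u,
            Gn_eq_zero_iff hne ht hΩm hνΩ k (hGk0 k) (Fin.init u) (u (Fin.last k)),
            IH, ofFn_snoc, ← w_child' ht]
      exact unique_cylVals hΩm hνΩ hμΩ (cylVals_of_pf hne ht hpfν) hμcv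
  exact ⟨fun ν h1 h2 => (key ν h1 h2).1, fun ν h1 h2 h3 => (key ν h1 h2).2 h3⟩
end
end

section
/- Let m ≥ 2, let q ≥ 2 be an integer, and let Ω be a nonempty closed subset of Σ_m. Let t be the unique [1, m^{1/(q-1)}]-valued solution of t(u)^q = Σ_{j : uj ∈ Pref(Ω)} t(uj) on the tree of prefixes of Ω, and let μ be the Borel probability measure on Ω with μ[u₁…u_k] = ∏_{j=1}^k t(u₁…u_j)/t(u₁…u_{j-1})^q. Then s(Ω,μ) = (q−1) · log_m t(∅). -/
open scoped Classical ENNReal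
open Filter MeasureTheory Topology

noncomputable section

namespace Stmt14Aux

variable {m : ℕ}

lemma begins_nil (x : ℕ+ → Fin m) : Begins x ([] : List (Fin m)) := by
  intro j; exact absurd j.isLt (by simp)

lemma begins_take {x : ℕ+ → Fin m} {u : List (Fin m)} (h : Begins x u) (n : ℕ) :
    Begins x (u.take n) := by
  intro j
  have hj : (j : ℕ) < u.length := lt_of_lt_of_le j.isLt (by simp)
  have h2 := h ⟨j, hj⟩
  simpa [List.get_eq_getElem] using h2

lemma pref_nil {Ω : Set (ℕ+ → Fin m)} (hne : Ω.Nonempty) : ([] : List (Fin m)) ∈ Pref Ω := by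
  obtain ⟨x, hx⟩ := hne
  exact ⟨x, hx, begins_nil x⟩

lemma pref_take {Ω : Set (ℕ+ → Fin m)} {u : List (Fin m)} (h : u ∈ Pref Ω) (n : ℕ) :
    u.take n ∈ Pref Ω := by
  obtain ⟨x, hx, hb⟩ := h
  exact ⟨x, hx, begins_take hb n⟩

lemma pref_of_append {Ω : Set (ℕ+ → Fin m)} {u : List (Fin m)} {a : Fin m}
    (h : u ++ [a] ∈ Pref Ω) : u ∈ Pref Ω := by
  have := pref_take h u.length
  simpa [List.take_left] using this

/-- the product formula value of a cylinder. -/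
def pf (q : ℕ+) (Ω : Set (ℕ+ → Fin m)) (t : List (Fin m) → ℝ) (u : List (Fin m)) : ℝ :=
  if u ∈ Pref Ω then
    ∏ j ∈ Finset.range u.length, t (u.take (j + 1)) / t (u.take j) ^ (q : ℕ)
  else 0

variable {q : ℕ+} {Ω : Set (ℕ+ → Fin m)} {t : List (Fin m) → ℝ}

lemma tpos (ht : TSol q Ω t) {u : List (Fin m)} (hu : u ∈ Pref Ω) : 0 < t u :=
  lt_of_lt_of_le zero_lt_one (ht u hu).1.1

lemma pf_nil (hnil : ([] : List (Fin m)) ∈ Pref Ω) : pf q Ω t [] = 1 := by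
  simp [pf, hnil]

lemma pf_eq_zero {u : List (Fin m)} (hu : u ∉ Pref Ω) : pf q Ω t u = 0 := if_neg hu

lemma pf_pos (ht : TSol q Ω t) {u : List (Fin m)} (hu : u ∈ Pref Ω) : 0 < pf q Ω t u := by
  rw [pf, if_pos hu]
  apply Finset.prod_pos
  intro j hj
  have h1 : u.take (j + 1) ∈ Pref Ω := pref_take hu _
  have h0 : u.take j ∈ Pref Ω := pref_take hu _
  exact div_pos (tpos ht h1) (pow_pos (tpos ht h0) _)

lemma pf_nonneg (ht : TSol q Ω t) (u : List (Fin m)) : 0 ≤ pf q Ω t u := by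
  by_cases hu : u ∈ Pref Ω
  · exact (pf_pos ht hu).le
  · simp [pf_eq_zero hu]

lemma pf_append (ht : TSol q Ω t) {u : List (Fin m)} {a : Fin m}
    (h : u ++ [a] ∈ Pref Ω) :
    pf q Ω t (u ++ [a]) = pf q Ω t u * (t (u ++ [a]) / t u ^ (q : ℕ)) := by
  have hu : u ∈ Pref Ω := pref_of_append h
  rw [pf, if_pos h, pf, if_pos hu]
  have hlen : (u ++ [a]).length = u.length + 1 := by simp
  rw [hlen, Finset.prod_range_succ]
  congr 1
  · apply Finset.prod_congr rfl
    intro j hj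
    rw [Finset.mem_range] at hj
    rw [List.take_append_of_le_length (by omega), List.take_append_of_le_length (by omega)]
  · rw [List.take_left' rfl, List.take_of_length_le (by simp)]

lemma sum_pf_append (ht : TSol q Ω t) {u : List (Fin m)} (hu : u ∈ Pref Ω) :
    ∑ a : Fin m, pf q Ω t (u ++ [a]) = pf q Ω t u := by
  have hz : ∀ a ∈ Finset.univ, a ∉ Finset.univ.filter (fun a : Fin m => u ++ [a] ∈ Pref Ω) →
      pf q Ω t (u ++ [a]) = 0 := by
    intro a _ ha
    simp only [Finset.mem_filter, Finset.mem_univ, true_and] at ha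
    exact pf_eq_zero ha
  rw [← Finset.sum_subset (Finset.filter_subset _ _) hz]
  have : ∀ a ∈ Finset.univ.filter (fun a : Fin m => u ++ [a] ∈ Pref Ω),
      pf q Ω t (u ++ [a]) = pf q Ω t u / t u ^ (q : ℕ) * t (u ++ [a]) := by
    intro a ha
    simp only [Finset.mem_filter, Finset.mem_univ, true_and] at ha
    rw [pf_append ht ha]; ring
  have h0 : t u ^ (q : ℕ) ≠ 0 := pow_ne_zero _ (tpos ht hu).ne'
  rw [Finset.sum_congr rfl this, ← Finset.mul_sum, ← (ht u hu).2]
  field_simp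

lemma sum_pf_append_all (ht : TSol q Ω t) (u : List (Fin m)) :
    ∑ a : Fin m, pf q Ω t (u ++ [a]) = pf q Ω t u := by
  by_cases hu : u ∈ Pref Ω
  · exact sum_pf_append ht hu
  · rw [pf_eq_zero hu]
    apply Finset.sum_eq_zero
    intro a _
    exact pf_eq_zero (fun h => hu (pref_of_append h))

lemma ofFn_snoc {k : ℕ} (v : Fin k → Fin m) (a : Fin m) :
    List.ofFn (Fin.snoc v a : Fin (k + 1) → Fin m) = List.ofFn v ++ [a] := by
  rw [List.ofFn_succ']
  simp [List.concat_eq_append]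

lemma sum_words_succ (k : ℕ) (G : List (Fin m) → ℝ) :
    ∑ u : Fin (k + 1) → Fin m, G (List.ofFn u)
      = ∑ v : Fin k → Fin m, ∑ a : Fin m, G (List.ofFn v ++ [a]) := by
  classical
  rw [← Equiv.sum_comp (Fin.snocEquiv (fun _ : Fin (k + 1) => Fin m))
        (fun u => G (List.ofFn u)), Fintype.sum_prod_type, Finset.sum_comm]
  refine Finset.sum_congr rfl fun v _ => Finset.sum_congr rfl fun a _ => ?_
  have h : (Fin.snocEquiv (fun _ : Fin (k + 1) => Fin m)) (a, v) = Fin.snoc v a := by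
    funext i; rfl
  simp only [h, ofFn_snoc]

/-- entropy-type sums over length-`k` words. -/
def Bk (q : ℕ+) (Ω : Set (ℕ+ → Fin m)) (t : List (Fin m) → ℝ) (k : ℕ) : ℝ :=
  ∑ u : Fin k → Fin m, pf q Ω t (List.ofFn u) * Real.logb m (t (List.ofFn u))

def Hk (q : ℕ+) (Ω : Set (ℕ+ → Fin m)) (t : List (Fin m) → ℝ) (k : ℕ) : ℝ :=
  -∑ u : Fin k → Fin m, pf q Ω t (List.ofFn u) * Real.logb m (pf q Ω t (List.ofFn u))

lemma sum_pf_words (ht : TSol q Ω t) (hnil : ([] : List (Fin m)) ∈ Pref Ω) (k : ℕ) :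
    ∑ u : Fin k → Fin m, pf q Ω t (List.ofFn u) = 1 := by
  induction k with
  | zero =>
      rw [Fintype.sum_subsingleton _ (fun i : Fin 0 => i.elim0)]
      simpa using pf_nil hnil
  | succ k ih =>
      rw [sum_words_succ k (fun u => pf q Ω t u)]
      calc ∑ v : Fin k → Fin m, ∑ a : Fin m, pf q Ω t (List.ofFn v ++ [a])
          = ∑ v : Fin k → Fin m, pf q Ω t (List.ofFn v) := by
            exact Finset.sum_congr rfl (fun v _ => sum_pf_append_all ht _)
        _ = 1 := ih

/-- the key per-word entropy identity. -/
lemma key (ht : TSol q Ω t) (u : List (Fin m)) :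
    ∑ a : Fin m, pf q Ω t (u ++ [a]) * Real.logb m (pf q Ω t (u ++ [a]))
      = pf q Ω t u * Real.logb m (pf q Ω t u)
        + ∑ a : Fin m, pf q Ω t (u ++ [a]) * Real.logb m (t (u ++ [a]))
        - (q : ℝ) * (pf q Ω t u * Real.logb m (t u)) := by
  by_cases hu : u ∈ Pref Ω
  · set F := Finset.univ.filter (fun a : Fin m => u ++ [a] ∈ Pref Ω) with hF
    have hmem : ∀ a ∈ F, u ++ [a] ∈ Pref Ω := by
      intro a ha; simpa [hF] using ha
    have hred : ∀ G : Fin m → ℝ, (∀ a, u ++ [a] ∉ Pref Ω → G a = 0) →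
        ∑ a : Fin m, G a = ∑ a ∈ F, G a := by
      intro G hG
      refine (Finset.sum_subset (Finset.filter_subset _ _) ?_).symm
      intro a _ ha
      refine hG a ?_
      simpa [hF] using ha
    rw [hred _ (fun a ha => by rw [pf_eq_zero ha, zero_mul]),
        hred _ (fun a ha => by rw [pf_eq_zero ha, zero_mul])]
    have hsum : ∑ a ∈ F, pf q Ω t (u ++ [a]) = pf q Ω t u := by
      rw [← hred _ (fun a ha => pf_eq_zero ha)]
      exact sum_pf_append ht hu
    have hstep : ∀ a ∈ F,
        pf q Ω t (u ++ [a]) * Real.logb m (pf q Ω t (u ++ [a]))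
          = pf q Ω t (u ++ [a]) * (Real.logb m (pf q Ω t u) - (q : ℝ) * Real.logb m (t u))
            + pf q Ω t (u ++ [a]) * Real.logb m (t (u ++ [a])) := by
      intro a ha
      have hua := hmem a ha
      have h1 : pf q Ω t (u ++ [a]) = pf q Ω t u * (t (u ++ [a]) / t u ^ (q : ℕ)) :=
        pf_append ht hua
      have hpu : pf q Ω t u ≠ 0 := (pf_pos ht hu).ne'
      have htu : t u ≠ 0 := (tpos ht hu).ne'
      have htua : t (u ++ [a]) ≠ 0 := (tpos ht hua).ne'
      have hq0 : t u ^ (q : ℕ) ≠ 0 := pow_ne_zero _ htu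
      have hd : t (u ++ [a]) / t u ^ (q : ℕ) ≠ 0 := div_ne_zero htua hq0
      rw [h1, Real.logb_mul hpu hd, Real.logb_div htua hq0, Real.logb_pow]
      ring
    rw [Finset.sum_congr rfl hstep, Finset.sum_add_distrib, ← Finset.sum_mul, hsum]
    ring
  · have hz : ∀ a : Fin m, pf q Ω t (u ++ [a]) = 0 :=
      fun a => pf_eq_zero (fun h => hu (pref_of_append h))
    simp [hz, pf_eq_zero hu]
lemma term_nonneg (ht : TSol q Ω t) (hm1 : 1 < (m : ℝ)) (u : List (Fin m)) :
    0 ≤ pf q Ω t u * Real.logb m (t u) := by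
  by_cases hu : u ∈ Pref Ω
  · exact mul_nonneg (pf_nonneg ht u) (Real.logb_nonneg hm1 (ht u hu).1.1)
  · simp [pf_eq_zero hu]

lemma Bk_nonneg (ht : TSol q Ω t) (hm1 : 1 < (m : ℝ)) (k : ℕ) : 0 ≤ Bk q Ω t k :=
  Finset.sum_nonneg fun u _ => term_nonneg ht hm1 _

lemma Bk_le (ht : TSol q Ω t) (hnil : ([] : List (Fin m)) ∈ Pref Ω) (hm1 : 1 < (m : ℝ))
    (k : ℕ) : Bk q Ω t k ≤ 1 / ((q : ℝ) - 1) := by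
  have step : ∀ u : Fin k → Fin m,
      pf q Ω t (List.ofFn u) * Real.logb m (t (List.ofFn u))
        ≤ pf q Ω t (List.ofFn u) * (1 / ((q : ℝ) - 1)) := by
    intro u
    by_cases hu : List.ofFn u ∈ Pref Ω
    · apply mul_le_mul_of_nonneg_left _ (pf_nonneg ht _)
      calc Real.logb m (t (List.ofFn u))
          ≤ Real.logb m ((m : ℝ) ^ ((1 : ℝ) / ((q : ℝ) - 1))) :=
            Real.logb_le_logb_of_le hm1 (tpos ht hu) (ht _ hu).1.2
        _ = 1 / ((q : ℝ) - 1) :=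
            Real.logb_rpow (by linarith) (by linarith)
    · simp [pf_eq_zero hu]
  calc Bk q Ω t k ≤ ∑ u : Fin k → Fin m, pf q Ω t (List.ofFn u) * (1 / ((q : ℝ) - 1)) :=
        Finset.sum_le_sum fun u _ => step u
    _ = (∑ u : Fin k → Fin m, pf q Ω t (List.ofFn u)) * (1 / ((q : ℝ) - 1)) := by
        rw [Finset.sum_mul]
    _ = 1 / ((q : ℝ) - 1) := by rw [sum_pf_words ht hnil]; ring

lemma sum_le_q (ht : TSol q Ω t) (hm1 : 1 < (m : ℝ)) (u : List (Fin m)) :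
    ∑ a : Fin m, pf q Ω t (u ++ [a]) * Real.logb m (t (u ++ [a]))
      ≤ (q : ℝ) * (pf q Ω t u * Real.logb m (t u)) := by
  by_cases hu : u ∈ Pref Ω
  · have step : ∀ a : Fin m, pf q Ω t (u ++ [a]) * Real.logb m (t (u ++ [a]))
        ≤ pf q Ω t (u ++ [a]) * ((q : ℝ) * Real.logb m (t u)) := by
      intro a
      by_cases ha : u ++ [a] ∈ Pref Ω
      · apply mul_le_mul_of_nonneg_left _ (pf_nonneg ht _)
        have hle : t (u ++ [a]) ≤ t u ^ (q : ℕ) := by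
          rw [(ht u hu).2]
          refine Finset.single_le_sum (f := fun b : Fin m => t (u ++ [b])) (fun b hb => ?_)
            (Finset.mem_filter.mpr ⟨Finset.mem_univ a, ha⟩)
          exact le_trans zero_le_one (ht _ (by simpa using hb)).1.1
        calc Real.logb m (t (u ++ [a])) ≤ Real.logb m (t u ^ (q : ℕ)) :=
              Real.logb_le_logb_of_le hm1 (tpos ht ha) hle
          _ = (q : ℝ) * Real.logb m (t u) := by rw [Real.logb_pow]
      · rw [pf_eq_zero ha]; simp
    calc ∑ a : Fin m, pf q Ω t (u ++ [a]) * Real.logb m (t (u ++ [a]))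
        ≤ ∑ a : Fin m, pf q Ω t (u ++ [a]) * ((q : ℝ) * Real.logb m (t u)) :=
          Finset.sum_le_sum fun a _ => step a
      _ = (∑ a : Fin m, pf q Ω t (u ++ [a])) * ((q : ℝ) * Real.logb m (t u)) := by
          rw [Finset.sum_mul]
      _ = (q : ℝ) * (pf q Ω t u * Real.logb m (t u)) := by rw [sum_pf_append ht hu]; ring
  · have hz : ∀ a : Fin m, pf q Ω t (u ++ [a]) = 0 :=
      fun a => pf_eq_zero (fun h => hu (pref_of_append h))
    simp [hz, pf_eq_zero hu]

lemma Bk_succ_le (ht : TSol q Ω t) (hm1 : 1 < (m : ℝ)) (k : ℕ) :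
    Bk q Ω t (k + 1) ≤ (q : ℝ) * Bk q Ω t k := by
  rw [Bk, sum_words_succ k (fun u => pf q Ω t u * Real.logb m (t u)), Bk, Finset.mul_sum]
  exact Finset.sum_le_sum fun v _ => sum_le_q ht hm1 _

lemma Hk_succ (ht : TSol q Ω t) (k : ℕ) :
    Hk q Ω t (k + 1) = Hk q Ω t k + (q : ℝ) * Bk q Ω t k - Bk q Ω t (k + 1) := by
  have h1 : Bk q Ω t (k + 1)
      = ∑ v : Fin k → Fin m, ∑ a : Fin m,
          pf q Ω t (List.ofFn v ++ [a]) * Real.logb m (t (List.ofFn v ++ [a])) :=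
    sum_words_succ k (fun u => pf q Ω t u * Real.logb m (t u))
  have h2 : Hk q Ω t (k + 1)
      = -∑ v : Fin k → Fin m, ∑ a : Fin m,
          pf q Ω t (List.ofFn v ++ [a]) * Real.logb m (pf q Ω t (List.ofFn v ++ [a])) := by
    rw [Hk, sum_words_succ k (fun u => pf q Ω t u * Real.logb m (pf q Ω t u))]
  rw [h2, Finset.sum_congr rfl (fun v _ => key ht (List.ofFn v)), h1, Hk, Bk]
  rw [Finset.sum_sub_distrib, Finset.sum_add_distrib, ← Finset.mul_sum]
  ring

lemma Hk_zero (hnil : ([] : List (Fin m)) ∈ Pref Ω) : Hk q Ω t 0 = 0 := by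
  rw [Hk, Fintype.sum_subsingleton _ (fun i : Fin 0 => i.elim0)]
  simp [pf_nil hnil]

lemma Hk_eq_sum (ht : TSol q Ω t) (hnil : ([] : List (Fin m)) ∈ Pref Ω) (k : ℕ) :
    Hk q Ω t (k + 1)
      = ∑ j ∈ Finset.range (k + 1), ((q : ℝ) * Bk q Ω t j - Bk q Ω t (j + 1)) := by
  induction k with
  | zero => rw [Hk_succ ht 0, Hk_zero hnil]; simp
  | succ k ih =>
      rw [Hk_succ ht (k + 1), ih, Finset.sum_range_succ _ (k + 1)]
      ring

lemma Bk_zero : Bk q Ω t 0 = pf q Ω t [] * Real.logb m (t []) := by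
  rw [Bk, Fintype.sum_subsingleton _ (fun i : Fin 0 => i.elim0)]
  simp


lemma toReal_eq_pf {q : ℕ+} {Ω : Set (ℕ+ → Fin m)} {t : List (Fin m) → ℝ}
    {μ : Measure (ℕ+ → Fin m)} [IsProbabilityMeasure μ]
    (ht : TSol q Ω t) (hcl : IsClosed Ω) (hμΩ : μ Ω = 1) (hcyl : CylVals q Ω t μ)
    (u : List (Fin m)) : (μ (Cyl u)).toReal = pf q Ω t u := by
  by_cases hu : u ∈ Pref Ω
  · have hnn : 0 ≤ ∏ j ∈ Finset.range u.length, t (u.take (j + 1)) / t (u.take j) ^ (q : ℕ) := by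
      have := pf_nonneg ht u
      rwa [pf, if_pos hu] at this
    rw [hcyl u hu, ENNReal.toReal_ofReal hnn, pf, if_pos hu]
  · have hsub : Cyl u ⊆ Ωᶜ := fun x hx hxΩ => hu ⟨x, hxΩ, hx⟩
    have hms : MeasurableSet Ω := hcl.measurableSet
    have h0 : μ Ωᶜ = 0 := by
      rw [measure_compl hms (measure_ne_top μ Ω), hμΩ, measure_univ, tsub_self]
    have hz : μ (Cyl u) = 0 := le_antisymm (h0 ▸ measure_mono hsub) zero_le
    rw [hz, pf_eq_zero hu]
    simp

end Stmt14Aux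

/-- **Proposition 2.5 (ii).** For the optimal measure `μ`, `s(Ω,μ) = (q-1) log_m t(∅)`. -/
theorem stmt14 (m : ℕ) (hm : 2 ≤ m) (q : ℕ+) (hq : 2 ≤ (q : ℕ))
    (Ω : Set (ℕ+ → Fin m)) (hne : Ω.Nonempty) (hcl : IsClosed Ω)
    (t : List (Fin m) → ℝ) (ht : TSol q Ω t)
    (μ : Measure (ℕ+ → Fin m)) [IsProbabilityMeasure μ] (hμΩ : μ Ω = 1)
    (hcyl : CylVals q Ω t μ) :
    sOm m q μ = ((q : ℝ) - 1) * Real.logb m (t []) := by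
  classical
  have hnil : ([] : List (Fin m)) ∈ Pref Ω := Stmt14Aux.pref_nil hne
  have hm1 : (1 : ℝ) < (m : ℝ) := by exact_mod_cast Nat.lt_of_lt_of_le one_lt_two hm
  have hQ2 : (2 : ℝ) ≤ (q : ℝ) := by exact_mod_cast hq
  have hQ0 : (0 : ℝ) < (q : ℝ) := by linarith
  have hQ1 : (0 : ℝ) < (q : ℝ) - 1 := by linarith
  set B : ℕ → ℝ := fun k => Stmt14Aux.Bk q Ω t k with hB
  set c : ℕ → ℝ := fun j => (q : ℝ) * B j - B (j + 1) with hc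
  have hcnn : ∀ j, 0 ≤ c j := fun j =>
    sub_nonneg.mpr (Stmt14Aux.Bk_succ_le ht hm1 j)
  have hBnn : ∀ j, 0 ≤ B j := fun j => Stmt14Aux.Bk_nonneg ht hm1 j
  have hBle : ∀ j, B j ≤ 1 / ((q : ℝ) - 1) := fun j => Stmt14Aux.Bk_le ht hnil hm1 j
  have hB0 : B 0 = Real.logb m (t []) := by
    show Stmt14Aux.Bk q Ω t 0 = _
    rw [Stmt14Aux.Bk_zero, Stmt14Aux.pf_nil hnil, one_mul]
  -- Hent in terms of the abstract entropy
  have hHent : ∀ k : ℕ, Hent m μ k = Stmt14Aux.Hk q Ω t k := by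
    intro k
    rw [Hent, Stmt14Aux.Hk, neg_inj]
    exact Finset.sum_congr rfl fun u _ => by
      rw [Stmt14Aux.toReal_eq_pf ht hcl hμΩ hcyl]
  have hHsum : ∀ k : ℕ, Hent m μ (k + 1) = ∑ j ∈ Finset.range (k + 1), c j := by
    intro k
    rw [hHent, Stmt14Aux.Hk_eq_sum ht hnil]
  -- the telescoping real series
  set f : ℕ → ℝ := fun j => B j / (q : ℝ) ^ j with hf
  have hqpow : ∀ j : ℕ, (0 : ℝ) < (q : ℝ) ^ j := fun j => pow_pos hQ0 j
  have htel : ∀ j : ℕ, c j / (q : ℝ) ^ (j + 1) = f j - f (j + 1) := by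
    intro j
    rw [hf, hc]
    field_simp
    ring
  have hfnn : ∀ j, 0 ≤ f j := fun j => div_nonneg (hBnn j) (hqpow j).le
  have hf0 : Tendsto f atTop (𝓝 0) := by
    apply squeeze_zero hfnn (g := fun j => (1 / ((q : ℝ) - 1)) * ((q : ℝ)⁻¹) ^ j)
    · intro j
      show B j / (q : ℝ) ^ j ≤ 1 / ((q : ℝ) - 1) * ((q : ℝ)⁻¹) ^ j
      calc B j / (q : ℝ) ^ j ≤ (1 / ((q : ℝ) - 1)) / (q : ℝ) ^ j :=
            (div_le_div_iff_of_pos_right (hqpow j)).mpr (hBle j)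
        _ = 1 / ((q : ℝ) - 1) * ((q : ℝ)⁻¹) ^ j := by
            rw [div_eq_mul_inv, inv_pow]
    · rw [show (0 : ℝ) = (1 / ((q : ℝ) - 1)) * 0 by ring]
      exact (tendsto_pow_atTop_nhds_zero_of_lt_one (inv_nonneg.mpr hQ0.le)
        (by rw [inv_lt_one_iff₀]; right; linarith)).const_mul _
  have hHasSum : HasSum (fun j => c j / (q : ℝ) ^ (j + 1)) (B 0) := by
    rw [hasSum_iff_tendsto_nat_of_nonneg
      (fun j => div_nonneg (hcnn j) (hqpow (j + 1)).le)]
    have hps : ∀ n : ℕ, ∑ j ∈ Finset.range n, c j / (q : ℝ) ^ (j + 1) = f 0 - f n := by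
      intro n
      rw [Finset.sum_congr rfl fun j _ => htel j, Finset.sum_range_sub' f n]
    simp only [hps]
    have : Tendsto (fun n : ℕ => f 0 - f n) atTop (𝓝 (f 0 - 0)) :=
      (tendsto_const_nhds).sub hf0
    simpa [hf] using this
  have hSummable2 : Summable (fun j => c j / (q : ℝ) ^ (j + 2)) := by
    have : (fun j => c j / (q : ℝ) ^ (j + 2))
        = fun j => (c j / (q : ℝ) ^ (j + 1)) * (q : ℝ)⁻¹ := by
      funext j
      rw [pow_succ]
      field_simp
    rw [this]
    exact hHasSum.summable.mul_right _
  have htsum2 : ∑' j, c j / (q : ℝ) ^ (j + 2) = B 0 / (q : ℝ) := by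
    have h1 : (fun j => c j / (q : ℝ) ^ (j + 2))
        = fun j => (c j / (q : ℝ) ^ (j + 1)) * (q : ℝ)⁻¹ := by
      funext j
      rw [pow_succ]
      field_simp
    rw [h1, tsum_mul_right, hHasSum.tsum_eq, div_eq_mul_inv]
  -- ENNReal computation
  set r : ℝ≥0∞ := ENNReal.ofReal ((q : ℝ)⁻¹) with hr
  set a : ℕ → ℝ≥0∞ := fun j => ENNReal.ofReal (c j) with ha
  have hofg : ∀ k : ℕ, ENNReal.ofReal ((∑ j ∈ Finset.range (k + 1), c j) / (q : ℝ) ^ (k + 2))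
      = ∑ j ∈ Finset.range (k + 1), a j * r ^ (k + 2) := by
    intro k
    rw [div_eq_mul_inv, ← inv_pow,
      ENNReal.ofReal_mul (Finset.sum_nonneg fun j _ => hcnn j),
      ENNReal.ofReal_pow (inv_nonneg.mpr hQ0.le),
      ENNReal.ofReal_sum_of_nonneg (fun j _ => hcnn j), Finset.sum_mul]
  have hinner : ∀ j : ℕ, (∑' k : ℕ, if j ≤ k then r ^ (k + 2) else 0)
      = (1 - r)⁻¹ * r ^ (j + 2) := by
    intro j
    have hinj : Function.Injective (fun i : ℕ => i + j) := add_left_injective j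
    have hsupp : Function.support (fun k : ℕ => if j ≤ k then r ^ (k + 2) else 0)
        ⊆ Set.range (fun i : ℕ => i + j) := by
      intro x hx
      by_cases hjx : j ≤ x
      · exact ⟨x - j, by show x - j + j = x; omega⟩
      · simp [hjx] at hx
    rw [← Function.Injective.tsum_eq hinj hsupp]
    have : (fun i : ℕ => if j ≤ i + j then r ^ (i + j + 2) else 0)
        = fun i : ℕ => r ^ i * r ^ (j + 2) := by
      funext i
      rw [if_pos (Nat.le_add_left j i), show i + j + 2 = i + (j + 2) by ring, pow_add]
    simp only [this]
    rw [ENNReal.tsum_mul_right, ENNReal.tsum_geometric]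
  have hA : (∑' k : ℕ, ENNReal.ofReal ((∑ j ∈ Finset.range (k + 1), c j) / (q : ℝ) ^ (k + 2)))
      = ENNReal.ofReal ((B 0 / (q : ℝ)) * (1 - (q : ℝ)⁻¹)⁻¹) := by
    calc (∑' k : ℕ, ENNReal.ofReal ((∑ j ∈ Finset.range (k + 1), c j) / (q : ℝ) ^ (k + 2)))
        = ∑' k : ℕ, ∑ j ∈ Finset.range (k + 1), a j * r ^ (k + 2) := by
          exact tsum_congr hofg
      _ = ∑' k : ℕ, ∑' j : ℕ, (if j ≤ k then a j * r ^ (k + 2) else 0) := by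
          refine tsum_congr fun k => ?_
          rw [tsum_eq_sum (s := Finset.range (k + 1))
            (fun j hj => if_neg (by simp at hj; omega))]
          exact Finset.sum_congr rfl fun j hj => (if_pos (by simp at hj; omega)).symm
      _ = ∑' j : ℕ, ∑' k : ℕ, (if j ≤ k then a j * r ^ (k + 2) else 0) := ENNReal.tsum_comm
      _ = ∑' j : ℕ, a j * ((1 - r)⁻¹ * r ^ (j + 2)) := by
          refine tsum_congr fun j => ?_
          have : (fun k : ℕ => if j ≤ k then a j * r ^ (k + 2) else 0)
              = fun k : ℕ => a j * (if j ≤ k then r ^ (k + 2) else 0) := by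
            funext k
            split <;> simp
          rw [this, ENNReal.tsum_mul_left, hinner j]
      _ = (∑' j : ℕ, a j * r ^ (j + 2)) * (1 - r)⁻¹ := by
          rw [← ENNReal.tsum_mul_right]
          exact tsum_congr fun j => by ring
      _ = ENNReal.ofReal ((B 0 / (q : ℝ)) * (1 - (q : ℝ)⁻¹)⁻¹) := by
          have h1 : ∀ j : ℕ, a j * r ^ (j + 2) = ENNReal.ofReal (c j / (q : ℝ) ^ (j + 2)) := by
            intro j
            rw [div_eq_mul_inv, ← inv_pow,
              ENNReal.ofReal_mul (hcnn j), ENNReal.ofReal_pow (inv_nonneg.mpr hQ0.le)]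
          rw [tsum_congr h1,
            ← ENNReal.ofReal_tsum_of_nonneg
              (fun j => div_nonneg (hcnn j) (hqpow (j + 2)).le) hSummable2,
            htsum2]
          have h2 : (1 - r)⁻¹ = ENNReal.ofReal ((1 - (q : ℝ)⁻¹)⁻¹) := by
            rw [hr, ← ENNReal.ofReal_one, ← ENNReal.ofReal_sub _ (inv_nonneg.mpr hQ0.le),
              ENNReal.ofReal_inv_of_pos]
            have : (q : ℝ)⁻¹ < 1 := by
              rw [inv_lt_one_iff₀]; right; linarith
            linarith
          rw [h2, ← ENNReal.ofReal_mul (div_nonneg (hBnn 0) hQ0.le)]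
  -- final real computation
  have hgnn : ∀ k : ℕ, 0 ≤ (∑ j ∈ Finset.range (k + 1), c j) / (q : ℝ) ^ (k + 2) :=
    fun k => div_nonneg (Finset.sum_nonneg fun j _ => hcnn j) (hqpow (k + 2)).le
  have hmain : ∑' k : ℕ, Hent m μ (k + 1) / (q : ℝ) ^ (k + 2)
      = (B 0 / (q : ℝ)) * (1 - (q : ℝ)⁻¹)⁻¹ := by
    calc ∑' k : ℕ, Hent m μ (k + 1) / (q : ℝ) ^ (k + 2)
        = ∑' k : ℕ, (∑ j ∈ Finset.range (k + 1), c j) / (q : ℝ) ^ (k + 2) := by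
          exact tsum_congr fun k => by rw [hHsum k]
      _ = ∑' k : ℕ, (ENNReal.ofReal
            ((∑ j ∈ Finset.range (k + 1), c j) / (q : ℝ) ^ (k + 2))).toReal := by
          exact tsum_congr fun k => (ENNReal.toReal_ofReal (hgnn k)).symm
      _ = (∑' k : ℕ, ENNReal.ofReal
            ((∑ j ∈ Finset.range (k + 1), c j) / (q : ℝ) ^ (k + 2))).toReal :=
          (ENNReal.tsum_toReal_eq fun _ => ENNReal.ofReal_ne_top).symm
      _ = (B 0 / (q : ℝ)) * (1 - (q : ℝ)⁻¹)⁻¹ := by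
          rw [hA, ENNReal.toReal_ofReal]
          refine mul_nonneg (div_nonneg (hBnn 0) hQ0.le) (inv_nonneg.mpr ?_)
          have : (q : ℝ)⁻¹ ≤ 1 := by
            rw [inv_le_one_iff₀]; right; linarith
          linarith
  rw [sOm, hmain, ← hB0]
  have hq1 : (q : ℝ) - 1 ≠ 0 := hQ1.ne'
  have hqne : (q : ℝ) ≠ 0 := hQ0.ne'
  have h3 : (1 : ℝ) - (q : ℝ)⁻¹ = ((q : ℝ) - 1) / (q : ℝ) := by
    field_simp
  rw [h3]
  field_simp
end
end
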